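/- arXiv:1203.4139 — 8 statements merged into one kernel-verified Lean document; each statement's English description precedes it below -/
import Mathlib

section
/- Let −∞ ≤ a < b < ∞ with μ((a, b)) > 0 and let J = (a − b, ∞) ∩ (inf supp μ, sup supp μ). Then the map W(z) = ∫_{(a, b+z)} |x − c_{a,b+z}|^r dμ(x) is continuous and nondecreasing on J, and for all x, y ∈ J with x < y one has W(x) < W(y) if and only if μ([x + b, y + b]) > 0. -/
open MeasureTheory Set Filter Topology
open scoped ENNReal NNReal

/-- The distortion (quantization error) of order `r` of a quantizer `q` for `μ`,
as an extended nonnegative real: `∫ |x - q x|^r dμ`. -/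
noncomputable def distortionE (μ : Measure ℝ) (q : ℝ → ℝ) (r : ℝ) : ℝ≥0∞ :=
  ∫⁻ x, ENNReal.ofReal (|x - q x| ^ r) ∂μ

/-- The `r`-th moment of `μ` on the set `s` about the point `a`:
`∫_s |x - a|^r dμ`. -/
noncomputable def cellMoment (μ : Measure ℝ) (r : ℝ) (s : Set ℝ) (a : ℝ) : ℝ≥0∞ :=
  ∫⁻ x in s, ENNReal.ofReal (|x - a| ^ r) ∂μ

/-- A (scalar) quantizer: a Borel measurable map `ℝ → ℝ` with countable image. -/
def IsQuantizer (q : ℝ → ℝ) : Prop :=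
  Measurable q ∧ (Set.range q).Countable

/-- An `n`-level Gersho quantizer of order `r` for `μ`:
(G1) exactly `n` codepoints; (G2) every codecell is an interval;
(G3) every codepoint is optimal for its own codecell;
(G4) every codecell contributes `D(μ,q,r)/n` to the distortion. -/
def IsGersho (μ : Measure ℝ) (r : ℝ) (n : ℕ) (q : ℝ → ℝ) : Prop :=
  IsQuantizer q ∧
  (Set.range q).encard = n ∧
  (∀ a ∈ Set.range q, (q ⁻¹' {a}).OrdConnected) ∧
  (∀ a ∈ Set.range q, ∀ b : ℝ, cellMoment μ r (q ⁻¹' {a}) a ≤ cellMoment μ r (q ⁻¹' {a}) b) ∧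
  (∀ a ∈ Set.range q, cellMoment μ r (q ⁻¹' {a}) a = distortionE μ q r / (n : ℝ≥0∞))

/-- The (topological) support of a Borel measure on `ℝ`. -/
def msupp (μ : Measure ℝ) : Set ℝ := {x | ∀ U ∈ nhds x, 0 < μ U}

/-- A probability density `h` is weakly unimodal if it is continuous on its support and
there is `l₀ > 0` such that `{x | h x ≥ l}` is a compact interval for every `l ∈ (0, l₀)`. -/
def WeaklyUnimodal (h : ℝ → ℝ) : Prop :=
  ContinuousOn h (tsupport h) ∧
  ∃ l₀ : ℝ, 0 < l₀ ∧ ∀ l : ℝ, 0 < l → l < l₀ →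
    IsCompact {x | l ≤ h x} ∧ ({x | l ≤ h x}).OrdConnected

/-- The constant `Q(r) = 2^{-r} (1+r)^{-1}`. -/
noncomputable def Qconst (r : ℝ) : ℝ := (2 : ℝ) ^ (-r) * (1 + r)⁻¹

/-- The optimal `n`-th Gersho quantization error for `μ` of order `r`. -/
noncomputable def gershoError (μ : Measure ℝ) (r : ℝ) (n : ℕ) : ℝ :=
  (⨅ q ∈ {q : ℝ → ℝ | IsGersho μ r n q}, distortionE μ q r).toReal

/-- The optimal `n`-th quantization error for `μ` of order `r`. -/
noncomputable def optError (μ : Measure ℝ) (r : ℝ) (n : ℕ) : ℝ :=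
  (⨅ q ∈ {q : ℝ → ℝ | IsQuantizer q ∧ (Set.range q).encard ≤ (n : ℕ∞)},
    distortionE μ q r).toReal

/-- The set `J = (a - b, ∞) ∩ (inf supp μ, sup supp μ)` (endpoints in the extended reals). -/
def Jset (μ : Measure ℝ) (a : EReal) (b : ℝ) : Set ℝ :=
  {z : ℝ | a - (b : EReal) < (z : EReal) ∧
    sInf ((fun t : ℝ => (t : EReal)) '' msupp μ) < (z : EReal) ∧
    (z : EReal) < sSup ((fun t : ℝ => (t : EReal)) '' msupp μ)}

/-- `J_{n,I}`: the codepoints of `q n` whose codecell lies inside `I`. -/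
def Jcells (q : ℕ → ℝ → ℝ) (I : Set ℝ) (n : ℕ) : Set ℝ :=
  {a ∈ Set.range (q n) | (q n) ⁻¹' {a} ⊆ I}

theorem gersho_stmt_2 (μ : Measure ℝ) [IsProbabilityMeasure μ] [NullSingletonClass μ]
    (r : ℝ) (hr : 1 < r) (hmom : Integrable (fun x => |x| ^ r) μ)
    (a : EReal) (b : ℝ) (hab : a < (b : EReal))
    (hpos : 0 < μ {x : ℝ | a < (x : EReal) ∧ x < b})
    (c : ℝ → ℝ)
    (hc : ∀ z ∈ Jset μ a b, ∀ w : ℝ,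
      cellMoment μ r {x : ℝ | a < (x : EReal) ∧ x < b + z} (c z) ≤
        cellMoment μ r {x : ℝ | a < (x : EReal) ∧ x < b + z} w)
    (W : ℝ → ℝ)
    (hW : ∀ z : ℝ, W z = (cellMoment μ r {x : ℝ | a < (x : EReal) ∧ x < b + z} (c z)).toReal) :
    ContinuousOn W (Jset μ a b) ∧ MonotoneOn W (Jset μ a b) ∧
      ∀ x ∈ Jset μ a b, ∀ y ∈ Jset μ a b, x < y →
        (W x < W y ↔ 0 < μ (Set.Icc (x + b) (y + b))) := by
  classical
  have hr0 : (0 : ℝ) < r := lt_trans one_pos hr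
  set J := Jset μ a b with hJ
  set S : ℝ → Set ℝ := fun z => {x : ℝ | a < (x : EReal) ∧ x < b + z} with hS
  set g : ℝ → ℝ → ℝ≥0∞ := fun w t => ENNReal.ofReal (|t - w| ^ r) with hg
  have hVdef : ∀ z w, cellMoment μ r (S z) w = ∫⁻ t in S z, g w t ∂μ := fun _ _ => rfl
  have hgmeas : ∀ w, Measurable (g w) := fun w =>
    (ENNReal.continuous_ofReal.comp ((Real.continuous_rpow_const hr0.le).comp
      ((continuous_id.sub continuous_const).abs))).measurable
  have hSmeas : ∀ z, MeasurableSet (S z) := by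
    intro z
    have : S z = ((fun x : ℝ => (x : EReal)) ⁻¹' (Set.Ioi a)) ∩ Set.Iio (b + z) := by
      ext t; simp [hS]
    rw [this]
    exact (measurableSet_Ioi.preimage continuous_coe_real_ereal.measurable).inter
      measurableSet_Iio
  -- sum bound
  have hsum : ∀ x y : ℝ, 0 ≤ x → 0 ≤ y → (x + y) ^ r ≤ 2 ^ r * (x ^ r + y ^ r) := by
    intro x y hx hy
    have h1 : (x + y) ^ r ≤ (2 * max x y) ^ r := by
      apply Real.rpow_le_rpow (by positivity)
      · rw [two_mul]; exact add_le_add (le_max_left _ _) (le_max_right _ _)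
      · exact hr0.le
    have h2 : (2 * max x y) ^ r = 2 ^ r * max x y ^ r :=
      Real.mul_rpow (by norm_num) (le_max_of_le_left hx)
    have h3 : max x y ^ r ≤ x ^ r + y ^ r := by
      rcases max_cases x y with ⟨h, _⟩ | ⟨h, _⟩ <;> rw [h]
      · exact le_add_of_nonneg_right (Real.rpow_nonneg hy r)
      · exact le_add_of_nonneg_left (Real.rpow_nonneg hx r)
    calc (x + y) ^ r ≤ 2 ^ r * max x y ^ r := h1.trans_eq h2
      _ ≤ 2 ^ r * (x ^ r + y ^ r) :=
          mul_le_mul_of_nonneg_left h3 (Real.rpow_nonneg (by norm_num) r)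
  have hptw : ∀ w t : ℝ, |t - w| ^ r ≤ 2 ^ r * (|t| ^ r + |w| ^ r) := by
    intro w t
    calc |t - w| ^ r ≤ (|t| + |w|) ^ r :=
          Real.rpow_le_rpow (abs_nonneg _) (abs_sub t w) hr0.le
      _ ≤ 2 ^ r * (|t| ^ r + |w| ^ r) := hsum _ _ (abs_nonneg _) (abs_nonneg _)
  have hint : ∀ w : ℝ, Integrable (fun t : ℝ => 2 ^ r * (|t| ^ r + |w| ^ r)) μ :=
    fun w => ((hmom.add (integrable_const _)).const_mul _)
  have hGfin : ∀ w : ℝ, ∫⁻ t, g w t ∂μ < ⊤ := by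
    intro w
    refine lt_of_le_of_lt (lintegral_mono fun t => ?_) (hint w).lintegral_lt_top
    exact ENNReal.ofReal_le_ofReal (hptw w t)
  have hfin : ∀ (s : Set ℝ) (w : ℝ), ∫⁻ t in s, g w t ∂μ < ⊤ := fun s w =>
    lt_of_le_of_lt (setLIntegral_le_lintegral _ _) (hGfin w)
  -- J membership facts
  have hJab : ∀ z ∈ J, a < ((b + z : ℝ) : EReal) := by
    intro z hz
    have h1 : a < (z : EReal) + (b : EReal) :=
      ((EReal.sub_lt_iff (Or.inl (EReal.coe_ne_bot b)) (Or.inl (EReal.coe_ne_top b))).1 hz.1)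
    rw [← EReal.coe_add, add_comm] at h1
    exact h1
  have hSmono : ∀ {z z' : ℝ}, z ≤ z' → S z ⊆ S z' := by
    intro z z' h t ht
    exact ⟨ht.1, lt_of_lt_of_le ht.2 (by linarith)⟩
  -- splitting
  have hsplit : ∀ {z z' : ℝ}, z ∈ J → z ≤ z' → ∀ w : ℝ,
      ∫⁻ t in S z', g w t ∂μ =
        ∫⁻ t in S z, g w t ∂μ + ∫⁻ t in Ico (b + z) (b + z'), g w t ∂μ := by
    intro z z' hz hzz' w
    have haz := hJab z hz
    have hset : S z' = S z ∪ Ico (b + z) (b + z') := by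
      ext t
      simp only [hS, mem_setOf_eq, mem_union, mem_Ico]
      constructor
      · rintro ⟨h1, h2⟩
        by_cases h : t < b + z
        · exact Or.inl ⟨h1, h⟩
        · exact Or.inr ⟨not_lt.1 h, h2⟩
      · rintro (⟨h1, h2⟩ | ⟨h1, h2⟩)
        · exact ⟨h1, h2.trans_le (by linarith)⟩
        · exact ⟨lt_of_lt_of_le haz (EReal.coe_le_coe_iff.2 h1), h2⟩
    have hdisj : Disjoint (S z) (Ico (b + z) (b + z')) := by
      rw [Set.disjoint_left]
      intro t ht ht'
      exact absurd ht.2 (not_lt.2 ht'.1)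
    rw [hset, lintegral_union measurableSet_Ico hdisj]
  -- monotonicity
  have hVmono : ∀ x ∈ J, ∀ y ∈ J, x ≤ y →
      cellMoment μ r (S x) (c x) ≤ cellMoment μ r (S y) (c y) := by
    intro x hx y hy hxy
    refine le_trans (hc x hx (c y)) ?_
    rw [hVdef, hVdef, hsplit hx hxy (c y)]
    exact le_self_add
  have hmono : MonotoneOn W J := by
    intro x hx y hy hxy
    rw [hW x, hW y]
    exact ENNReal.toReal_mono (hfin (S y) (c y)).ne (hVmono x hx y hy hxy)
  -- strict increase iff measure positive
  have hstrict : ∀ x ∈ J, ∀ y ∈ J, x < y →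
      (W x < W y ↔ 0 < μ (Set.Icc (x + b) (y + b))) := by
    intro x hx y hy hxy
    rw [show x + b = b + x from add_comm x b, show y + b = b + y from add_comm y b]
    constructor
    · intro hW'
      by_contra hμ
      push_neg at hμ
      have hμ0 : μ (Set.Icc (b + x) (b + y)) = 0 := le_antisymm hμ zero_le
      have hIco0 : μ (Ico (b + x) (b + y)) = 0 :=
        measure_mono_null Ico_subset_Icc_self hμ0
      have h1 : cellMoment μ r (S y) (c y) ≤ cellMoment μ r (S x) (c x) := by
        refine le_trans (hc y hy (c x)) ?_
        rw [hVdef, hVdef, hsplit hx hxy.le (c x),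
          setLIntegral_measure_zero _ _ hIco0, add_zero]
      have h2 : W y ≤ W x := by
        rw [hW x, hW y]
        exact ENNReal.toReal_mono (hfin (S x) (c x)).ne h1
      exact absurd hW' (not_lt.2 h2)
    · intro hμ
      have hIco : 0 < μ (Ico (b + x) (b + y)) := by
        have : μ (Set.Icc (b + x) (b + y)) ≤ μ (Ico (b + x) (b + y)) := by
          calc μ (Set.Icc (b + x) (b + y))
              ≤ μ (Ico (b + x) (b + y) ∪ {b + y}) := by
                apply measure_mono; intro t ht
                rcases lt_or_eq_of_le ht.2 with h | h
                · exact Or.inl ⟨ht.1, h⟩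
                · exact Or.inr (by simp [h])
            _ ≤ μ (Ico (b + x) (b + y)) + μ {b + y} := measure_union_le _ _
            _ = μ (Ico (b + x) (b + y)) := by rw [measure_singleton, add_zero]
        exact lt_of_lt_of_le hμ this
      have hDpos : 0 < ∫⁻ t in Ico (b + x) (b + y), g (c y) t ∂μ := by
        rw [lintegral_pos_iff_support (hgmeas (c y))]
        have hsupp : Function.support (g (c y)) = {c y}ᶜ := by
          ext t
          simp only [Function.mem_support, hg, mem_compl_iff, mem_singleton_iff]
          rw [← pos_iff_ne_zero, ENNReal.ofReal_pos]
          constructor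
          · intro h ht
            rw [ht, sub_self, abs_zero, Real.zero_rpow hr0.ne'] at h
            exact lt_irrefl 0 h
          · intro h
            exact Real.rpow_pos_of_pos (abs_pos.2 (sub_ne_zero.2 h)) r
        rw [hsupp, Measure.restrict_apply (measurableSet_singleton _).compl]
        have : {c y}ᶜ ∩ Ico (b + x) (b + y) = Ico (b + x) (b + y) \ {c y} := by
          ext t; simp [and_comm]
        rw [this, measure_diff_null (measure_singleton _)]
        exact hIco
      have hVlt : cellMoment μ r (S x) (c x) < cellMoment μ r (S y) (c y) := by
        have h1 : cellMoment μ r (S x) (c x) ≤ ∫⁻ t in S x, g (c y) t ∂μ := hc x hx (c y)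
        have h2 : (∫⁻ t in S x, g (c y) t ∂μ) +
            (∫⁻ t in Ico (b + x) (b + y), g (c y) t ∂μ) = cellMoment μ r (S y) (c y) :=
          (hsplit hx hxy.le (c y)).symm
        calc cellMoment μ r (S x) (c x) ≤ ∫⁻ t in S x, g (c y) t ∂μ := h1
          _ < (∫⁻ t in S x, g (c y) t ∂μ) + (∫⁻ t in Ico (b + x) (b + y), g (c y) t ∂μ) :=
              ENNReal.lt_add_right (hfin _ _).ne hDpos.ne'
          _ = cellMoment μ r (S y) (c y) := h2
      rw [hW x, hW y]
      exact ENNReal.toReal_strict_mono (hfin (S y) (c y)).ne hVlt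
  -- restatements
  have hW' : ∀ z : ℝ, W z = (∫⁻ t in S z, g (c z) t ∂μ).toReal := by
    intro z; rw [hW z, hVdef]
  have hc' : ∀ z ∈ J, ∀ w : ℝ,
      (∫⁻ t in S z, g (c z) t ∂μ) ≤ ∫⁻ t in S z, g w t ∂μ := fun z hz w => hc z hz w
  -- continuity
  have hcont : ContinuousOn W J := by
    intro z₀ hz₀
    rw [Metric.continuousWithinAt_iff]
    intro ε hε
    have hεE : (0 : ℝ≥0∞) < ENNReal.ofReal ε := ENNReal.ofReal_pos.2 hε
    -- RIGHT estimate
    have hright : ∃ δ > 0, ∀ z ∈ J, z₀ ≤ z → z - z₀ < δ → W z - W z₀ < ε := by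
      set ν := μ.withDensity (g (c z₀)) with hν
      have hνapp : ∀ s : Set ℝ, MeasurableSet s → ν s = ∫⁻ t in s, g (c z₀) t ∂μ :=
        fun s hs => withDensity_apply _ hs
      have hνfin : ν univ ≠ ⊤ := by
        rw [hνapp _ MeasurableSet.univ, setLIntegral_univ]; exact (hGfin _).ne
      have hA : Tendsto (fun k : ℕ => ν (Ico (b + z₀) (b + z₀ + 1 / ((k : ℝ) + 1))))
          atTop (𝓝 0) := by
        have hI : (⋂ k : ℕ, Ico (b + z₀) (b + z₀ + 1 / ((k : ℝ) + 1))) = {b + z₀} := by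
          ext t
          simp only [mem_iInter, mem_Ico, mem_singleton_iff]
          constructor
          · intro h
            have h1 : b + z₀ ≤ t := (h 0).1
            rcases lt_or_eq_of_le h1 with h2 | h2
            · exfalso
              obtain ⟨k, hk⟩ := exists_nat_one_div_lt (sub_pos.2 h2)
              have := (h k).2
              linarith
            · exact h2.symm
          · rintro rfl k
            exact ⟨le_refl _, lt_add_of_pos_right _ (by positivity)⟩
        have h0' : ν (⋂ k : ℕ, Ico (b + z₀) (b + z₀ + 1 / ((k : ℝ) + 1))) = 0 := by
          rw [hI, hνapp _ (measurableSet_singleton _),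
            setLIntegral_measure_zero _ _ (measure_singleton _)]
        rw [← h0']
        refine tendsto_measure_iInter_atTop (fun k => measurableSet_Ico.nullMeasurableSet) ?_ ?_
        · intro k k' hkk'
          apply Ico_subset_Ico_right
          have hkk'' : ((k : ℝ) + 1) ≤ ((k' : ℝ) + 1) := by exact_mod_cast by omega
          have := one_div_le_one_div_of_le (by positivity : (0:ℝ) < (k:ℝ)+1) hkk''
          linarith
        · exact ⟨0, ne_top_of_le_ne_top hνfin (measure_mono (subset_univ _))⟩
      obtain ⟨k, hk⟩ := ((tendsto_order.1 hA).2 _ hεE).exists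
      refine ⟨1 / ((k : ℝ) + 1), by positivity, ?_⟩
      intro z hz hzle hzδ
      have hD : (∫⁻ t in Ico (b + z₀) (b + z), g (c z₀) t ∂μ) < ENNReal.ofReal ε := by
        rw [← hνapp _ measurableSet_Ico]
        refine lt_of_le_of_lt (measure_mono (Ico_subset_Ico_right (by linarith))) hk
      have h1 : (∫⁻ t in S z, g (c z) t ∂μ) ≤
          (∫⁻ t in S z₀, g (c z₀) t ∂μ) + ∫⁻ t in Ico (b + z₀) (b + z), g (c z₀) t ∂μ := by
        refine le_trans (hc' z hz (c z₀)) ?_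
        rw [hsplit hz₀ hzle (c z₀)]
      have h2 : W z ≤ W z₀ + (∫⁻ t in Ico (b + z₀) (b + z), g (c z₀) t ∂μ).toReal := by
        rw [hW' z, hW' z₀, ← ENNReal.toReal_add (hfin _ _).ne (hfin _ _).ne]
        exact ENNReal.toReal_mono (ENNReal.add_ne_top.2 ⟨(hfin _ _).ne, (hfin _ _).ne⟩) h1
      have h3 : (∫⁻ t in Ico (b + z₀) (b + z), g (c z₀) t ∂μ).toReal < ε :=
        ENNReal.toReal_lt_of_lt_ofReal hD
      linarith
    -- LEFT estimate
    have hleft : ∃ δ > 0, ∀ z ∈ J, z ≤ z₀ → z₀ - z < δ → W z₀ - W z < ε := by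
      by_cases h0 : μ (S z₀) = 0
      · refine ⟨1, one_pos, fun z hz hzle _ => ?_⟩
        have hz0 : W z₀ = 0 := by
          rw [hW' z₀, setLIntegral_measure_zero _ _ h0, ENNReal.toReal_zero]
        have hzz : W z = 0 := by
          rw [hW' z, setLIntegral_measure_zero _ _ (measure_mono_null (hSmono hzle) h0),
            ENNReal.toReal_zero]
        rw [hz0, hzz]; simpa using hε
      · have hJopen : IsOpen J := by
          have hJeq : J = (fun x : ℝ => (x : EReal)) ⁻¹'
              (Ioi (a - (b : EReal)) ∩ (Ioi (sInf ((fun t : ℝ => (t : EReal)) '' msupp μ)) ∩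
                Iio (sSup ((fun t : ℝ => (t : EReal)) '' msupp μ)))) := by
            ext z; simp [hJ, Jset, and_assoc]
          rw [hJeq]
          exact (isOpen_Ioi.inter (isOpen_Ioi.inter isOpen_Iio)).preimage
            continuous_coe_real_ereal
        obtain ⟨δ₀, hδ₀, hball⟩ := Metric.isOpen_iff.1 hJopen z₀ hz₀
        -- find z₁ < z₀ in J with positive mass
        have hU : S z₀ = ⋃ n : ℕ, S (z₀ - δ₀ / (2 * ((n : ℝ) + 1))) := by
          ext t
          simp only [hS, mem_setOf_eq, mem_iUnion]
          constructor
          · rintro ⟨h1, h2⟩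
            obtain ⟨n, hn⟩ := exists_nat_one_div_lt
              (show (0:ℝ) < 2 * (b + z₀ - t) / δ₀ from div_pos (by linarith) hδ₀)
            refine ⟨n, h1, ?_⟩
            rw [div_lt_div_iff₀ (by positivity) (by positivity)] at hn
            have hkey : δ₀ / (2 * ((n : ℝ) + 1)) < b + z₀ - t := by
              rw [div_lt_iff₀ (by positivity)]
              nlinarith
            linarith
          · rintro ⟨n, h1, h2⟩
            have : (0:ℝ) < δ₀ / (2 * ((n : ℝ) + 1)) := by positivity
            exact ⟨h1, by linarith⟩
        have hex : ∃ n : ℕ, μ (S (z₀ - δ₀ / (2 * ((n : ℝ) + 1)))) ≠ 0 := by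
          by_contra hcon
          push_neg at hcon
          exact h0 (by rw [hU]; exact measure_iUnion_null hcon)
        obtain ⟨n₁, hn₁⟩ := hex
        set z₁ := z₀ - δ₀ / (2 * ((n₁ : ℝ) + 1)) with hz₁def
        have hpos₁ : (0:ℝ) < δ₀ / (2 * ((n₁ : ℝ) + 1)) := by positivity
        have hz₁lt : z₁ < z₀ := by rw [hz₁def]; linarith
        have hz₁J : z₁ ∈ J := by
          apply hball
          rw [Metric.mem_ball, Real.dist_eq]
          have hd : z₁ - z₀ = -(δ₀ / (2 * ((n₁ : ℝ) + 1))) := by rw [hz₁def]; ring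
          rw [hd, abs_neg, abs_of_nonneg hpos₁.le]
          have h2 : (2:ℝ) ≤ 2 * ((n₁ : ℝ) + 1) := by
            have : (0:ℝ) ≤ (n₁ : ℝ) := Nat.cast_nonneg n₁
            linarith
          have := div_le_div_of_nonneg_left hδ₀.le (by norm_num : (0:ℝ) < 2) h2
          linarith
        -- find bounded positive-mass core K
        have hex2 : ∃ m : ℕ, μ (S z₁ ∩ Icc (-(m : ℝ)) m) ≠ 0 := by
          by_contra hcon
          push_neg at hcon
          have hU2 : S z₁ = ⋃ m : ℕ, (S z₁ ∩ Icc (-(m : ℝ)) m) := by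
            ext t
            simp only [mem_iUnion, mem_inter_iff, mem_Icc]
            constructor
            · intro ht
              obtain ⟨m, hm⟩ := exists_nat_ge |t|
              exact ⟨m, ht, (abs_le.1 hm).1, (abs_le.1 hm).2⟩
            · rintro ⟨m, hm, _⟩; exact hm
          exact hn₁ (by rw [hU2]; exact measure_iUnion_null hcon)
        obtain ⟨m, hm⟩ := hex2
        set K := S z₁ ∩ Icc (-(m : ℝ)) m with hKdef
        have hKmeas : MeasurableSet K := (hSmeas z₁).inter measurableSet_Icc
        have hKpos : 0 < μ K := pos_iff_ne_zero.2 hm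
        have hKfin : μ K ≠ ⊤ := measure_ne_top μ K
        have hKbound : ∀ t ∈ K, |t| ≤ m := fun t ht => abs_le.2 ⟨ht.2.1, ht.2.2⟩
        -- bound for the optimal points
        set C := ∫⁻ t, g 0 t ∂μ with hCdef
        have hCfin : C ≠ ⊤ := (hGfin 0).ne
        have hVleC : ∀ z ∈ J, (∫⁻ t in S z, g (c z) t ∂μ) ≤ C := by
          intro z hz
          exact le_trans (hc' z hz 0) (setLIntegral_le_lintegral _ _)
        have hκpos : 0 < (μ K).toReal := ENNReal.toReal_pos hKpos.ne' hKfin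
        set R := ((C.toReal + 1) / (μ K).toReal) ^ r⁻¹ with hRdef
        have hbase : 0 < (C.toReal + 1) / (μ K).toReal := by positivity
        have hR0 : 0 < R := Real.rpow_pos_of_pos hbase _
        have hRr : R ^ r = (C.toReal + 1) / (μ K).toReal :=
          Real.rpow_inv_rpow hbase.le hr0.ne'
        have hRK : ENNReal.ofReal (R ^ r) * μ K = C + 1 := by
          have h1 : ENNReal.ofReal (R ^ r) * μ K = ENNReal.ofReal (R ^ r * (μ K).toReal) := by
            rw [ENNReal.ofReal_mul (Real.rpow_nonneg hR0.le r), ENNReal.ofReal_toReal hKfin]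
          rw [h1, hRr, div_mul_cancel₀ _ hκpos.ne',
            ENNReal.ofReal_add ENNReal.toReal_nonneg zero_le_one,
            ENNReal.ofReal_toReal hCfin, ENNReal.ofReal_one]
        set M := (m : ℝ) + R with hMdef
        have hM0 : (0:ℝ) ≤ M := by
          have : (0:ℝ) ≤ (m : ℝ) := Nat.cast_nonneg m
          rw [hMdef]; linarith
        have hcbound : ∀ z ∈ J, z₁ ≤ z → |c z| ≤ M := by
          intro z hz hz₁z
          by_contra hcz
          push_neg at hcz
          have hKS : K ⊆ S z := (inter_subset_left).trans (hSmono hz₁z)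
          have hlow : ENNReal.ofReal (R ^ r) * μ K ≤ ∫⁻ t in S z, g (c z) t ∂μ := by
            calc ENNReal.ofReal (R ^ r) * μ K
                = ∫⁻ _ in K, ENNReal.ofReal (R ^ r) ∂μ := (setLIntegral_const _ _).symm
              _ ≤ ∫⁻ t in K, g (c z) t ∂μ := by
                  refine setLIntegral_mono' hKmeas fun t ht => ?_
                  apply ENNReal.ofReal_le_ofReal
                  apply Real.rpow_le_rpow hR0.le ?_ hr0.le
                  have h1 : |c z| - |t| ≤ |t - c z| := by
                    rw [abs_sub_comm]; exact abs_sub_abs_le_abs_sub _ _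
                  have h2 := hKbound t ht
                  rw [hMdef] at hcz
                  linarith
              _ ≤ ∫⁻ t in S z, g (c z) t ∂μ := lintegral_mono_set hKS
          have hcontr : C + 1 ≤ C := by
            calc C + 1 = ENNReal.ofReal (R ^ r) * μ K := hRK.symm
              _ ≤ ∫⁻ t in S z, g (c z) t ∂μ := hlow
              _ ≤ C := hVleC z hz
          exact absurd hcontr (not_le.2 (ENNReal.lt_add_right hCfin one_ne_zero))
        -- dominating density
        set G : ℝ → ℝ≥0∞ := fun t => ENNReal.ofReal ((|t| + M) ^ r) with hGdef
        have hGint : ∫⁻ t, G t ∂μ < ⊤ := by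
          refine lt_of_le_of_lt (lintegral_mono fun t => ?_) (hint M).lintegral_lt_top
          apply ENNReal.ofReal_le_ofReal
          refine (hsum |t| M (abs_nonneg t) hM0).trans_eq ?_
          rw [abs_of_nonneg hM0]
        have hgleG : ∀ w : ℝ, |w| ≤ M → ∀ t, g w t ≤ G t := by
          intro w hw t
          apply ENNReal.ofReal_le_ofReal
          apply Real.rpow_le_rpow (abs_nonneg _) ?_ hr0.le
          calc |t - w| ≤ |t| + |w| := abs_sub t w
            _ ≤ |t| + M := by linarith
        set νG := μ.withDensity G with hνGdef
        have hνGapp : ∀ s : Set ℝ, MeasurableSet s → νG s = ∫⁻ t in s, G t ∂μ :=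
          fun s hs => withDensity_apply _ hs
        have hνGfin : νG univ ≠ ⊤ := by
          rw [hνGapp _ MeasurableSet.univ, setLIntegral_univ]; exact hGint.ne
        have hB : Tendsto (fun k : ℕ => νG (Ico (b + z₀ - 1 / ((k : ℝ) + 1)) (b + z₀)))
            atTop (𝓝 0) := by
          have hI : (⋂ k : ℕ, Ico (b + z₀ - 1 / ((k : ℝ) + 1)) (b + z₀)) = ∅ := by
            rw [eq_empty_iff_forall_notMem]
            intro t ht
            simp only [mem_iInter, mem_Ico] at ht
            obtain ⟨k, hk⟩ := exists_nat_one_div_lt (sub_pos.2 (ht 0).2)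
            have := (ht k).1
            linarith
          have h0' : νG (⋂ k : ℕ, Ico (b + z₀ - 1 / ((k : ℝ) + 1)) (b + z₀)) = 0 := by
            rw [hI]; exact measure_empty
          rw [← h0']
          refine tendsto_measure_iInter_atTop (fun k => measurableSet_Ico.nullMeasurableSet) ?_ ?_
          · intro k k' hkk'
            apply Ico_subset_Ico_left
            have hkk'' : ((k : ℝ) + 1) ≤ ((k' : ℝ) + 1) := by exact_mod_cast by omega
            have := one_div_le_one_div_of_le (by positivity : (0:ℝ) < (k:ℝ)+1) hkk''
            linarith
          · exact ⟨0, ne_top_of_le_ne_top hνGfin (measure_mono (subset_univ _))⟩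
        obtain ⟨k, hk⟩ := ((tendsto_order.1 hB).2 _ hεE).exists
        refine ⟨min (z₀ - z₁) (1 / ((k : ℝ) + 1)), lt_min (by linarith) (by positivity), ?_⟩
        intro z hz hzle hzδ
        have hz₁z : z₁ ≤ z := by
          have := lt_of_lt_of_le hzδ (min_le_left _ _); linarith
        have hMz := hcbound z hz hz₁z
        have hD : (∫⁻ t in Ico (b + z) (b + z₀), g (c z) t ∂μ) < ENNReal.ofReal ε := by
          calc ∫⁻ t in Ico (b + z) (b + z₀), g (c z) t ∂μ
              ≤ ∫⁻ t in Ico (b + z) (b + z₀), G t ∂μ :=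
                setLIntegral_mono' measurableSet_Ico fun t _ => hgleG _ hMz t
            _ = νG (Ico (b + z) (b + z₀)) := (hνGapp _ measurableSet_Ico).symm
            _ ≤ νG (Ico (b + z₀ - 1 / ((k : ℝ) + 1)) (b + z₀)) := by
                refine measure_mono (Ico_subset_Ico_left ?_)
                have := lt_of_lt_of_le hzδ (min_le_right _ _); linarith
            _ < ENNReal.ofReal ε := hk
        have h1 : (∫⁻ t in S z₀, g (c z₀) t ∂μ) ≤
            (∫⁻ t in S z, g (c z) t ∂μ) + ∫⁻ t in Ico (b + z) (b + z₀), g (c z) t ∂μ := by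
          refine le_trans (hc' z₀ hz₀ (c z)) ?_
          rw [hsplit hz hzle (c z)]
        have h2 : W z₀ ≤ W z + (∫⁻ t in Ico (b + z) (b + z₀), g (c z) t ∂μ).toReal := by
          rw [hW' z₀, hW' z, ← ENNReal.toReal_add (hfin _ _).ne (hfin _ _).ne]
          exact ENNReal.toReal_mono (ENNReal.add_ne_top.2 ⟨(hfin _ _).ne, (hfin _ _).ne⟩) h1
        have h3 : (∫⁻ t in Ico (b + z) (b + z₀), g (c z) t ∂μ).toReal < ε :=
          ENNReal.toReal_lt_of_lt_ofReal hD
        linarith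
    obtain ⟨δ₁, hδ₁, h₁⟩ := hright
    obtain ⟨δ₂, hδ₂, h₂⟩ := hleft
    refine ⟨min δ₁ δ₂, lt_min hδ₁ hδ₂, fun z hz hdist => ?_⟩
    rw [Real.dist_eq] at hdist ⊢
    rcases le_total z z₀ with h | h
    · have hle : W z ≤ W z₀ := hmono hz hz₀ h
      have hd2 : z₀ - z < δ₂ := by
        have : z₀ - z ≤ |z - z₀| := by rw [abs_sub_comm]; exact le_abs_self _
        exact lt_of_le_of_lt this (lt_of_lt_of_le hdist (min_le_right _ _))
      have := h₂ z hz h hd2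
      rw [abs_sub_comm, abs_of_nonneg (by linarith)]
      linarith
    · have hle : W z₀ ≤ W z := hmono hz₀ hz h
      have hd1 : z - z₀ < δ₁ := by
        exact lt_of_le_of_lt (le_abs_self _) (lt_of_lt_of_le hdist (min_le_left _ _))
      have := h₁ z hz h hd1
      rw [abs_of_nonneg (by linarith)]
      linarith
  exact ⟨hcont, hmono, hstrict⟩
end

section
/- For every n ∈ ℕ, any two n-level Gersho quantizers of order r for μ have the same distortion: if q, p ∈ 𝒢(n, μ, r) then D(μ, q, r) = D(μ, p, r); hence the optimal n-th Gersho quantization error D^G_{n,r}(μ) = inf{D(μ, q, r) : q ∈ 𝒢(n, μ, r)} is attained by every element of 𝒢(n, μ, r). -/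
open MeasureTheory Set Filter Topology
open scoped ENNReal NNReal

namespace GershoAux

lemma cells_comp {s t : Set ℝ} (hs : s.OrdConnected) (ht : t.OrdConnected)
    (hd : Disjoint s t) :
    (∀ x ∈ s, ∀ y ∈ t, x < y) ∨ (∀ y ∈ t, ∀ x ∈ s, y < x) := by
  by_contra h
  push_neg at h
  obtain ⟨⟨x, hx, y, hy, hyx⟩, ⟨y', hy', x', hx', hxy'⟩⟩ := h
  rcases le_total x' y with h1 | h2
  · exact Set.disjoint_left.1 hd (hs.out hx' hx ⟨h1, hyx⟩) hy
  · exact Set.disjoint_left.1 hd hx' (ht.out hy hy' ⟨h2, hxy'⟩)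

lemma exists_cell_subset (A B : Set (Set ℝ)) (hAf : A.Finite) (hBf : B.Finite)
    (hAne : A.Nonempty) (hcard : A.ncard ≤ B.ncard)
    (hAnon : ∀ s ∈ A, s.Nonempty) (hAoc : ∀ s ∈ A, s.OrdConnected)
    (hBnon : ∀ s ∈ B, s.Nonempty) (hBoc : ∀ s ∈ B, s.OrdConnected)
    (hAdisj : A.Pairwise Disjoint) (hBdisj : B.Pairwise Disjoint)
    (hAcover : ∀ x : ℝ, ∃ s ∈ A, x ∈ s) :
    ∃ b ∈ B, ∃ a ∈ A, b ⊆ a := by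
  by_contra hcon
  push_neg at hcon
  classical
  -- representative of each nonempty set
  let ρ : Set ℝ → ℝ := fun s => if h : s.Nonempty then h.choose else 0
  have hρ : ∀ s : Set ℝ, s.Nonempty → ρ s ∈ s := by
    intro s hs
    simp only [ρ, dif_pos hs]
    exact hs.choose_spec
  have hρinj : ∀ s ∈ A, ∀ t ∈ A, ρ s = ρ t → s = t := by
    intro s hsA t htA hst
    by_contra hne
    exact Set.disjoint_left.1 (hAdisj hsA htA hne) (hρ s (hAnon s hsA))
      (hst ▸ hρ t (hAnon t htA))
  have key : ∀ s ∈ A, ∀ t ∈ A, ρ s < ρ t → (∀ x ∈ s, ∀ y ∈ t, x < y) := by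
    intro s hsA t htA hlt
    have hne : s ≠ t := fun h => absurd (h ▸ hlt) (lt_irrefl _)
    rcases cells_comp (hAoc s hsA) (hAoc t htA) (hAdisj hsA htA hne) with h | h
    · exact h
    · exact absurd (h _ (hρ t (hAnon t htA)) _ (hρ s (hAnon s hsA))) (not_lt.2 hlt.le)
  obtain ⟨amax, hamaxA, hamax⟩ := Set.exists_max_image A ρ hAf hAne
  -- minimal cell of A meeting b
  have hφ : ∀ b ∈ B, ∃ a, a ∈ A ∧ (a ∩ b).Nonempty ∧
      ∀ a' ∈ A, (a' ∩ b).Nonempty → ρ a ≤ ρ a' := by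
    intro b hb
    have hMf : {a ∈ A | (a ∩ b).Nonempty}.Finite := hAf.subset (sep_subset _ _)
    have hMne : {a ∈ A | (a ∩ b).Nonempty}.Nonempty := by
      obtain ⟨x, hx⟩ := hBnon b hb
      obtain ⟨s, hsA, hxs⟩ := hAcover x
      exact ⟨s, hsA, x, hxs, hx⟩
    obtain ⟨a, ⟨haA, hab⟩, hmin⟩ := Set.exists_min_image _ ρ hMf hMne
    exact ⟨a, haA, hab, fun a' ha' hab' => hmin a' ⟨ha', hab'⟩⟩
  choose φ hφA hφmeet hφmin using hφ
  -- every b meets a second cell distinct from φ b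
  have hsecond : ∀ b (hb : b ∈ B), ∃ a' ∈ A, (a' ∩ b).Nonempty ∧ a' ≠ φ b hb := by
    intro b hb
    have : ¬ b ⊆ φ b hb := hcon b hb _ (hφA b hb)
    obtain ⟨x, hxb, hxφ⟩ := not_subset.1 this
    obtain ⟨s, hsA, hxs⟩ := hAcover x
    exact ⟨s, hsA, ⟨x, hxs, hxb⟩, fun h => hxφ (h ▸ hxs)⟩
  -- φ never takes value amax
  have hne_max : ∀ b (hb : b ∈ B), φ b hb ≠ amax := by
    intro b hb heq
    obtain ⟨a', ha'A, ha'b, ha'ne⟩ := hsecond b hb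
    have h1 : ρ (φ b hb) ≤ ρ a' := hφmin b hb a' ha'A ha'b
    have h2 : ρ a' ≤ ρ amax := hamax a' ha'A
    rw [heq] at h1
    exact ha'ne ((hρinj a' ha'A amax hamaxA (le_antisymm h2 h1)).trans heq.symm)
  -- injectivity of φ
  have hinj : ∀ b1 (hb1 : b1 ∈ B), ∀ b2 (hb2 : b2 ∈ B), b1 ≠ b2 →
      φ b1 hb1 ≠ φ b2 hb2 := by
    intro b1 hb1 b2 hb2 hne heq
    -- b1 and b2 are comparable
    have hsub : ∀ b (hb : b ∈ B) b' (hb' : b' ∈ B), φ b hb = φ b' hb' →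
        (∀ x ∈ b, ∀ y ∈ b', x < y) → False := by
      intro b hb b' hb' hφeq horder
      obtain ⟨a1, ha1A, ha1b, ha1ne⟩ := hsecond b hb
      have hle : ρ (φ b hb) ≤ ρ a1 := hφmin b hb a1 ha1A ha1b
      have hlt : ρ (φ b hb) < ρ a1 := by
        rcases lt_or_eq_of_le hle with h | h
        · exact h
        · exact absurd (hρinj _ (hφA b hb) a1 ha1A h).symm ha1ne
      obtain ⟨x, hxa1, hxb⟩ := ha1b
      obtain ⟨y, hya, hyb'⟩ := hφmeet b' hb'
      have hyx : y < x := key _ (hφA b hb) a1 ha1A hlt y (hφeq ▸ hya) x hxa1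
      exact absurd (horder x hxb y hyb') (not_lt.2 hyx.le)
    rcases cells_comp (hBoc b1 hb1) (hBoc b2 hb2) (hBdisj hb1 hb2 hne) with h | h
    · exact hsub b1 hb1 b2 hb2 heq h
    · exact hsub b2 hb2 b1 hb1 heq.symm fun x hx y hy => h x hx y hy
  -- counting
  classical
  let F : Set ℝ → Set ℝ := fun b => if h : b ∈ B then φ b h else ∅
  have hFinj : Set.InjOn F B := by
    intro b1 hb1 b2 hb2 hF
    by_contra hne
    apply hinj b1 hb1 b2 hb2 hne
    simpa only [F, dif_pos hb1, dif_pos hb2] using hF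
  have hFsub : F '' B ⊆ A \ {amax} := by
    rintro _ ⟨b, hb, rfl⟩
    simp only [F, dif_pos hb]
    exact ⟨hφA b hb, hne_max b hb⟩
  have h1 : B.ncard = (F '' B).ncard := (Set.ncard_image_of_injOn hFinj).symm
  have h2 : (F '' B).ncard ≤ (A \ {amax}).ncard :=
    Set.ncard_le_ncard hFsub hAf.diff
  have h3 : (A \ {amax}).ncard < A.ncard :=
    Set.ncard_diff_singleton_lt_of_mem hamaxA hAf
  omega

end GershoAux

namespace GershoAux

lemma gersho_div_le (μ : Measure ℝ) (r : ℝ) (n : ℕ) (hn : 0 < n)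
    (q p : ℝ → ℝ) (hq : IsGersho μ r n q) (hp : IsGersho μ r n p) :
    distortionE μ p r / (n : ℝ≥0∞) ≤ distortionE μ q r / (n : ℝ≥0∞) := by
  obtain ⟨hq1, hq2, hq3, hq4, hq5⟩ := hq
  obtain ⟨hp1, hp2, hp3, hp4, hp5⟩ := hp
  have cells : ∀ f : ℝ → ℝ, (Set.range f).encard = n →
      ((fun a => f ⁻¹' {a}) '' Set.range f).Finite ∧
      ((fun a => f ⁻¹' {a}) '' Set.range f).Nonempty ∧
      ((fun a => f ⁻¹' {a}) '' Set.range f).ncard = n ∧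
      (∀ s ∈ (fun a => f ⁻¹' {a}) '' Set.range f, s.Nonempty) ∧
      ((fun a => f ⁻¹' {a}) '' Set.range f).Pairwise Disjoint ∧
      (∀ x : ℝ, ∃ s ∈ (fun a => f ⁻¹' {a}) '' Set.range f, x ∈ s) := by
    intro f hf
    have hrf : (Set.range f).Finite := Set.finite_of_encard_eq_coe hf
    have hinj : Set.InjOn (fun a => f ⁻¹' {a}) (Set.range f) := by
      rintro a ⟨x, rfl⟩ a' ha' h
      have hx : x ∈ f ⁻¹' {f x} := rfl
      rw [show (fun a => f ⁻¹' {a}) (f x) = f ⁻¹' {f x} from rfl] at h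
      rw [h] at hx
      exact hx
    refine ⟨hrf.image _, ?_, ?_, ?_, ?_, ?_⟩
    · have : (Set.range f).Nonempty := by
        rw [← Set.encard_ne_zero, hf]
        exact_mod_cast hn.ne'
      exact this.image _
    · rw [Set.ncard_image_of_injOn hinj, Set.ncard_def, hf]; rfl
    · rintro s ⟨a, ⟨x, rfl⟩, rfl⟩; exact ⟨x, rfl⟩
    · rintro _ ⟨a, ha, rfl⟩ _ ⟨a', ha', rfl⟩ hne
      have haa' : a ≠ a' := fun h => hne (h ▸ rfl)
      exact (Set.disjoint_singleton.2 haa').preimage f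
    · intro x; exact ⟨f ⁻¹' {f x}, ⟨f x, ⟨x, rfl⟩, rfl⟩, rfl⟩
  obtain ⟨hAf, hAne, hAcard, hAnon, hAdisj, hAcover⟩ := cells q hq2
  obtain ⟨hBf, hBne, hBcard, hBnon, hBdisj, hBcover⟩ := cells p hp2
  obtain ⟨b0, hb0, a0, ha0, hsub⟩ :=
    exists_cell_subset ((fun a => q ⁻¹' {a}) '' Set.range q)
      ((fun a => p ⁻¹' {a}) '' Set.range p) hAf hBf hAne (by rw [hAcard, hBcard])
      hAnon (by rintro _ ⟨a, ha, rfl⟩; exact hq3 a ha)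
      hBnon (by rintro _ ⟨a, ha, rfl⟩; exact hp3 a ha)
      hAdisj hBdisj hAcover
  obtain ⟨bp, hbp, rfl⟩ := hb0
  obtain ⟨aq, haq, rfl⟩ := ha0
  calc distortionE μ p r / (n : ℝ≥0∞)
      = cellMoment μ r (p ⁻¹' {bp}) bp := (hp5 bp hbp).symm
    _ ≤ cellMoment μ r (p ⁻¹' {bp}) aq := hp4 bp hbp aq
    _ ≤ cellMoment μ r (q ⁻¹' {aq}) aq := lintegral_mono_set hsub
    _ = distortionE μ q r / (n : ℝ≥0∞) := hq5 aq haq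

lemma gersho_distortion_eq (μ : Measure ℝ) (r : ℝ) (n : ℕ) (hn : 0 < n)
    (q p : ℝ → ℝ) (hq : IsGersho μ r n q) (hp : IsGersho μ r n p) :
    distortionE μ q r = distortionE μ p r := by
  have h1 := gersho_div_le μ r n hn q p hq hp
  have h2 := gersho_div_le μ r n hn p q hp hq
  have hdiv : distortionE μ q r / (n : ℝ≥0∞) = distortionE μ p r / (n : ℝ≥0∞) :=
    le_antisymm h2 h1
  have hn0 : (n : ℝ≥0∞) ≠ 0 := by exact_mod_cast hn.ne'
  have hnt : (n : ℝ≥0∞) ≠ ⊤ := ENNReal.natCast_ne_top n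
  have := congrArg (· * (n : ℝ≥0∞)) hdiv
  simpa only [ENNReal.div_mul_cancel hn0 hnt] using this

end GershoAux

theorem gersho_stmt_3 (μ : Measure ℝ) [IsProbabilityMeasure μ] [NullSingletonClass μ]
    (r : ℝ) (hr : 1 < r) (hmom : Integrable (fun x => |x| ^ r) μ)
    (n : ℕ) (hn : 0 < n) (q p : ℝ → ℝ)
    (hq : IsGersho μ r n q) (hp : IsGersho μ r n p) :
    distortionE μ q r = distortionE μ p r ∧
      (distortionE μ q r).toReal = gershoError μ r n := by
  refine ⟨GershoAux.gersho_distortion_eq μ r n hn q p hq hp, ?_⟩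
  have hinf : (⨅ q' ∈ {q' : ℝ → ℝ | IsGersho μ r n q'}, distortionE μ q' r)
      = distortionE μ q r := by
    apply le_antisymm
    · exact iInf₂_le q hq
    · exact le_iInf₂ fun p' hp' =>
        (GershoAux.gersho_distortion_eq μ r n hn q p' hq hp').le
  rw [gershoError, hinf]
end

section
/- Let μ be absolutely continuous with weakly unimodal density and let (q_n)_{n∈ℕ} be the sequence of n-level Gersho quantizers of order r > 1 for μ. Then the distortion per codecell is nonincreasing: D(μ, q_n, r)/n ≥ D(μ, q_{n+1}, r)/(n + 1) for every n ∈ ℕ. -/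
open MeasureTheory Set Filter Topology
open scoped ENNReal NNReal

/-- If two points lie in distinct ord-connected cells of `g`, every point of the first cell
is below every point of the second cell. -/
private lemma cell_cross {g : ℝ → ℝ}
    (hg : ∀ a ∈ Set.range g, (g ⁻¹' {a}).OrdConnected)
    {x y x' y' : ℝ} (hxy : x < y) (hne : g x ≠ g y)
    (hx' : g x' = g x) (hy' : g y' = g y) : x' < y' := by
  by_contra hle
  push_neg at hle
  rcases le_or_gt x y' with h1 | h1
  · have : y' ∈ g ⁻¹' {g x} :=
      (hg (g x) ⟨x, rfl⟩).out (show x ∈ g ⁻¹' {g x} from rfl)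
        (show x' ∈ g ⁻¹' {g x} from hx') ⟨h1, hle⟩
    exact hne ((hy'.symm.trans this).symm)
  · have : x ∈ g ⁻¹' {g y} :=
      (hg (g y) ⟨y, rfl⟩).out (show y' ∈ g ⁻¹' {g y} from hy')
        (show y ∈ g ⁻¹' {g y} from rfl) ⟨h1.le, hxy.le⟩
    exact hne this

/-- Pigeonhole: if `f` has `m+1` ord-connected cells and `g` has `m` ord-connected cells,
then some cell of `f` is contained in a cell of `g`. -/
private lemma exists_subcell {f g : ℝ → ℝ} {m : ℕ}
    (hf : ∀ a ∈ Set.range f, (f ⁻¹' {a}).OrdConnected)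
    (hg : ∀ a ∈ Set.range g, (g ⁻¹' {a}).OrdConnected)
    (hcf : (Set.range f).encard = ((m + 1 : ℕ) : ℕ∞))
    (hcg : (Set.range g).encard = (m : ℕ∞)) :
    ∃ a ∈ Set.range f, ∃ b ∈ Set.range g, f ⁻¹' {a} ⊆ g ⁻¹' {b} := by
  by_contra hcon
  push_neg at hcon
  -- For each codepoint `a` of `f`, choose `u a < v a` in the cell of `a` on which `g` differs.
  have huv : ∀ a : ℝ, ∃ u v : ℝ, a ∈ Set.range f →
      f u = a ∧ f v = a ∧ u < v ∧ g u ≠ g v := by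
    intro a
    by_cases ha : a ∈ Set.range f
    · obtain ⟨x, hx⟩ := ha
      have hnot := hcon a ⟨x, hx⟩ (g x) ⟨x, rfl⟩
      rw [Set.not_subset] at hnot
      obtain ⟨y, hy, hgy⟩ := hnot
      have hyx : f y = a := hy
      have hne : g y ≠ g x := hgy
      rcases lt_trichotomy y x with hlt | heq | hlt
      · exact ⟨y, x, fun _ => ⟨hyx, hx, hlt, hne⟩⟩
      · exact absurd (heq ▸ rfl) hne
      · exact ⟨x, y, fun _ => ⟨hx, hyx, hlt, hne.symm⟩⟩
    · exact ⟨0, 0, fun h => absurd h ha⟩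
  choose u v huvp using huv
  -- Choose a representative `W t` of each cell of `g`.
  have hW : ∀ t : ℝ, ∃ w : ℝ, t ∈ Set.range g → g w = t := by
    intro t
    by_cases ht : t ∈ Set.range g
    · obtain ⟨w, hw⟩ := ht; exact ⟨w, fun _ => hw⟩
    · exact ⟨0, fun h => absurd h ht⟩
  choose W hWp using hW
  set Φ : ℝ → ℝ := fun a => W (g (v a)) with hΦ
  -- Key monotonicity of Φ across ordered cells of f
  have key : ∀ a ∈ Set.range f, ∀ a' ∈ Set.range f, v a < u a' → Φ a < Φ a' := by
    intro a ha a' ha' hord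
    obtain ⟨hu, hv, hlt, hne⟩ := huvp a ha
    obtain ⟨hu', hv', hlt', hne'⟩ := huvp a' ha'
    have step2 : W (g (u a')) < W (g (v a')) :=
      cell_cross hg hlt' hne' (hWp _ ⟨u a', rfl⟩) (hWp _ ⟨v a', rfl⟩)
    by_cases hcase : g (v a) = g (u a')
    · calc Φ a = W (g (u a')) := by rw [hΦ]; simp only []; rw [hcase]
        _ < Φ a' := step2
    · have step1 : W (g (v a)) < W (g (u a')) :=
        cell_cross hg hord hcase (hWp _ ⟨v a, rfl⟩) (hWp _ ⟨u a', rfl⟩)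
      exact lt_trans step1 step2
  -- Φ is injective on range f
  have hinj : Set.InjOn Φ (Set.range f) := by
    intro a ha a' ha' heq
    by_contra hne
    obtain ⟨hu, hv, hlt, _⟩ := huvp a ha
    obtain ⟨hu', hv', hlt', _⟩ := huvp a' ha'
    have hne1 : f (v a) ≠ f (u a') := by rw [hv, hu']; exact hne
    rcases lt_trichotomy (v a) (u a') with hord | habs | hord
    · exact absurd heq (key a ha a' ha' hord).ne
    · exact hne1 (by rw [habs])
    · have hord' : v a' < u a :=
        cell_cross hf hord hne1.symm (by rw [hv', hu']) (by rw [hu, hv])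
      exact absurd heq.symm (key a' ha' a ha hord').ne
  -- Counting
  have h1 : (Φ '' Set.range f).encard = (Set.range f).encard := hinj.encard_image
  have h2 : Φ '' Set.range f ⊆ W '' Set.range g := by
    rintro _ ⟨a, ha, rfl⟩
    exact ⟨g (v a), ⟨v a, rfl⟩, rfl⟩
  have h3 : (Set.range f).encard ≤ (Set.range g).encard := by
    rw [← h1]
    exact le_trans (Set.encard_mono h2) (Set.encard_image_le _ _)
  rw [hcf, hcg] at h3
  exact absurd (by exact_mod_cast h3) (by omega : ¬ m + 1 ≤ m)

theorem gersho_stmt_7 (μ : Measure ℝ) [IsProbabilityMeasure μ]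
    (r : ℝ) (hr : 1 < r) (hmom : Integrable (fun x => |x| ^ r) μ)
    (h : ℝ → ℝ) (hh0 : ∀ x, 0 ≤ h x)
    (hμ : μ = volume.withDensity (fun x => ENNReal.ofReal (h x)))
    (hwu : WeaklyUnimodal h)
    (q : ℕ → ℝ → ℝ) (hq : ∀ n : ℕ, 0 < n → IsGersho μ r n (q n)) :
    ∀ n : ℕ, 0 < n →
      (distortionE μ (q (n + 1)) r).toReal / ((n : ℝ) + 1) ≤
        (distortionE μ (q n) r).toReal / (n : ℝ) := by
  intro n hn
  obtain ⟨hq1, henc, hord, hG3, hG4⟩ := hq n hn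
  obtain ⟨hq1', henc', hord', hG3', hG4'⟩ := hq (n + 1) (by omega)
  set D := distortionE μ (q n) r with hD
  set D' := distortionE μ (q (n + 1)) r with hD'
  -- the r-th moment is finite
  have hM : (∫⁻ x, ENNReal.ofReal (|x| ^ r) ∂μ) < ⊤ := hmom.lintegral_lt_top
  -- D / n is finite
  have hne : (Set.range (q n)).Nonempty := by
    rw [← Set.encard_ne_zero, henc]
    exact_mod_cast hn.ne'
  obtain ⟨b₀, hb₀⟩ := hne
  have hDn_le : D / (n : ℝ≥0∞) ≤ ∫⁻ x, ENNReal.ofReal (|x| ^ r) ∂μ := by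
    rw [← hG4 b₀ hb₀]
    calc cellMoment μ r (q n ⁻¹' {b₀}) b₀ ≤ cellMoment μ r (q n ⁻¹' {b₀}) 0 := hG3 b₀ hb₀ 0
      _ = ∫⁻ x in q n ⁻¹' {b₀}, ENNReal.ofReal (|x| ^ r) ∂μ := by
          simp [cellMoment, sub_zero]
      _ ≤ ∫⁻ x, ENNReal.ofReal (|x| ^ r) ∂μ := setLIntegral_le_lintegral _ _
  have hDn_top : D / (n : ℝ≥0∞) ≠ ⊤ := (lt_of_le_of_lt hDn_le hM).ne
  -- find a cell of q (n+1) contained in a cell of q n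
  obtain ⟨a, ha, b, hb, hsub⟩ := exists_subcell hord' hord (by exact_mod_cast henc') (by exact_mod_cast henc)
  -- the key ENNReal inequality
  have key : D' / ((n + 1 : ℕ) : ℝ≥0∞) ≤ D / (n : ℝ≥0∞) := by
    rw [← hG4' a ha, ← hG4 b hb]
    calc cellMoment μ r (q (n + 1) ⁻¹' {a}) a
        ≤ cellMoment μ r (q (n + 1) ⁻¹' {a}) b := hG3' a ha b
      _ ≤ cellMoment μ r (q n ⁻¹' {b}) b := lintegral_mono_set hsub
  have hmono := ENNReal.toReal_mono hDn_top key
  rw [ENNReal.toReal_div, ENNReal.toReal_div] at hmono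
  rw [ENNReal.toReal_natCast, ENNReal.toReal_natCast] at hmono
  simpa using hmono
end

section
/- Let μ be absolutely continuous with weakly unimodal density, r > 1, (q_n)_{n∈ℕ} the sequence of n-level Gersho quantizers of order r for μ, and I = [u, v] a compact interval with μ(I) > 0. Then the number n₂^I(n) = card{c ∈ q_n(ℝ) : q_n⁻¹(c) ⊆ ℝ \ (u, v)} of codecells located outside (u, v) is nondecreasing in n: n₂^I(n + 1) ≥ n₂^I(n) for every n ∈ ℕ. -/
open MeasureTheory Set Filter Topology
open scoped ENNReal NNReal

namespace Gersho8

structure Gq (μ : Measure ℝ) (r : ℝ) (q : ℝ → ℝ) (δ : ℝ≥0∞) : Prop where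
  meas : Measurable q
  fin : (Set.range q).Finite
  ordc : ∀ a ∈ Set.range q, (q ⁻¹' {a}).OrdConnected
  opt : ∀ a ∈ Set.range q, ∀ b : ℝ, cellMoment μ r (q ⁻¹' {a}) a ≤ cellMoment μ r (q ⁻¹' {a}) b
  val : ∀ a ∈ Set.range q, cellMoment μ r (q ⁻¹' {a}) a = δ
  pos : ∀ a ∈ Set.range q, 0 < μ (q ⁻¹' {a})
  dpos : 0 < δ
  dlt : δ < ⊤

variable {μ : Measure ℝ} {r : ℝ} {q q₁ q₂ : ℝ → ℝ} {δ δ₁ δ₂ : ℝ≥0∞}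

lemma momf_meas (hr : 0 < r) (a : ℝ) :
    Measurable fun w : ℝ => ENNReal.ofReal (|w - a| ^ r) :=
  (((Real.continuous_rpow_const hr.le).measurable).comp
    ((measurable_id.sub_const a).abs)).ennreal_ofReal

lemma momf_eq_zero_iff (hr : 0 < r) {a w : ℝ} :
    ENNReal.ofReal (|w - a| ^ r) = 0 ↔ w = a := by
  rw [ENNReal.ofReal_eq_zero]
  constructor
  · intro hle
    have h0 : |w - a| ^ r = 0 := le_antisymm hle (Real.rpow_nonneg (abs_nonneg _) r)
    have := (Real.rpow_eq_zero (abs_nonneg _) hr.ne').mp h0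
    have := abs_eq_zero.mp this
    linarith
  · intro h; subst h; simp [Real.zero_rpow hr.ne']

/-- The key contradiction: the max `q₁`-cell `C` below `x` is a.e.-contained in the
`q₂`-cell of `x`, which sticks out above `x`. -/
lemma key_contra (hr : 0 < r) (h0 : ∀ x : ℝ, μ {x} = 0)
    (hP : ∀ s t : ℝ, s < t → 0 < μ (Set.Iic s) → 0 < μ (Set.Ioi t) → 0 < μ (Set.Ioo s t))
    (G₁ : Gq μ r q₁ δ₁) (G₂ : Gq μ r q₂ δ₂)
    {x z c : ℝ} (hbr : δ₂ < δ₁ ∨ (δ₂ = δ₁ ∧ 0 < μ (Set.Ioi x)))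
    (hc : c ∈ Set.range q₁) (hcx : q₁ ⁻¹' {c} ⊆ Set.Iic x)
    (hz : q₂ z = q₂ x) (hzx : x < z)
    (hCD : μ (q₁ ⁻¹' {c} \ q₂ ⁻¹' {q₂ x}) = 0) : False := by
  set C := q₁ ⁻¹' {c} with hCdef
  set D := q₂ ⁻¹' {q₂ x} with hDdef
  have ha'R : q₂ x ∈ Set.range q₂ := ⟨x, rfl⟩
  have mD : MeasurableSet D := G₂.meas (measurableSet_singleton _)
  have mC : MeasurableSet C := G₁.meas (measurableSet_singleton _)
  set f : ℝ → ℝ≥0∞ := fun w => ENNReal.ofReal (|w - q₂ x| ^ r) with hfdef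
  have hfm : Measurable f := momf_meas hr _
  -- δ₁ ≤ ∫_C f = ∫_{C∩D} f
  have hsplitC : (∫⁻ w in C, f w ∂μ) = (∫⁻ w in C ∩ D, f w ∂μ) + (∫⁻ w in C \ D, f w ∂μ) :=
    (lintegral_inter_add_diff f C mD).symm
  have hCdiff0 : (∫⁻ w in C \ D, f w ∂μ) = 0 := by
    rw [Measure.restrict_eq_zero.mpr hCD, lintegral_zero_measure]
  have h1 : δ₁ ≤ ∫⁻ w in C ∩ D, f w ∂μ := by
    have := G₁.opt c hc (q₂ x)
    rw [G₁.val c hc] at this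
    calc δ₁ ≤ cellMoment μ r C (q₂ x) := this
    _ = (∫⁻ w in C ∩ D, f w ∂μ) + (∫⁻ w in C \ D, f w ∂μ) := hsplitC
    _ = ∫⁻ w in C ∩ D, f w ∂μ := by rw [hCdiff0, add_zero]
  -- ∫_{C∩D} f ≤ ∫_D f = δ₂
  have h2 : (∫⁻ w in C ∩ D, f w ∂μ) ≤ δ₂ := by
    have hmono : (∫⁻ w in C ∩ D, f w ∂μ) ≤ ∫⁻ w in D, f w ∂μ :=
      lintegral_mono' (Measure.restrict_mono Set.inter_subset_right le_rfl) le_rfl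
    have : (∫⁻ w in D, f w ∂μ) = δ₂ := G₂.val _ ha'R
    exact hmono.trans this.le
  have hdle : δ₁ ≤ δ₂ := h1.trans h2
  rcases hbr with hlt | ⟨heq, hio⟩
  · exact absurd hdle (not_le.mpr hlt)
  -- equality case
  have hDsplit : (∫⁻ w in D, f w ∂μ) = (∫⁻ w in D ∩ C, f w ∂μ) + (∫⁻ w in D \ C, f w ∂μ) :=
    (lintegral_inter_add_diff f D mC).symm
  have hDC_fin : (∫⁻ w in D ∩ C, f w ∂μ) ≠ ⊤ := by
    have : (∫⁻ w in D ∩ C, f w ∂μ) ≤ δ₂ := by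
      have hmono : (∫⁻ w in D ∩ C, f w ∂μ) ≤ ∫⁻ w in D, f w ∂μ :=
        lintegral_mono' (Measure.restrict_mono Set.inter_subset_left le_rfl) le_rfl
      exact hmono.trans (G₂.val _ ha'R).le
    exact (this.trans_lt G₂.dlt).ne
  have hdiff0 : (∫⁻ w in D \ C, f w ∂μ) = 0 := by
    have hDval : (∫⁻ w in D, f w ∂μ) = δ₂ := G₂.val _ ha'R
    have hle : (∫⁻ w in D ∩ C, f w ∂μ) + (∫⁻ w in D \ C, f w ∂μ) ≤ (∫⁻ w in D ∩ C, f w ∂μ) := by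
      calc (∫⁻ w in D ∩ C, f w ∂μ) + (∫⁻ w in D \ C, f w ∂μ)
          = ∫⁻ w in D, f w ∂μ := hDsplit.symm
        _ = δ₂ := hDval
        _ = δ₁ := heq
        _ ≤ ∫⁻ w in C ∩ D, f w ∂μ := h1
        _ = ∫⁻ w in D ∩ C, f w ∂μ := by rw [Set.inter_comm]
    have h2' : (∫⁻ w in D ∩ C, f w ∂μ) + (∫⁻ w in D \ C, f w ∂μ) ≤
        (∫⁻ w in D ∩ C, f w ∂μ) + 0 := by rw [add_zero]; exact hle
    have := ENNReal.le_of_add_le_add_left hDC_fin h2'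
    exact le_antisymm this (zero_le)
  -- hence μ (D \ C) = 0
  have hDC0 : μ (D \ C) = 0 := by
    have hae : f =ᵐ[μ.restrict (D \ C)] 0 := (lintegral_eq_zero_iff hfm).mp hdiff0
    have hne : {w : ℝ | f w ≠ 0} = {q₂ x}ᶜ := by
      ext w
      simp only [Set.mem_setOf_eq, Set.mem_compl_iff, Set.mem_singleton_iff, hfdef]
      rw [not_iff_not, momf_eq_zero_iff hr]
    have h1' : (μ.restrict (D \ C)) {w | f w ≠ 0} = 0 := by
      have := hae
      rw [Filter.EventuallyEq, ae_iff] at this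
      simpa [Pi.zero_apply] using this
    rw [hne, Measure.restrict_apply (measurableSet_singleton (q₂ x)).compl] at h1'
    have : μ (D \ C) ≤ μ ({q₂ x}ᶜ ∩ (D \ C)) + μ {q₂ x} := by
      refine (measure_mono ?_).trans (measure_union_le _ _)
      intro w hw
      by_cases hwa : w = q₂ x
      · exact Or.inr (by simp [hwa])
      · exact Or.inl ⟨hwa, hw⟩
    rw [h1', h0, add_zero] at this
    exact le_antisymm this (zero_le)
  -- Ioc x z ⊆ D \ C so it is null
  have hIoc : Set.Ioc x z ⊆ D \ C := by
    intro w hw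
    refine ⟨?_, fun hwC => absurd (hcx hwC) (not_le.mpr hw.1)⟩
    have hxD : x ∈ D := Set.mem_preimage.mpr rfl
    have hzD : z ∈ D := Set.mem_preimage.mpr (by simp [hz])
    exact (G₂.ordc _ ha'R).out hxD hzD ⟨hw.1.le, hw.2⟩
  have hIoc0 : μ (Set.Ioc x z) = 0 := le_antisymm (hDC0 ▸ measure_mono hIoc) (zero_le)
  have hIicx : 0 < μ (Set.Iic x) := lt_of_lt_of_le (G₁.pos c hc) (measure_mono hcx)
  have hIoiz : μ (Set.Ioi z) = 0 := by
    by_contra hne0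
    have := hP x z hzx hIicx (lt_of_le_of_ne (zero_le) (Ne.symm hne0))
    have hle : μ (Set.Ioo x z) ≤ μ (Set.Ioc x z) := measure_mono Set.Ioo_subset_Ioc_self
    rw [hIoc0] at hle
    exact absurd (le_antisymm hle (zero_le)) (ne_of_gt this)
  have : μ (Set.Ioi x) = 0 := by
    have : Set.Ioi x = Set.Ioc x z ∪ Set.Ioi z := (Set.Ioc_union_Ioi_eq_Ioi hzx.le).symm
    rw [this]
    refine le_antisymm ((measure_union_le _ _).trans ?_) (zero_le)
    rw [hIoc0, hIoiz, add_zero]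
  exact absurd this (ne_of_gt hio)

lemma sep (hq : ∀ a ∈ Set.range q, (q ⁻¹' {a}).OrdConnected) {a a' : ℝ}
    (hne : a ≠ a') {p p' : ℝ} (hp : q p = a) (hp' : q p' = a') (hpp : p < p') :
    ∀ s s', q s = a → q s' = a' → s < s' := by
  intro s s' hs hs'
  by_contra hcon
  push_neg at hcon
  have ha : a ∈ Set.range q := ⟨p, hp⟩
  have ha' : a' ∈ Set.range q := ⟨p', hp'⟩
  rcases le_or_gt p s' with h1 | h1
  · have : s' ∈ q ⁻¹' {a} := (hq a ha).out (by simp [Set.mem_preimage, hp]) (by simp [Set.mem_preimage, hs]) ⟨h1, hcon⟩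
    simp only [Set.mem_preimage, Set.mem_singleton_iff] at this
    exact hne (this ▸ hs' ▸ rfl)
  · rcases le_or_gt p' s with h2 | h2
    · have : p' ∈ q ⁻¹' {a} := (hq a ha).out (by simp [Set.mem_preimage, hp]) (by simp [Set.mem_preimage, hs]) ⟨le_of_lt hpp, h2⟩
      simp only [Set.mem_preimage, Set.mem_singleton_iff] at this
      exact hne (this ▸ hp'.symm ▸ rfl)
    · have : s ∈ q ⁻¹' {a'} := (hq a' ha').out (by simp [Set.mem_preimage, hs']) (by simp [Set.mem_preimage, hp']) ⟨hcon, le_of_lt h2⟩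
      simp only [Set.mem_preimage, Set.mem_singleton_iff] at this
      exact hne (hs ▸ this)

lemma trichotomy (hq : ∀ a ∈ Set.range q, (q ⁻¹' {a}).OrdConnected) {a a' : ℝ}
    (ha : a ∈ Set.range q) (ha' : a' ∈ Set.range q) (hne : a ≠ a') :
    (∀ s s', q s = a → q s' = a' → s < s') ∨ (∀ s s', q s = a → q s' = a' → s' < s) := by
  obtain ⟨x, hx⟩ := ha
  obtain ⟨x', hx'⟩ := ha'
  rcases lt_trichotomy x x' with h | h | h
  · exact Or.inl (sep hq hne hx hx' h)
  · exact absurd (hx.symm.trans (h ▸ hx')) hne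
  · exact Or.inr fun s s' hs hs' => sep hq (Ne.symm hne) hx' hx h s' s hs' hs

/-- Among the cells of `q` contained in `Iic x` there is a (pointwise) largest one. -/
lemma exists_maxcell (G : Gq μ r q δ) (h0 : ∀ x : ℝ, μ {x} = 0) {x : ℝ}
    (hne : {a ∈ Set.range q | q ⁻¹' {a} ⊆ Set.Iic x}.Nonempty) :
    ∃ c ∈ {a ∈ Set.range q | q ⁻¹' {a} ⊆ Set.Iic x},
      ∀ a ∈ {a ∈ Set.range q | q ⁻¹' {a} ⊆ Set.Iic x}, a ≠ c →
        ∀ p s, q p = a → q s = c → p < s := by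
  set S := {a ∈ Set.range q | q ⁻¹' {a} ⊆ Set.Iic x} with hSdef
  have hSfin : S.Finite := G.fin.subset (Set.sep_subset _ _)
  obtain ⟨c, hcS, hcmax⟩ := Set.Finite.exists_maximalFor (fun a => sSup (q ⁻¹' {a})) S hSfin hne
  refine ⟨c, hcS, ?_⟩
  intro a haS hac p s hp hs
  rcases trichotomy G.ordc haS.1 hcS.1 hac with hgood | hbad
  · exact hgood p s hp hs
  · exfalso
    -- the cell of `c` lies entirely below the cell of `a`
    obtain ⟨xa, hxa⟩ := haS.1
    obtain ⟨xc, hxc⟩ := hcS.1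
    have hbddc : BddAbove (q ⁻¹' {c}) := ⟨x, fun y hy => hcS.2 hy⟩
    have hbdda : BddAbove (q ⁻¹' {a}) := ⟨x, fun y hy => haS.2 hy⟩
    have hnec : (q ⁻¹' {c}).Nonempty := ⟨xc, hxc⟩
    have hfc : sSup (q ⁻¹' {c}) ≤ sSup (q ⁻¹' {a}) := by
      refine csSup_le hnec fun y hy => ?_
      exact (hbad xa y hxa hy).le.trans (le_csSup hbdda hxa)
    have hfeq := le_antisymm hfc (hcmax haS hfc)
    -- every point of the cell of `a` equals the common sup
    have hcell_sub : q ⁻¹' {a} ⊆ {sSup (q ⁻¹' {a})} := by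
      intro p' hp'
      have hub : p' ≤ sSup (q ⁻¹' {a}) := le_csSup hbdda hp'
      have hlb : sSup (q ⁻¹' {c}) ≤ p' := csSup_le hnec fun y hy => (hbad p' y hp' hy).le
      exact le_antisymm hub (hfeq ▸ hlb)
    have := measure_mono hcell_sub |>.trans_eq (h0 _)
    exact absurd (le_antisymm this (zero_le)) (ne_of_gt (G.pos a haS.1))

/-- The master comparison lemma. -/
lemma master (hr : 0 < r) (h0 : ∀ x : ℝ, μ {x} = 0)
    (hP : ∀ s t : ℝ, s < t → 0 < μ (Set.Iic s) → 0 < μ (Set.Ioi t) → 0 < μ (Set.Ioo s t))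
    (G₁ : Gq μ r q₁ δ₁) (G₂ : Gq μ r q₂ δ₂) :
    ∀ k : ℕ, ∀ x : ℝ, (δ₂ < δ₁ ∨ (δ₂ = δ₁ ∧ 0 < μ (Set.Ioi x))) →
      {a ∈ Set.range q₁ | q₁ ⁻¹' {a} ⊆ Set.Iic x}.ncard = k →
      k ≤ {a ∈ Set.range q₂ | q₂ ⁻¹' {a} ⊆ Set.Iic x}.ncard := by
  intro k
  induction k using Nat.strong_induction_on with
  | _ k IH =>
  intro x hbr hk
  rcases k with _ | k'
  · exact Nat.zero_le _
  have hS₁fin : {a ∈ Set.range q₁ | q₁ ⁻¹' {a} ⊆ Set.Iic x}.Finite :=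
    G₁.fin.subset (Set.sep_subset _ _)
  have hS₁ne : {a ∈ Set.range q₁ | q₁ ⁻¹' {a} ⊆ Set.Iic x}.Nonempty :=
    Set.nonempty_of_ncard_ne_zero (by rw [hk]; exact Nat.succ_ne_zero k')
  obtain ⟨c, hcS, hcmax⟩ := exists_maxcell G₁ h0 hS₁ne
  have hcR : c ∈ Set.range q₁ := hcS.1
  have hcx : q₁ ⁻¹' {c} ⊆ Set.Iic x := hcS.2
  have hT2fin : ∀ t : ℝ, {a ∈ Set.range q₂ | q₂ ⁻¹' {a} ⊆ Set.Iic t}.Finite :=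
    fun t => G₂.fin.subset (Set.sep_subset _ _)
  rcases Nat.eq_zero_or_pos k' with hk'0 | hk'pos
  · -- k = 1
    subst hk'0
    by_cases hc1 : ∃ e ∈ Set.range q₂, q₂ ⁻¹' {e} ⊆ Set.Iic x
    · obtain ⟨e, heR, hex⟩ := hc1
      exact (Set.ncard_pos (hT2fin x)).mpr ⟨e, heR, hex⟩
    · push_neg at hc1
      exfalso
      have hDx : ¬ q₂ ⁻¹' {q₂ x} ⊆ Set.Iic x := hc1 (q₂ x) ⟨x, rfl⟩
      obtain ⟨z, hz1, hz2⟩ := Set.not_subset.mp hDx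
      have hzx : x < z := not_le.mp hz2
      have hCD : q₁ ⁻¹' {c} \ q₂ ⁻¹' {q₂ x} = ∅ := by
        rw [Set.diff_eq_empty]
        intro w hwC
        have hwx : w ≤ x := hcx hwC
        rcases eq_or_lt_of_le hwx with rfl | hwlt
        · exact Set.mem_preimage.mpr rfl
        · have hw2 : ¬ q₂ ⁻¹' {q₂ w} ⊆ Set.Iic x := hc1 (q₂ w) ⟨w, rfl⟩
          obtain ⟨z', hz'1, hz'2⟩ := Set.not_subset.mp hw2
          have hx2 : x ∈ q₂ ⁻¹' {q₂ w} :=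
            (G₂.ordc _ ⟨w, rfl⟩).out (Set.mem_preimage.mpr rfl) hz'1
              ⟨hwlt.le, (not_le.mp hz'2).le⟩
          simp only [Set.mem_preimage, Set.mem_singleton_iff] at hx2
          exact Set.mem_preimage.mpr (Set.mem_singleton_iff.mpr hx2.symm)
      have hz1' : q₂ z = q₂ x := hz1
      exact key_contra hr h0 hP G₁ G₂ hbr hcR hcx hz1' hzx
        (by rw [hCD]; exact measure_empty)
  · -- k' ≥ 1
    have hOcard : ({a ∈ Set.range q₁ | q₁ ⁻¹' {a} ⊆ Set.Iic x} \ {c}).ncard = k' := by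
      rw [Set.ncard_diff_singleton_of_mem hcS, hk]
      omega
    have hOne : ({a ∈ Set.range q₁ | q₁ ⁻¹' {a} ⊆ Set.Iic x} \ {c}).Nonempty :=
      Set.nonempty_of_ncard_ne_zero (by rw [hOcard]; omega)
    set O := {a ∈ Set.range q₁ | q₁ ⁻¹' {a} ⊆ Set.Iic x} \ {c} with hOdef
    set B := ⋃ a ∈ O, q₁ ⁻¹' {a} with hBdef
    have hBne : B.Nonempty := by
      obtain ⟨a₀, ha₀⟩ := hOne
      obtain ⟨p₀, hp₀⟩ := ha₀.1.1
      exact ⟨p₀, Set.mem_biUnion ha₀ (Set.mem_preimage.mpr (Set.mem_singleton_iff.mpr hp₀))⟩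
    have hBsub : B ⊆ Set.Iic x := by
      intro y hy
      obtain ⟨a, ha, hya⟩ := Set.mem_iUnion₂.mp hy
      exact ha.1.2 hya
    have hBbdd : BddAbove B := ⟨x, fun y hy => hBsub hy⟩
    set b := sSup B with hbdef
    have hbx : b ≤ x := csSup_le hBne fun y hy => hBsub hy
    have hsub_b : ∀ a ∈ O, q₁ ⁻¹' {a} ⊆ Set.Iic b :=
      fun a ha w hw => le_csSup hBbdd (Set.mem_biUnion ha hw)
    have hCIob : ∀ w ∈ q₁ ⁻¹' {c}, b ≤ w := by
      intro w hw
      by_contra hcon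
      push_neg at hcon
      obtain ⟨p, hpB, hwp⟩ := exists_lt_of_lt_csSup hBne hcon
      obtain ⟨a, haO, hpa⟩ := Set.mem_iUnion₂.mp hpB
      have hpa' : q₁ p = a := hpa
      have hw' : q₁ w = c := hw
      have := hcmax a haO.1 (by simpa using haO.2) p w hpa' hw'
      exact absurd this (not_lt.mpr hwp.le)
    have hEq : {a ∈ Set.range q₁ | q₁ ⁻¹' {a} ⊆ Set.Iic b} = O := by
      ext a
      constructor
      · rintro ⟨haR, hab⟩
        refine ⟨⟨haR, hab.trans (Set.Iic_subset_Iic.mpr hbx)⟩, ?_⟩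
        intro hac
        rw [Set.mem_singleton_iff] at hac
        subst hac
        have hpos : 0 < μ (q₁ ⁻¹' {a} \ {b}) := by
          have hsp : μ (q₁ ⁻¹' {a}) ≤ μ (q₁ ⁻¹' {a} \ {b}) + μ {b} := by
            refine (measure_mono ?_).trans (measure_union_le _ _)
            intro w hw
            by_cases hwb : w = b
            · exact Or.inr (by simp [hwb])
            · exact Or.inl ⟨hw, hwb⟩
          rw [h0 b, add_zero] at hsp
          exact lt_of_lt_of_le (G₁.pos a haR) hsp
        obtain ⟨s, hsC, hsb⟩ := nonempty_of_measure_ne_zero hpos.ne'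
        have hbs : b ≤ s := hCIob s hsC
        have : s ≤ b := hab hsC
        exact hsb (Set.mem_singleton_iff.mpr (le_antisymm this hbs))
      · rintro ⟨haS, hac⟩
        exact ⟨haS.1, hsub_b a ⟨haS, hac⟩⟩
    have hcount_b : {a ∈ Set.range q₁ | q₁ ⁻¹' {a} ⊆ Set.Iic b}.ncard = k' := by
      rw [hEq]; exact hOcard
    have hbr' : δ₂ < δ₁ ∨ (δ₂ = δ₁ ∧ 0 < μ (Set.Ioi b)) := by
      rcases hbr with hlt | ⟨he, hm⟩
      · exact Or.inl hlt
      · exact Or.inr ⟨he, lt_of_lt_of_le hm (measure_mono (Set.Ioi_subset_Ioi hbx))⟩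
    have hIH := IH k' (Nat.lt_succ_self k') b hbr' hcount_b
    by_cases hc1 : ∃ e ∈ Set.range q₂, q₂ ⁻¹' {e} ⊆ Set.Iic x ∧ ¬ q₂ ⁻¹' {e} ⊆ Set.Iic b
    · obtain ⟨e, heR, hex, heb⟩ := hc1
      have hTfin := hT2fin b
      have heT : e ∉ {a ∈ Set.range q₂ | q₂ ⁻¹' {a} ⊆ Set.Iic b} := fun hh => heb hh.2
      have hins : insert e {a ∈ Set.range q₂ | q₂ ⁻¹' {a} ⊆ Set.Iic b} ⊆
          {a ∈ Set.range q₂ | q₂ ⁻¹' {a} ⊆ Set.Iic x} := by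
        rintro a (rfl | haT)
        · exact ⟨heR, hex⟩
        · exact ⟨haT.1, haT.2.trans (Set.Iic_subset_Iic.mpr hbx)⟩
      calc k' + 1 ≤ {a ∈ Set.range q₂ | q₂ ⁻¹' {a} ⊆ Set.Iic b}.ncard + 1 :=
            Nat.add_le_add_right hIH 1
        _ = (insert e {a ∈ Set.range q₂ | q₂ ⁻¹' {a} ⊆ Set.Iic b}).ncard :=
            (Set.ncard_insert_of_notMem heT hTfin).symm
        _ ≤ _ := Set.ncard_le_ncard hins (hT2fin x)
    · push_neg at hc1
      exfalso
      have hbltx : b < x := by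
        rcases lt_or_eq_of_le hbx with hlt | heq2
        · exact hlt
        · exfalso
          rw [heq2] at hcount_b
          omega
      have hDx : ¬ q₂ ⁻¹' {q₂ x} ⊆ Set.Iic x := by
        intro hsub
        have hsubb := hc1 (q₂ x) ⟨x, rfl⟩ hsub
        have : x ≤ b := hsubb (Set.mem_preimage.mpr rfl)
        exact absurd this (not_le.mpr hbltx)
      obtain ⟨z, hz1, hz2⟩ := Set.not_subset.mp hDx
      have hzx : x < z := not_le.mp hz2
      have hCD : q₁ ⁻¹' {c} \ q₂ ⁻¹' {q₂ x} ⊆ {b} := by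
        rintro w ⟨hwC, hwD⟩
        have hwx : w ≤ x := hcx hwC
        have hwxne : w ≠ x := fun hh => hwD (by rw [hh]; exact Set.mem_preimage.mpr rfl)
        have hwlt : w < x := lt_of_le_of_ne hwx hwxne
        by_cases hw2 : q₂ ⁻¹' {q₂ w} ⊆ Set.Iic x
        · have hwb : w ≤ b := hc1 (q₂ w) ⟨w, rfl⟩ hw2 (Set.mem_preimage.mpr rfl)
          exact Set.mem_singleton_iff.mpr (le_antisymm hwb (hCIob w hwC))
        · obtain ⟨z', hz'1, hz'2⟩ := Set.not_subset.mp hw2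
          have hx2 : x ∈ q₂ ⁻¹' {q₂ w} :=
            (G₂.ordc _ ⟨w, rfl⟩).out (Set.mem_preimage.mpr rfl) hz'1
              ⟨hwlt.le, (not_le.mp hz'2).le⟩
          simp only [Set.mem_preimage, Set.mem_singleton_iff] at hx2
          exact absurd (Set.mem_preimage.mpr (Set.mem_singleton_iff.mpr hx2.symm)) hwD
      have hCD0 : μ (q₁ ⁻¹' {c} \ q₂ ⁻¹' {q₂ x}) = 0 :=
        le_antisymm ((measure_mono hCD).trans_eq (h0 b)) (zero_le)
      have hz1' : q₂ z = q₂ x := hz1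
      exact key_contra hr h0 hP G₁ G₂ hbr hcR hcx hz1' hzx hCD0

/-- There is a codepoint whose cell is unbounded above. -/
lemma exists_top (G : Gq μ r q δ) :
    ∃ aU ∈ Set.range q, ∀ s : ℝ, ∃ z, q z = aU ∧ s < z := by
  by_contra hcon
  push_neg at hcon
  have hbdd : ∀ a ∈ Set.range q, BddAbove (q ⁻¹' {a}) := by
    intro a ha
    obtain ⟨s, hs⟩ := hcon a ha
    exact ⟨s, fun y hy => hs y hy⟩
  have huniv : (⋃ a ∈ Set.range q, q ⁻¹' {a}) = Set.univ := by
    ext y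
    simp only [Set.mem_iUnion, Set.mem_univ, iff_true]
    exact ⟨q y, ⟨y, rfl⟩, rfl⟩
  have : BddAbove (⋃ a ∈ Set.range q, q ⁻¹' {a}) :=
    (Set.Finite.bddAbove_biUnion G.fin).mpr hbdd
  rw [huniv] at this
  obtain ⟨s, hs⟩ := this
  have h1 := hs (Set.mem_univ (s + 1))
  linarith

/-- All other cells lie strictly below the top cell. -/
lemma below_top (G : Gq μ r q δ) {aU : ℝ} (haU : aU ∈ Set.range q)
    (hU : ∀ s : ℝ, ∃ z, q z = aU ∧ s < z) {a : ℝ} (ha : a ∈ Set.range q) (hne : a ≠ aU) :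
    ∀ p z, q p = a → q z = aU → p < z := by
  rcases trichotomy G.ordc ha haU hne with hgood | hbad
  · exact hgood
  · exfalso
    obtain ⟨p₀, hp₀⟩ := ha
    obtain ⟨z, hz, hz2⟩ := hU p₀
    exact absurd (hbad p₀ z hp₀ hz) (not_lt.mpr hz2.le)

lemma count_lt (G : Gq μ r q δ) (t : ℝ) :
    {a ∈ Set.range q | q ⁻¹' {a} ⊆ Set.Iic t}.ncard < (Set.range q).ncard := by
  obtain ⟨aU, haU, hU⟩ := exists_top G
  have hsub : {a ∈ Set.range q | q ⁻¹' {a} ⊆ Set.Iic t} ⊆ Set.range q \ {aU} := by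
    rintro a ⟨haR, hat⟩
    refine ⟨haR, ?_⟩
    intro hac
    rw [Set.mem_singleton_iff] at hac
    subst hac
    obtain ⟨z, hz, hz2⟩ := hU t
    exact absurd (hat (Set.mem_preimage.mpr (Set.mem_singleton_iff.mpr hz))) (not_le.mpr hz2)
  have h1 : {a ∈ Set.range q | q ⁻¹' {a} ⊆ Set.Iic t}.ncard ≤ (Set.range q \ {aU}).ncard :=
    Set.ncard_le_ncard hsub (G.fin.subset Set.diff_subset)
  have h2 : (Set.range q \ {aU}).ncard = (Set.range q).ncard - 1 :=
    Set.ncard_diff_singleton_of_mem haU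
  have h3 : 0 < (Set.range q).ncard :=
    (Set.ncard_pos G.fin).mpr ⟨q 0, 0, rfl⟩
  omega

lemma exists_count_top (G : Gq μ r q δ) :
    ∃ t : ℝ, {a ∈ Set.range q | q ⁻¹' {a} ⊆ Set.Iic t}.ncard = (Set.range q).ncard - 1 := by
  obtain ⟨aU, haU, hU⟩ := exists_top G
  have haU' := haU
  obtain ⟨p₀, hp₀⟩ := haU'
  refine ⟨p₀, ?_⟩
  have hEq : {a ∈ Set.range q | q ⁻¹' {a} ⊆ Set.Iic p₀} = Set.range q \ {aU} := by
    ext a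
    constructor
    · rintro ⟨haR, hat⟩
      refine ⟨haR, ?_⟩
      intro hac
      rw [Set.mem_singleton_iff] at hac
      subst hac
      obtain ⟨z, hz, hz2⟩ := hU p₀
      exact absurd (hat (Set.mem_preimage.mpr (Set.mem_singleton_iff.mpr hz))) (not_le.mpr hz2)
    · rintro ⟨haR, hac⟩
      refine ⟨haR, fun w hw => ?_⟩
      have hw' : q w = a := hw
      exact (below_top G ⟨p₀, hp₀⟩ hU haR (by simpa using hac) w p₀ hw' hp₀).le
  rw [hEq]
  exact Set.ncard_diff_singleton_of_mem haU

lemma exists_count_top_pos (G : Gq μ r q δ) (h0 : ∀ x : ℝ, μ {x} = 0)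
    (hcard : 2 ≤ (Set.range q).ncard) :
    ∃ t : ℝ, {a ∈ Set.range q | q ⁻¹' {a} ⊆ Set.Iic t}.ncard = (Set.range q).ncard - 1 ∧
      0 < μ (Set.Ioi t) := by
  obtain ⟨aU, haU, hU⟩ := exists_top G
  -- a second codepoint gives a lower bound for the top cell
  obtain ⟨a₂, ha₂, ha₂ne⟩ : ∃ a₂ ∈ Set.range q, a₂ ≠ aU := by
    by_contra hcon
    push_neg at hcon
    have : Set.range q ⊆ {aU} := fun a ha => Set.mem_singleton_iff.mpr (hcon a ha)
    have := Set.ncard_le_ncard this (Set.finite_singleton aU)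
    simp [Set.ncard_singleton] at this
    omega
  obtain ⟨p₂, hp₂⟩ := ha₂
  have hbb : BddBelow (q ⁻¹' {aU}) := by
    refine ⟨p₂, fun y hy => ?_⟩
    have hy' : q y = aU := hy
    exact (below_top G haU hU ⟨p₂, hp₂⟩ ha₂ne p₂ y hp₂ hy').le
  obtain ⟨z₀, hz₀, _⟩ := hU 0
  have hUne : (q ⁻¹' {aU}).Nonempty := ⟨z₀, Set.mem_preimage.mpr (Set.mem_singleton_iff.mpr hz₀)⟩
  set t₀ := sInf (q ⁻¹' {aU}) with ht₀def
  have hIoi_sub : Set.Ioi t₀ ⊆ q ⁻¹' {aU} := by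
    intro y hy
    obtain ⟨p, hp, hpy⟩ := exists_lt_of_csInf_lt hUne hy
    obtain ⟨z, hz, hzy⟩ := hU y
    exact (G.ordc aU haU).out hp (Set.mem_preimage.mpr (Set.mem_singleton_iff.mpr hz))
      ⟨hpy.le, hzy.le⟩
  have hIoi_pos : 0 < μ (Set.Ioi t₀) := by
    have hsub2 : q ⁻¹' {aU} \ {t₀} ⊆ Set.Ioi t₀ := by
      rintro y ⟨hy, hyne⟩
      exact lt_of_le_of_ne (csInf_le hbb hy) (Ne.symm (by simpa using hyne))
    have hsp : μ (q ⁻¹' {aU}) ≤ μ (q ⁻¹' {aU} \ {t₀}) + μ {t₀} := by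
      refine (measure_mono ?_).trans (measure_union_le _ _)
      intro w hw
      by_cases hwb : w = t₀
      · exact Or.inr (by simp [hwb])
      · exact Or.inl ⟨hw, hwb⟩
    rw [h0 t₀, add_zero] at hsp
    exact lt_of_lt_of_le (lt_of_lt_of_le (G.pos aU haU) hsp) (measure_mono hsub2)
  -- approximate from above to find x* > t₀ with positive mass above it
  have hcover : Set.Ioi t₀ = ⋃ n : ℕ, Set.Ioi (t₀ + 1 / (n + 1 : ℝ)) := by
    ext y
    simp only [Set.mem_Ioi, Set.mem_iUnion]
    constructor
    · intro hy
      obtain ⟨n, hn⟩ := exists_nat_one_div_lt (show (0:ℝ) < y - t₀ by linarith)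
      exact ⟨n, by linarith⟩
    · rintro ⟨n, hn⟩
      have : 0 < 1 / (n + 1 : ℝ) := by positivity
      linarith
  obtain ⟨n, hn⟩ : ∃ n : ℕ, 0 < μ (Set.Ioi (t₀ + 1 / (n + 1 : ℝ))) := by
    by_contra hcon
    push_neg at hcon
    have hz : ∀ n : ℕ, μ (Set.Ioi (t₀ + 1 / (n + 1 : ℝ))) = 0 :=
      fun n => le_antisymm (hcon n) (zero_le)
    have := measure_iUnion_le (μ := μ) (fun n : ℕ => Set.Ioi (t₀ + 1 / (n + 1 : ℝ)))
    rw [← hcover] at this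
    simp only [hz, tsum_zero] at this
    exact absurd (le_antisymm this (zero_le)) (ne_of_gt hIoi_pos)
  set t := t₀ + 1 / (n + 1 : ℝ) with htdef
  have htpos' : (0:ℝ) < 1 / (n + 1 : ℝ) := by positivity
  have htU : t ∈ q ⁻¹' {aU} := hIoi_sub (by simp only [Set.mem_Ioi, htdef]; linarith)
  have ht' : q t = aU := htU
  refine ⟨t, ?_, hn⟩
  have hEq : {a ∈ Set.range q | q ⁻¹' {a} ⊆ Set.Iic t} = Set.range q \ {aU} := by
    ext a
    constructor
    · rintro ⟨haR, hat⟩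
      refine ⟨haR, ?_⟩
      intro hac
      rw [Set.mem_singleton_iff] at hac
      subst hac
      obtain ⟨z, hz, hz2⟩ := hU t
      exact absurd (hat (Set.mem_preimage.mpr (Set.mem_singleton_iff.mpr hz))) (not_le.mpr hz2)
    · rintro ⟨haR, hac⟩
      refine ⟨haR, fun w hw => ?_⟩
      have hw' : q w = a := hw
      exact (below_top G haU hU haR (by simpa using hac) w t hw' ht').le
  rw [hEq]
  exact Set.ncard_diff_singleton_of_mem haU

/-- The per-cell error strictly decreases from `n` to `n + 1` cells. -/
lemma delta_lt (hr : 0 < r) (h0 : ∀ x : ℝ, μ {x} = 0)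
    (hP : ∀ s t : ℝ, s < t → 0 < μ (Set.Iic s) → 0 < μ (Set.Ioi t) → 0 < μ (Set.Ioo s t))
    {qa qb : ℝ → ℝ} {δa δb : ℝ≥0∞}
    (G : Gq μ r qa δa) (G' : Gq μ r qb δb) {n : ℕ} (hn : 0 < n)
    (hca : (Set.range qa).ncard = n) (hcb : (Set.range qb).ncard = n + 1) :
    δb < δa := by
  rcases lt_trichotomy δb δa with hlt | heq | hgt
  · exact hlt
  · exfalso
    obtain ⟨t, ht, htpos⟩ := exists_count_top_pos G' h0 (by omega)
    rw [hcb] at ht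
    have := master hr h0 hP G' G ((n+1) - 1) t (Or.inr ⟨heq.symm, htpos⟩) ht
    have hlt2 := count_lt G t
    omega
  · exfalso
    obtain ⟨t, ht⟩ := exists_count_top G'
    rw [hcb] at ht
    have := master hr h0 hP G' G ((n+1) - 1) t (Or.inl hgt) ht
    have hlt2 := count_lt G t
    omega

/-- Lebesgue integral splits over the (finite) partition into cells. -/
lemma lintegral_partition (hq : Measurable q) (hfin : (Set.range q).Finite) (f : ℝ → ℝ≥0∞) :
    ∫⁻ x, f x ∂μ = ∑' a : (Set.range q), ∫⁻ x in q ⁻¹' {(a : ℝ)}, f x ∂μ := by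
  haveI : Countable (Set.range q) := hfin.countable
  have huniv : (⋃ a : (Set.range q), q ⁻¹' {(a : ℝ)}) = Set.univ := by
    ext y
    simp only [Set.mem_iUnion, Set.mem_univ, iff_true]
    exact ⟨⟨q y, ⟨y, rfl⟩⟩, rfl⟩
  have hdisj : Pairwise (Function.onFun Disjoint fun a : (Set.range q) => q ⁻¹' {(a : ℝ)}) := by
    intro a b hab
    refine Set.disjoint_left.mpr fun y hya hyb => ?_
    have h1 : q y = (a : ℝ) := hya
    have h2 : q y = (b : ℝ) := hyb
    exact hab (Subtype.ext (h1 ▸ h2 ▸ rfl))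
  have hmeas : ∀ a : (Set.range q), MeasurableSet (q ⁻¹' {(a : ℝ)}) :=
    fun a => hq (measurableSet_singleton _)
  calc ∫⁻ x, f x ∂μ = ∫⁻ x in Set.univ, f x ∂μ := (setLIntegral_univ f).symm
    _ = ∫⁻ x in ⋃ a : (Set.range q), q ⁻¹' {(a : ℝ)}, f x ∂μ := by rw [huniv]
    _ = ∑' a : (Set.range q), ∫⁻ x in q ⁻¹' {(a : ℝ)}, f x ∂μ :=
        lintegral_iUnion hmeas hdisj f

lemma distortionE_eq_sum (hq : Measurable q) (hfin : (Set.range q).Finite) :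
    distortionE μ q r = ∑' a : (Set.range q), cellMoment μ r (q ⁻¹' {(a : ℝ)}) (a : ℝ) := by
  rw [distortionE, lintegral_partition hq hfin]
  congr 1
  funext a
  refine setLIntegral_congr_fun (hq (measurableSet_singleton _)) ?_
  intro x hx
  have : q x = (a : ℝ) := hx
  simp only [this]

/-- Build the `Gq` bundle from the Gersho axioms. -/
lemma Gq_of_isGersho {n : ℕ} (hn : 0 < n) (hr : 0 < r) [IsProbabilityMeasure μ]
    (h0 : ∀ x : ℝ, μ {x} = 0)
    (hmom : (∫⁻ x, ENNReal.ofReal (|x| ^ r) ∂μ) ≠ ⊤)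
    (hG : IsGersho μ r n q) :
    Gq μ r q (distortionE μ q r / (n : ℝ≥0∞)) ∧ (Set.range q).ncard = n := by
  obtain ⟨⟨hqm, -⟩, henc, hordc, hopt, hval⟩ := hG
  have hfin : (Set.range q).Finite := Set.finite_of_encard_eq_coe henc
  have hncard : (Set.range q).ncard = n := by rw [Set.ncard_def, henc]; rfl
  -- total distortion is finite
  have hDfin : distortionE μ q r ≠ ⊤ := by
    rw [distortionE_eq_sum hqm hfin]
    have hle : ∑' a : (Set.range q), cellMoment μ r (q ⁻¹' {(a : ℝ)}) (a : ℝ) ≤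
        ∑' a : (Set.range q), cellMoment μ r (q ⁻¹' {(a : ℝ)}) 0 :=
      ENNReal.tsum_le_tsum fun a => hopt (a : ℝ) a.2 0
    have heq : ∑' a : (Set.range q), cellMoment μ r (q ⁻¹' {(a : ℝ)}) 0 =
        ∫⁻ x, ENNReal.ofReal (|x| ^ r) ∂μ := by
      rw [lintegral_partition hqm hfin (fun x => ENNReal.ofReal (|x| ^ r))]
      congr 1
      funext a
      rw [cellMoment]
      congr 1
      funext x
      rw [sub_zero]
    exact (lt_of_le_of_lt hle (by rw [heq]; exact lt_top_iff_ne_top.mpr hmom)).ne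
  -- total distortion is positive
  have hDpos : distortionE μ q r ≠ 0 := by
    intro hD0
    have hfmeas : Measurable fun x => ENNReal.ofReal (|x - q x| ^ r) :=
      (((Real.continuous_rpow_const hr.le).measurable).comp
        ((measurable_id.sub hqm).abs)).ennreal_ofReal
    have hae := (lintegral_eq_zero_iff hfmeas).mp hD0
    have hsub : {x : ℝ | ¬ (fun x => ENNReal.ofReal (|x - q x| ^ r)) x = (0 : ℝ≥0∞)}
        = {x : ℝ | x ≠ q x} := by
      ext x
      simp only [Set.mem_setOf_eq]
      rw [not_iff_comm, momf_eq_zero_iff hr, not_not]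
    have hnull : μ {x : ℝ | x ≠ q x} = 0 := by
      have h2 := ae_iff.mp hae
      simp only [Pi.zero_apply] at h2
      refine measure_mono_null (fun x hx => ?_) h2
      simp only [Set.mem_setOf_eq]
      intro hEq
      exact hx ((momf_eq_zero_iff hr).mp (by exact hEq))
    have hfix_sub : {x : ℝ | x = q x} ⊆ Set.range q := fun x hx => ⟨x, hx.symm⟩
    haveI : MeasureTheory.NullSingletonClass μ := ⟨h0⟩
    have hfix0 : μ {x : ℝ | x = q x} = 0 :=
      le_antisymm (le_trans (measure_mono hfix_sub) (hfin.countable.measure_zero μ).le)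
        (zero_le)
    have huniv : (Set.univ : Set ℝ) ⊆ {x : ℝ | x = q x} ∪ {x : ℝ | x ≠ q x} := by
      intro x _
      by_cases hx : x = q x
      · exact Or.inl hx
      · exact Or.inr hx
    have h1 : μ Set.univ ≤ 0 := by
      calc μ Set.univ ≤ μ ({x : ℝ | x = q x} ∪ {x : ℝ | x ≠ q x}) := measure_mono huniv
        _ ≤ μ {x : ℝ | x = q x} + μ {x : ℝ | x ≠ q x} := measure_union_le _ _
        _ = 0 := by rw [hfix0, hnull, add_zero]
    rw [measure_univ] at h1
    simp at h1
  have hδpos : 0 < distortionE μ q r / (n : ℝ≥0∞) := by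
    refine ENNReal.div_pos hDpos (by simp)
  have hδlt : distortionE μ q r / (n : ℝ≥0∞) < ⊤ := by
    refine ENNReal.div_lt_top hDfin ?_
    simpa using hn.ne'
  refine ⟨⟨hqm, hfin, hordc, hopt, fun a ha => hval a ha, ?_, hδpos, hδlt⟩, hncard⟩
  intro a ha
  by_contra hcon
  push_neg at hcon
  have hμ0 : μ (q ⁻¹' {a}) = 0 := le_antisymm hcon (zero_le)
  have hcm0 : cellMoment μ r (q ⁻¹' {a}) a = 0 := by
    rw [cellMoment, Measure.restrict_eq_zero.mpr hμ0, lintegral_zero_measure]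
  rw [hval a ha] at hcm0
  exact hδpos.ne' hcm0

section Density

variable {h : ℝ → ℝ}

lemma meas_h (hc : ContinuousOn h (tsupport h)) : Measurable h := by
  classical
  have hpw : Measurable ((tsupport h).piecewise h (fun _ => (0:ℝ))) :=
    ContinuousOn.measurable_piecewise hc continuousOn_const (isClosed_tsupport h).measurableSet
  have heq : h = (tsupport h).piecewise h fun _ => 0 := by
    ext x
    by_cases hx : x ∈ tsupport h
    · simp [Set.piecewise, hx]
    · simp [Set.piecewise, hx, image_eq_zero_of_notMem_tsupport hx]
  rw [heq]
  exact hpw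

lemma pos_ordConnected (hwu : WeaklyUnimodal h) : ({x | 0 < h x}).OrdConnected := by
  obtain ⟨-, l₀, hl₀, hl⟩ := hwu
  constructor
  intro x hx y hy z hz
  set l := min (min (h x) (h y)) (l₀ / 2) with hldef
  have hlpos : 0 < l := lt_min (lt_min hx hy) (by linarith)
  have hllt : l < l₀ := lt_of_le_of_lt (min_le_right _ _) (by linarith)
  have hoc := (hl l hlpos hllt).2
  have hxm : x ∈ {x | l ≤ h x} :=
    show l ≤ h x from le_trans (min_le_left _ _) (min_le_left _ _)
  have hym : y ∈ {x | l ≤ h x} :=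
    show l ≤ h y from le_trans (min_le_left _ _) (min_le_right _ _)
  have := hoc.out hxm hym hz
  exact lt_of_lt_of_le hlpos this

lemma singleton_null (hμ : μ = volume.withDensity (fun x => ENNReal.ofReal (h x))) (x : ℝ) :
    μ {x} = 0 := by
  rw [hμ, withDensity_apply _ (measurableSet_singleton x),
    Measure.restrict_eq_zero.mpr (Real.volume_singleton), lintegral_zero_measure]

lemma exists_pos_of_measure_pos (hh0 : ∀ x, 0 ≤ h x) (hm : Measurable h)
    (hμ : μ = volume.withDensity (fun x => ENNReal.ofReal (h x)))
    {s : Set ℝ} (hs : MeasurableSet s) (hpos : 0 < μ s) : ∃ p ∈ s, 0 < h p := by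
  by_contra hcon
  push_neg at hcon
  have hzero : ∀ p ∈ s, h p = 0 := fun p hp => le_antisymm (hcon p hp) (hh0 p)
  have : μ s = 0 := by
    rw [hμ, withDensity_apply _ hs]
    rw [setLIntegral_congr_fun hs (fun p hp => by
      rw [hzero p hp, ENNReal.ofReal_zero])]
    simp
  exact absurd this (ne_of_gt hpos)

lemma hP_of_unimodal (hh0 : ∀ x, 0 ≤ h x) (hwu : WeaklyUnimodal h)
    (hμ : μ = volume.withDensity (fun x => ENNReal.ofReal (h x))) :
    ∀ s t : ℝ, s < t → 0 < μ (Set.Iic s) → 0 < μ (Set.Ioi t) → 0 < μ (Set.Ioo s t) := by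
  intro s t hst hs ht
  have hm : Measurable h := meas_h hwu.1
  obtain ⟨p, hp, hppos⟩ := exists_pos_of_measure_pos hh0 hm hμ measurableSet_Iic hs
  obtain ⟨z, hz, hzpos⟩ := exists_pos_of_measure_pos hh0 hm hμ measurableSet_Ioi ht
  have hoc := pos_ordConnected hwu
  have hall : ∀ y ∈ Set.Ioo s t, 0 < h y := by
    intro y hy
    refine hoc.out hppos hzpos ⟨?_, ?_⟩
    · exact le_of_lt (lt_of_le_of_lt hp hy.1)
    · exact le_of_lt (lt_of_lt_of_le hy.2 (le_of_lt hz))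
  rw [hμ, withDensity_apply _ measurableSet_Ioo]
  by_contra hcon
  push_neg at hcon
  have h00 : (∫⁻ x in Set.Ioo s t, ENNReal.ofReal (h x) ∂volume) = 0 :=
    le_antisymm hcon (zero_le)
  have hae := (lintegral_eq_zero_iff hm.ennreal_ofReal).mp h00
  have h2 := ae_iff.mp hae
  simp only [Pi.zero_apply] at h2
  rw [Measure.restrict_apply] at h2
  · have hsub : Set.Ioo s t ⊆ {a : ℝ | ¬ ENNReal.ofReal (h a) = 0} ∩ Set.Ioo s t := by
      intro y hy
      refine ⟨?_, hy⟩
      simp only [Set.mem_setOf_eq, ENNReal.ofReal_eq_zero, not_le]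
      exact hall y hy
    have := measure_mono_null hsub h2
    rw [Real.volume_Ioo] at this
    exact absurd this (by simp [ENNReal.ofReal_eq_zero]; linarith)
  · exact hm.ennreal_ofReal (measurableSet_singleton 0).compl

end Density

section NegTransfer

lemma cell_neg (q : ℝ → ℝ) (a : ℝ) :
    (fun y => -q (-y)) ⁻¹' {a} = Neg.neg ⁻¹' (q ⁻¹' {-a}) := by
  ext y
  simp only [Set.mem_preimage, Set.mem_singleton_iff]
  constructor
  · intro hy; linarith
  · intro hy; linarith

lemma range_neg (q : ℝ → ℝ) : Set.range (fun y => -q (-y)) = Neg.neg '' Set.range q := by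
  ext a
  constructor
  · rintro ⟨y, rfl⟩; exact ⟨q (-y), ⟨-y, rfl⟩, rfl⟩
  · rintro ⟨b, ⟨y, rfl⟩, rfl⟩; exact ⟨-y, by simp⟩

lemma mem_range_neg {q : ℝ → ℝ} {a : ℝ} :
    a ∈ Set.range (fun y => -q (-y)) ↔ -a ∈ Set.range q := by
  rw [range_neg]
  constructor
  · rintro ⟨b, hb, rfl⟩; simpa using hb
  · intro hb; exact ⟨-a, hb, by simp⟩

lemma ordConnected_neg_preimage {S : Set ℝ} (hS : S.OrdConnected) :
    (Neg.neg ⁻¹' S : Set ℝ).OrdConnected := by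
  constructor
  intro x hx y hy z hz
  have hm : -z ∈ Set.Icc (-y) (-x) := ⟨by linarith [hz.2], by linarith [hz.1]⟩
  exact hS.out hy hx hm

lemma cellMoment_neg (hr : 0 < r) {S : Set ℝ} (hS : MeasurableSet S) (b : ℝ) :
    cellMoment (Measure.map Neg.neg μ) r (Neg.neg ⁻¹' S) b = cellMoment μ r S (-b) := by
  rw [cellMoment, cellMoment,
    setLIntegral_map (hS.preimage measurable_neg) (momf_meas hr b) measurable_neg]
  have hpre : (Neg.neg : ℝ → ℝ) ⁻¹' ((Neg.neg : ℝ → ℝ) ⁻¹' S) = S := by ext x; simp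
  rw [hpre]
  refine setLIntegral_congr_fun hS (fun x hx => ?_)
  congr 1
  rw [show -x - b = -(x - -b) by ring, abs_neg]

lemma Gq.neg (hr : 0 < r) (G : Gq μ r q δ) :
    Gq (Measure.map Neg.neg μ) r (fun y => -q (-y)) δ := by
  have hmeas : Measurable fun y : ℝ => -q (-y) := (G.meas.comp measurable_neg).neg
  refine ⟨hmeas, ?_, ?_, ?_, ?_, ?_, G.dpos, G.dlt⟩
  · rw [range_neg]; exact G.fin.image _
  · intro a ha
    rw [cell_neg]
    exact ordConnected_neg_preimage (G.ordc (-a) (mem_range_neg.mp ha))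
  · intro a ha b
    have haR : -a ∈ Set.range q := mem_range_neg.mp ha
    rw [cell_neg, cellMoment_neg hr (G.meas (measurableSet_singleton _)) a,
        cellMoment_neg hr (G.meas (measurableSet_singleton _)) b]
    have := G.opt (-a) haR (-b)
    simpa using this
  · intro a ha
    have haR : -a ∈ Set.range q := mem_range_neg.mp ha
    rw [cell_neg, cellMoment_neg hr (G.meas (measurableSet_singleton _)) a]
    simpa using G.val (-a) haR
  · intro a ha
    have haR : -a ∈ Set.range q := mem_range_neg.mp ha
    rw [cell_neg, Measure.map_apply measurable_neg
      ((G.meas (measurableSet_singleton _)).preimage measurable_neg)]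
    have hpre : (Neg.neg : ℝ → ℝ) ⁻¹' ((Neg.neg : ℝ → ℝ) ⁻¹' (q ⁻¹' {-a})) = q ⁻¹' {-a} := by
      ext x; simp
    rw [hpre]
    exact G.pos (-a) haR

lemma singleton_null_neg (h0 : ∀ x : ℝ, μ {x} = 0) :
    ∀ x : ℝ, Measure.map Neg.neg μ {x} = 0 := by
  intro x
  rw [Measure.map_apply measurable_neg (measurableSet_singleton x)]
  have : (Neg.neg : ℝ → ℝ) ⁻¹' {x} = {-x} := by ext y; simp [neg_eq_iff_eq_neg]
  rw [this]
  exact h0 (-x)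

lemma hP_neg (h0 : ∀ x : ℝ, μ {x} = 0)
    (hP : ∀ s t : ℝ, s < t → 0 < μ (Set.Iic s) → 0 < μ (Set.Ioi t) → 0 < μ (Set.Ioo s t)) :
    ∀ s t : ℝ, s < t → 0 < Measure.map Neg.neg μ (Set.Iic s) →
      0 < Measure.map Neg.neg μ (Set.Ioi t) → 0 < Measure.map Neg.neg μ (Set.Ioo s t) := by
  intro s t hst h1 h2
  rw [Measure.map_apply measurable_neg measurableSet_Iic] at h1
  rw [Measure.map_apply measurable_neg measurableSet_Ioi] at h2
  rw [Measure.map_apply measurable_neg measurableSet_Ioo]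
  have e1 : (Neg.neg : ℝ → ℝ) ⁻¹' Set.Iic s = Set.Ici (-s) := by
    ext x; simp only [Set.mem_preimage, Set.mem_Iic, Set.mem_Ici]; constructor <;> intro <;> linarith
  have e2 : (Neg.neg : ℝ → ℝ) ⁻¹' Set.Ioi t = Set.Iio (-t) := by
    ext x; simp only [Set.mem_preimage, Set.mem_Ioi, Set.mem_Iio]; constructor <;> intro <;> linarith
  have e3 : (Neg.neg : ℝ → ℝ) ⁻¹' Set.Ioo s t = Set.Ioo (-t) (-s) := by
    ext x
    simp only [Set.mem_preimage, Set.mem_Ioo]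
    constructor <;> rintro ⟨h1', h2'⟩ <;> constructor <;> linarith
  rw [e1] at h1
  rw [e2] at h2
  rw [e3]
  have hIic : 0 < μ (Set.Iic (-t)) := lt_of_lt_of_le h2 (measure_mono Set.Iio_subset_Iic_self)
  have hIoi : 0 < μ (Set.Ioi (-s)) := by
    have hle : μ (Set.Ici (-s)) ≤ μ (Set.Ioi (-s)) + μ {(-s)} := by
      refine (measure_mono ?_).trans (measure_union_le _ _)
      intro w hw
      rcases lt_or_eq_of_le (Set.mem_Ici.mp hw) with hlt | heq
      · exact Or.inl hlt
      · exact Or.inr (by simp [heq.symm])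
    rw [h0 (-s), add_zero] at hle
    exact lt_of_lt_of_le h1 hle
  exact hP (-t) (-s) (by linarith) hIic hIoi

lemma count_neg (q : ℝ → ℝ) (v : ℝ) :
    {a ∈ Set.range (fun y => -q (-y)) | (fun y => -q (-y)) ⁻¹' {a} ⊆ Set.Iic (-v)}.ncard
      = {a ∈ Set.range q | q ⁻¹' {a} ⊆ Set.Ici v}.ncard := by
  have himg : {a ∈ Set.range (fun y => -q (-y)) | (fun y => -q (-y)) ⁻¹' {a} ⊆ Set.Iic (-v)}
      = Neg.neg '' {a ∈ Set.range q | q ⁻¹' {a} ⊆ Set.Ici v} := by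
    ext a
    constructor
    · rintro ⟨haR, hsub⟩
      refine ⟨-a, ⟨mem_range_neg.mp haR, ?_⟩, by simp⟩
      intro w hw
      have hmem : -w ∈ (fun y => -q (-y)) ⁻¹' {a} := by
        rw [cell_neg]
        simpa using hw
      have hle := hsub hmem
      simp only [Set.mem_Iic] at hle
      exact Set.mem_Ici.mpr (by linarith)
    · rintro ⟨b, ⟨hbR, hbsub⟩, rfl⟩
      refine ⟨mem_range_neg.mpr (by simpa using hbR), ?_⟩
      intro y hy
      rw [cell_neg] at hy
      simp only [Set.mem_preimage, neg_neg] at hy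
      have := hbsub hy
      simp only [Set.mem_Ici] at this
      exact Set.mem_Iic.mpr (by linarith)
  rw [himg, Set.ncard_image_of_injective _ neg_injective]

end NegTransfer

lemma split_count (G : Gq μ r q δ) {u v : ℝ} (huv : u < v) :
    {c ∈ Set.range q | q ⁻¹' {c} ⊆ (Set.Ioo u v)ᶜ}.ncard =
      {c ∈ Set.range q | q ⁻¹' {c} ⊆ Set.Iic u}.ncard +
      {c ∈ Set.range q | q ⁻¹' {c} ⊆ Set.Ici v}.ncard := by
  have hEq : {c ∈ Set.range q | q ⁻¹' {c} ⊆ (Set.Ioo u v)ᶜ} =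
      {c ∈ Set.range q | q ⁻¹' {c} ⊆ Set.Iic u} ∪
      {c ∈ Set.range q | q ⁻¹' {c} ⊆ Set.Ici v} := by
    ext c
    constructor
    · rintro ⟨hcR, hsub⟩
      by_cases hcase : ∀ w ∈ q ⁻¹' {c}, w ≤ u
      · exact Or.inl ⟨hcR, fun w hw => hcase w hw⟩
      · push_neg at hcase
        obtain ⟨w₀, hw₀, hw₀u⟩ := hcase
        have hw₀v : v ≤ w₀ := by
          have hc' := hsub hw₀
          simp only [Set.mem_compl_iff, Set.mem_Ioo, not_and, not_lt] at hc'
          exact hc' hw₀u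
        refine Or.inr ⟨hcR, fun w hw => ?_⟩
        by_contra hwv
        rw [Set.mem_Ici, not_le] at hwv
        have hwu : w ≤ u := by
          have hc' := hsub hw
          simp only [Set.mem_compl_iff, Set.mem_Ioo, not_and, not_lt] at hc'
          by_contra hgt
          push_neg at hgt
          exact absurd (hc' hgt) (not_le.mpr hwv)
        have hm : (u + v) / 2 ∈ q ⁻¹' {c} :=
          (G.ordc c hcR).out hw hw₀ ⟨by linarith, by linarith⟩
        have hc' := hsub hm
        simp only [Set.mem_compl_iff, Set.mem_Ioo, not_and, not_lt] at hc'
        have := hc' (by linarith)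
        linarith
    · rintro (⟨hcR, hsub⟩ | ⟨hcR, hsub⟩)
      · refine ⟨hcR, fun w hw => ?_⟩
        have := hsub hw
        simp only [Set.mem_Iic] at this
        simp only [Set.mem_compl_iff, Set.mem_Ioo, not_and, not_lt]
        intro h1
        linarith
      · refine ⟨hcR, fun w hw => ?_⟩
        have := hsub hw
        simp only [Set.mem_Ici] at this
        simp only [Set.mem_compl_iff, Set.mem_Ioo, not_and, not_lt]
        intro h1
        linarith
  have hdisj : Disjoint {c ∈ Set.range q | q ⁻¹' {c} ⊆ Set.Iic u}
      {c ∈ Set.range q | q ⁻¹' {c} ⊆ Set.Ici v} := by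
    rw [Set.disjoint_left]
    rintro c ⟨hcR, h1⟩ ⟨-, h2⟩
    obtain ⟨p, hp⟩ := hcR
    have hpm : p ∈ q ⁻¹' {c} := Set.mem_preimage.mpr (Set.mem_singleton_iff.mpr hp)
    have ha := h1 hpm
    have hb := h2 hpm
    simp only [Set.mem_Iic] at ha
    simp only [Set.mem_Ici] at hb
    linarith
  rw [hEq, Set.ncard_union_eq hdisj (G.fin.subset (Set.sep_subset _ _))
    (G.fin.subset (Set.sep_subset _ _))]

end Gersho8

theorem gersho_stmt_8 (μ : Measure ℝ) [IsProbabilityMeasure μ]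
    (r : ℝ) (hr : 1 < r) (hmom : Integrable (fun x => |x| ^ r) μ)
    (h : ℝ → ℝ) (hh0 : ∀ x, 0 ≤ h x)
    (hμ : μ = volume.withDensity (fun x => ENNReal.ofReal (h x)))
    (hwu : WeaklyUnimodal h)
    (q : ℕ → ℝ → ℝ) (hq : ∀ n : ℕ, 0 < n → IsGersho μ r n (q n))
    (u v : ℝ) (huv : u < v) (hI : 0 < μ (Set.Icc u v)) :
    ∀ n : ℕ, 0 < n →
      {c ∈ Set.range (q n) | (q n) ⁻¹' {c} ⊆ (Set.Ioo u v)ᶜ}.ncard ≤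
        {c ∈ Set.range (q (n + 1)) | (q (n + 1)) ⁻¹' {c} ⊆ (Set.Ioo u v)ᶜ}.ncard := by
  intro n hn
  have hr0 : (0:ℝ) < r := lt_trans one_pos hr
  have h0 : ∀ x : ℝ, μ {x} = 0 := Gersho8.singleton_null hμ
  have hP := Gersho8.hP_of_unimodal hh0 hwu hμ
  have hmom' : (∫⁻ x, ENNReal.ofReal (|x| ^ r) ∂μ) ≠ ⊤ := by
    have h1 : (∫⁻ a, (‖|a| ^ r‖₊ : ℝ≥0∞) ∂μ) < ⊤ := hmom.hasFiniteIntegral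
    have h2 : (∫⁻ a, (‖|a| ^ r‖₊ : ℝ≥0∞) ∂μ) = ∫⁻ x, ENNReal.ofReal (|x| ^ r) ∂μ := by
      congr 1
      funext a
      exact Real.enorm_eq_ofReal (Real.rpow_nonneg (abs_nonneg a) r)
    rw [h2] at h1
    exact h1.ne
  obtain ⟨Ga, hna⟩ := Gersho8.Gq_of_isGersho hn hr0 h0 hmom' (hq n hn)
  obtain ⟨Gb, hnb⟩ :=
    Gersho8.Gq_of_isGersho (Nat.succ_pos n) hr0 h0 hmom' (hq (n + 1) (Nat.succ_pos n))
  have hδ := Gersho8.delta_lt hr0 h0 hP Ga Gb hn hna hnb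
  have hleft : {c ∈ Set.range (q n) | (q n) ⁻¹' {c} ⊆ Set.Iic u}.ncard ≤
      {c ∈ Set.range (q (n + 1)) | (q (n + 1)) ⁻¹' {c} ⊆ Set.Iic u}.ncard :=
    Gersho8.master hr0 h0 hP Ga Gb _ u (Or.inl hδ) rfl
  have h0n := Gersho8.singleton_null_neg h0
  have hPn := Gersho8.hP_neg h0 hP
  have hright : {c ∈ Set.range (q n) | (q n) ⁻¹' {c} ⊆ Set.Ici v}.ncard ≤
      {c ∈ Set.range (q (n + 1)) | (q (n + 1)) ⁻¹' {c} ⊆ Set.Ici v}.ncard := by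
    have hm := Gersho8.master hr0 h0n hPn (Ga.neg hr0) (Gb.neg hr0) _ (-v) (Or.inl hδ) rfl
    rwa [Gersho8.count_neg (q n) v, Gersho8.count_neg (q (n + 1)) v] at hm
  rw [Gersho8.split_count Ga huv, Gersho8.split_count Gb huv]
  omega
end

section
/- Let μ be absolutely continuous with weakly unimodal density, r > 1, (q_n)_{n∈ℕ} the sequence of n-level Gersho quantizers of order r for μ, and I a compact interval contained in the interior of supp μ. Then there exists m ∈ ℕ such that for every n ≥ m the set J_{n,I} = {a ∈ q_n(ℝ) : q_n⁻¹(a) ⊆ I} of codepoints whose codecell lies inside I is nonempty. -/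
open MeasureTheory Set Filter Topology
open scoped ENNReal NNReal

section GershoAux

private lemma step_lb (μ : Measure ℝ) {r : ℝ} (hr : 0 ≤ r) {d : ℝ} (hd : 0 ≤ d) (s : Set ℝ) (b : ℝ)
    (hpt : ∀ x ∈ s, d ≤ |x - b|) :
    ENNReal.ofReal (d ^ r) * μ s ≤ ∫⁻ x in s, ENNReal.ofReal (|x - b| ^ r) ∂μ := by
  rw [← setLIntegral_const s (ENNReal.ofReal (d ^ r))]
  refine setLIntegral_mono (by fun_prop) (fun x hx => ?_)
  exact ENNReal.ofReal_le_ofReal (Real.rpow_le_rpow hd (hpt x hx) hr)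

private lemma cell_lower (μ : Measure ℝ) {r : ℝ} (hr : 0 ≤ r) (C : Set ℝ) {s t : ℝ} (hst : s < t)
    (hsub : Set.Icc s t ⊆ C) (b : ℝ) :
    ENNReal.ofReal (((t - s) / 4) ^ r) *
      min (μ (Set.Icc s (s + (t - s) / 4))) (μ (Set.Icc (t - (t - s) / 4) t)) ≤
      cellMoment μ r C b := by
  set L := t - s with hL
  have hL0 : 0 < L := by simp only [hL]; linarith
  have hd : (0:ℝ) ≤ L / 4 := by linarith
  rcases le_or_gt b (s + L / 2) with hb | hb
  · calc ENNReal.ofReal ((L / 4) ^ r) * min (μ (Icc s (s + L / 4))) (μ (Icc (t - L / 4) t))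
        ≤ ENNReal.ofReal ((L / 4) ^ r) * μ (Icc (t - L / 4) t) :=
          mul_le_mul_right (min_le_right _ _) _
      _ ≤ ∫⁻ x in Icc (t - L / 4) t, ENNReal.ofReal (|x - b| ^ r) ∂μ := by
          refine step_lb μ hr hd _ b (fun x hx => ?_)
          have h1 : t - L / 4 ≤ x := hx.1
          have h2 : L / 4 ≤ x - b := by simp only [hL] at *; linarith
          calc L / 4 ≤ x - b := h2
            _ ≤ |x - b| := le_abs_self _
      _ ≤ cellMoment μ r C b := by
          refine lintegral_mono_set (fun x hx => hsub ⟨?_, hx.2⟩)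
          have := hx.1; simp only [hL] at *; linarith
  · calc ENNReal.ofReal ((L / 4) ^ r) * min (μ (Icc s (s + L / 4))) (μ (Icc (t - L / 4) t))
        ≤ ENNReal.ofReal ((L / 4) ^ r) * μ (Icc s (s + L / 4)) :=
          mul_le_mul_right (min_le_left _ _) _
      _ ≤ ∫⁻ x in Icc s (s + L / 4), ENNReal.ofReal (|x - b| ^ r) ∂μ := by
          refine step_lb μ hr hd _ b (fun x hx => ?_)
          have h1 : x ≤ s + L / 4 := hx.2
          have h2 : L / 4 ≤ b - x := by linarith
          calc L / 4 ≤ b - x := h2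
            _ ≤ |x - b| := by rw [abs_sub_comm]; exact le_abs_self _
      _ ≤ cellMoment μ r C b := by
          refine lintegral_mono_set (fun x hx => hsub ⟨hx.1, ?_⟩)
          have := hx.2; simp only [hL] at *; linarith

private lemma pos_quarter (μ : Measure ℝ) {s t : ℝ} (hst : s < t)
    (hsub : Set.Icc s t ⊆ interior (msupp μ)) : 0 < μ (Set.Icc s t) := by
  have hp : (s + t) / 2 ∈ Set.Icc s t := ⟨by linarith, by linarith⟩
  have hpm : (s + t) / 2 ∈ msupp μ := interior_subset (hsub hp)
  have hU : Set.Ioo s t ∈ nhds ((s + t) / 2) :=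
    isOpen_Ioo.mem_nhds ⟨by linarith, by linarith⟩
  exact lt_of_lt_of_le (hpm _ hU) (measure_mono Set.Ioo_subset_Icc_self)

private lemma distortion_le (μ : Measure ℝ) (r : ℝ) (Q : ℝ → ℝ)
    (hQm : Measurable Q) (hQc : (Set.range Q).Countable)
    (hG3 : ∀ a ∈ Set.range Q, ∀ b : ℝ,
      cellMoment μ r (Q ⁻¹' {a}) a ≤ cellMoment μ r (Q ⁻¹' {a}) b) :
    distortionE μ Q r ≤ ∫⁻ x, ENNReal.ofReal (|x| ^ r) ∂μ := by
  haveI : Countable ↥(Set.range Q) := hQc.to_subtype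
  set s : ↥(Set.range Q) → Set ℝ := fun a => Q ⁻¹' {(a : ℝ)} with hs
  have hmeas : ∀ a, MeasurableSet (s a) := fun a => hQm (measurableSet_singleton _)
  have hdisj : Pairwise (Function.onFun Disjoint s) := by
    intro a b hab
    refine Set.disjoint_left.mpr (fun x hx hx' => hab ?_)
    exact Subtype.ext
      (by simp only [hs, Set.mem_preimage, Set.mem_singleton_iff] at hx hx'; rw [← hx, ← hx'])
  have hU : (⋃ a, s a) = Set.univ := by
    ext x
    simp only [hs, Set.mem_iUnion, Set.mem_preimage, Set.mem_singleton_iff, Set.mem_univ, iff_true]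
    exact ⟨⟨Q x, Set.mem_range_self x⟩, rfl⟩
  have key : ∀ g : ℝ → ℝ≥0∞, Measurable g →
      ∫⁻ x, g x ∂μ = ∑' a : ↥(Set.range Q), ∫⁻ x in s a, g x ∂μ := by
    intro g hg
    rw [← setLIntegral_univ, ← hU, lintegral_iUnion hmeas hdisj]
  calc distortionE μ Q r
      = ∑' a : ↥(Set.range Q), ∫⁻ x in s a, ENNReal.ofReal (|x - Q x| ^ r) ∂μ :=
        key _ (by fun_prop)
    _ = ∑' a : ↥(Set.range Q), cellMoment μ r (s a) (a : ℝ) := by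
        refine tsum_congr (fun a => ?_)
        refine setLIntegral_congr_fun (hmeas a) (fun x hx => ?_)
        simp only [hs, Set.mem_preimage, Set.mem_singleton_iff] at hx
        rw [hx]
    _ ≤ ∑' a : ↥(Set.range Q), cellMoment μ r (s a) 0 :=
        ENNReal.tsum_le_tsum (fun a => hG3 (a : ℝ) a.2 0)
    _ = ∑' a : ↥(Set.range Q), ∫⁻ x in s a, ENNReal.ofReal (|x| ^ r) ∂μ := by
        refine tsum_congr (fun a => ?_)
        simp [cellMoment]
    _ = ∫⁻ x, ENNReal.ofReal (|x| ^ r) ∂μ := (key _ (by fun_prop)).symm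

end GershoAux

theorem gersho_stmt_9 (μ : Measure ℝ) [IsProbabilityMeasure μ]
    (r : ℝ) (hr : 1 < r) (hmom : Integrable (fun x => |x| ^ r) μ)
    (h : ℝ → ℝ) (hh0 : ∀ x, 0 ≤ h x)
    (hμ : μ = volume.withDensity (fun x => ENNReal.ofReal (h x)))
    (hwu : WeaklyUnimodal h)
    (q : ℕ → ℝ → ℝ) (hq : ∀ n : ℕ, 0 < n → IsGersho μ r n (q n))
    (u v : ℝ) (huv : u < v) (hI : Set.Icc u v ⊆ interior (msupp μ)) :
    ∃ m : ℕ, ∀ n ≥ m, (Jcells q (Set.Icc u v) n).Nonempty := by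
  
  have hr0 : (0:ℝ) ≤ r := by linarith
  set M := ∫⁻ x, ENNReal.ofReal (|x| ^ r) ∂μ with hM
  have hMfin : M ≠ ⊤ := by
    have := (hasFiniteIntegral_iff_ofReal
      (Filter.Eventually.of_forall (fun x => Real.rpow_nonneg (abs_nonneg x) r))).mp hmom.2
    exact this.ne
  set w : ℝ := (u + v) / 2 with hw
  have hu_w : u < w := by rw [hw]; linarith
  have hw_v : w < v := by rw [hw]; linarith
  set c1 := ENNReal.ofReal (((w - u) / 4) ^ r) *
    min (μ (Set.Icc u (u + (w - u) / 4))) (μ (Set.Icc (w - (w - u) / 4) w)) with hc1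
  set c2 := ENNReal.ofReal (((v - w) / 4) ^ r) *
    min (μ (Set.Icc w (w + (v - w) / 4))) (μ (Set.Icc (v - (v - w) / 4) v)) with hc2
  have hposq : ∀ s t : ℝ, u ≤ s → t ≤ v → s < t → 0 < μ (Set.Icc s t) := by
    intro s t h1 h2 h3
    exact pos_quarter μ h3 ((Set.Icc_subset_Icc h1 h2).trans hI)
  have hc1pos : 0 < c1 := by
    refine ENNReal.mul_pos (ne_of_gt (ENNReal.ofReal_pos.mpr
      (Real.rpow_pos_of_pos (by linarith) r))) (ne_of_gt (lt_min ?_ ?_))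
    · exact hposq _ _ le_rfl (by linarith) (by linarith)
    · exact hposq _ _ (by linarith) (by linarith) (by linarith)
  have hc2pos : 0 < c2 := by
    refine ENNReal.mul_pos (ne_of_gt (ENNReal.ofReal_pos.mpr
      (Real.rpow_pos_of_pos (by linarith) r))) (ne_of_gt (lt_min ?_ ?_))
    · exact hposq _ _ (by linarith) (by linarith) (by linarith)
    · exact hposq _ _ (by linarith) le_rfl (by linarith)
  have hcpos : 0 < min c1 c2 := lt_min hc1pos hc2pos
  obtain ⟨m, hm0, hmlt⟩ : ∃ m : ℕ, 0 < m ∧ M / m < min c1 c2 := by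
    rcases eq_or_ne (min c1 c2) ⊤ with hct | hct
    · refine ⟨1, one_pos, ?_⟩
      rw [hct]
      exact lt_of_le_of_lt (by simp) hMfin.lt_top
    · have hc' : 0 < (min c1 c2).toReal := ENNReal.toReal_pos hcpos.ne' hct
      obtain ⟨k, hk⟩ := exists_nat_gt (M.toReal / (min c1 c2).toReal)
      refine ⟨k + 1, Nat.succ_pos k, ?_⟩
      rw [ENNReal.div_lt_iff (Or.inl (by exact_mod_cast Nat.succ_ne_zero k))
        (Or.inl (ENNReal.natCast_ne_top (k + 1)))]
      have hfin : min c1 c2 * ((k + 1 : ℕ) : ℝ≥0∞) ≠ ⊤ :=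
        ENNReal.mul_ne_top hct (ENNReal.natCast_ne_top _)
      rw [← ENNReal.toReal_lt_toReal hMfin hfin, ENNReal.toReal_mul]
      have h1 : M.toReal < (k : ℝ) * (min c1 c2).toReal := (div_lt_iff₀ hc').mp hk
      have h2 : ((k + 1 : ℕ) : ℝ≥0∞).toReal = (k : ℝ) + 1 := by
        push_cast
        rw [ENNReal.toReal_add (ENNReal.natCast_ne_top k) ENNReal.one_ne_top]
        simp
      rw [h2]
      nlinarith [hc'.le]
  refine ⟨m, fun n hn => ?_⟩
  by_contra hne
  rw [Set.not_nonempty_iff_eq_empty] at hne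
  have hn0 : 0 < n := lt_of_lt_of_le hm0 hn
  obtain ⟨⟨hQm, hQc⟩, _hG1, hG2, hG3, hG4⟩ := hq n hn0
  set a := q n w with ha
  set C := q n ⁻¹' {a} with hC
  have haR : a ∈ Set.range (q n) := ⟨w, rfl⟩
  have hwC : w ∈ C := by simp [hC, ha]
  have hnsub : ¬ C ⊆ Set.Icc u v := by
    intro hsub
    have : a ∈ Jcells q (Set.Icc u v) n := ⟨haR, hsub⟩
    rw [hne] at this
    exact this
  obtain ⟨y, hyC, hyI⟩ := Set.not_subset.mp hnsub
  have hOC : C.OrdConnected := hG2 a haR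
  have hy : y < u ∨ v < y := by
    by_contra hcon
    push_neg at hcon
    exact hyI ⟨hcon.1, hcon.2⟩
  have hkey : min c1 c2 ≤ cellMoment μ r C a := by
    rcases hy with hy | hy
    · refine le_trans (min_le_left _ _) (cell_lower μ hr0 C hu_w ?_ a)
      exact (Set.Icc_subset_Icc hy.le le_rfl).trans (hOC.out hyC hwC)
    · refine le_trans (min_le_right _ _) (cell_lower μ hr0 C hw_v ?_ a)
      exact (Set.Icc_subset_Icc le_rfl hy.le).trans (hOC.out hwC hyC)
  have hfinal : min c1 c2 < min c1 c2 :=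
    calc min c1 c2 ≤ cellMoment μ r C a := hkey
      _ = distortionE μ (q n) r / (n : ℝ≥0∞) := hG4 a haR
      _ ≤ M / (n : ℝ≥0∞) :=
          ENNReal.div_le_div_right (distortion_le μ r (q n) hQm hQc hG3) _
      _ ≤ M / (m : ℝ≥0∞) := ENNReal.div_le_div_left (Nat.cast_le.mpr hn) M
      _ < min c1 c2 := hmlt
  exact lt_irrefl _ hfinal
end

section
/- Under the same hypotheses (μ weakly unimodal, r > 1, (q_n) the Gersho quantizer sequence, I ⊆ interior of supp μ compact, and J_{n,I} ≠ ∅ for n ≥ m), the closure T_{n,I} = [inf q_n⁻¹(min J_{n,I}), sup q_n⁻¹(max J_{n,I})] of the union of the codecells contained in I satisfies diam(T_{n,I}) → diam(I) as n → ∞. -/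
open MeasureTheory Set Filter Topology
open scoped ENNReal NNReal

private lemma exists_pos_density (h : ℝ → ℝ) (hh0 : ∀ x, 0 ≤ h x)
    {s : Set ℝ} (hs : MeasurableSet s)
    (hpos : 0 < (volume.withDensity (fun x => ENNReal.ofReal (h x))) s) :
    ∃ y ∈ s, 0 < h y := by
  by_contra hc
  push_neg at hc
  rw [withDensity_apply _ hs] at hpos
  have hz : ∫⁻ y in s, ENNReal.ofReal (h y) = 0 := by
    rw [setLIntegral_congr_fun hs (fun y hy => ?_), lintegral_zero]
    have : h y = 0 := le_antisymm (hc y hy) (hh0 y)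
    simp [this]
  rw [hz] at hpos
  exact lt_irrefl 0 hpos

private lemma exists_delta (μ : Measure ℝ) (h : ℝ → ℝ) (hh0 : ∀ x, 0 ≤ h x)
    (hμ : μ = volume.withDensity (fun x => ENNReal.ofReal (h x)))
    (hwu : WeaklyUnimodal h) {u v : ℝ} (huv : u < v)
    (hI : Set.Icc u v ⊆ interior (msupp μ)) :
    ∃ δ : ℝ, 0 < δ ∧ ∀ x ∈ Set.Icc u v, δ ≤ h x := by
  obtain ⟨-, l₀, hl₀, hK⟩ := hwu
  have hleft : ∃ y < u, 0 < h y := by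
    obtain ⟨η, hη, hball⟩ := Metric.isOpen_iff.1 isOpen_interior u (hI ⟨le_refl u, huv.le⟩)
    have hw : u - η / 2 ∈ msupp μ := by
      refine interior_subset (hball ?_)
      rw [Metric.mem_ball, Real.dist_eq, show u - η / 2 - u = -(η / 2) by ring, abs_neg,
        abs_of_pos (by linarith)]
      linarith
    have hU : 0 < μ (Set.Ioo (u - η) u) :=
      hw _ (isOpen_Ioo.mem_nhds ⟨by linarith, by linarith⟩)
    rw [hμ] at hU
    obtain ⟨y, hy, hy0⟩ := exists_pos_density h hh0 measurableSet_Ioo hU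
    exact ⟨y, hy.2, hy0⟩
  have hright : ∃ y, v < y ∧ 0 < h y := by
    obtain ⟨η, hη, hball⟩ := Metric.isOpen_iff.1 isOpen_interior v (hI ⟨huv.le, le_refl v⟩)
    have hw : v + η / 2 ∈ msupp μ := by
      refine interior_subset (hball ?_)
      rw [Metric.mem_ball, Real.dist_eq, show v + η / 2 - v = η / 2 by ring,
        abs_of_pos (by linarith)]
      linarith
    have hU : 0 < μ (Set.Ioo v (v + η)) :=
      hw _ (isOpen_Ioo.mem_nhds ⟨by linarith, by linarith⟩)
    rw [hμ] at hU
    obtain ⟨y, hy, hy0⟩ := exists_pos_density h hh0 measurableSet_Ioo hU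
    exact ⟨y, hy.1, hy0⟩
  obtain ⟨y₁, hy₁u, hy₁⟩ := hleft
  obtain ⟨y₂, hy₂v, hy₂⟩ := hright
  set l := min (min (h y₁) (h y₂)) l₀ / 2 with hl
  have hmin1 : min (min (h y₁) (h y₂)) l₀ ≤ h y₁ :=
    le_trans (min_le_left _ _) (min_le_left _ _)
  have hmin2 : min (min (h y₁) (h y₂)) l₀ ≤ h y₂ :=
    le_trans (min_le_left _ _) (min_le_right _ _)
  have hmin3 : min (min (h y₁) (h y₂)) l₀ ≤ l₀ := min_le_right _ _
  have hlpos : 0 < l := by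
    have : 0 < min (min (h y₁) (h y₂)) l₀ := lt_min (lt_min hy₁ hy₂) hl₀
    rw [hl]; linarith
  have hll₀ : l < l₀ := by rw [hl]; linarith
  obtain ⟨-, hOC⟩ := hK l hlpos hll₀
  have h1 : y₁ ∈ {x | l ≤ h x} := by
    simp only [Set.mem_setOf_eq, hl]; linarith
  have h2 : y₂ ∈ {x | l ≤ h x} := by
    simp only [Set.mem_setOf_eq, hl]; linarith
  refine ⟨l, hlpos, fun x hx => ?_⟩
  exact hOC.out h1 h2 ⟨by linarith [hx.1], by linarith [hx.2]⟩

private lemma moment_lb (μ : Measure ℝ) (h : ℝ → ℝ)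
    (hμ : μ = volume.withDensity (fun x => ENNReal.ofReal (h x)))
    (r : ℝ) (hr : 0 ≤ r) {u v δ : ℝ} (hδ : 0 < δ) (hδh : ∀ x ∈ Set.Icc u v, δ ≤ h x)
    (a α ε : ℝ) (hε : 0 < ε) (hsub : Set.Icc α (α + ε) ⊆ Set.Icc u v)
    {cell : Set ℝ} (hcell : Set.Icc α (α + ε) ⊆ cell) :
    ENNReal.ofReal (δ * (ε / 4) * (ε / 4) ^ r) ≤ cellMoment μ r cell a := by
  obtain ⟨β, hβ1, hβ2⟩ : ∃ β, Set.Icc β (β + ε / 4) ⊆ Set.Icc α (α + ε) ∧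
      ∀ y ∈ Set.Icc β (β + ε / 4), ε / 4 ≤ |y - a| := by
    rcases le_or_gt (α + ε / 2) a with hcse | hcse
    · refine ⟨α, fun y hy => ⟨hy.1, by linarith [hy.2]⟩, fun y hy => ?_⟩
      have h2 : y ≤ α + ε / 4 := hy.2
      rw [abs_sub_comm, abs_of_nonneg (by linarith)]
      linarith
    · refine ⟨α + 3 * ε / 4, fun y hy => ⟨by linarith [hy.1], by linarith [hy.2]⟩,
        fun y hy => ?_⟩
      have h1 : α + 3 * ε / 4 ≤ y := hy.1
      rw [abs_of_nonneg (by linarith)]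
      linarith
  have hμS : ENNReal.ofReal δ * ENNReal.ofReal (ε / 4) ≤ μ (Set.Icc β (β + ε / 4)) := by
    rw [hμ, withDensity_apply _ measurableSet_Icc]
    calc ENNReal.ofReal δ * ENNReal.ofReal (ε / 4)
        = ∫⁻ _ in Set.Icc β (β + ε / 4), ENNReal.ofReal δ := by
          rw [setLIntegral_const, Real.volume_Icc, show β + ε / 4 - β = ε / 4 by ring]
      _ ≤ ∫⁻ y in Set.Icc β (β + ε / 4), ENNReal.ofReal (h y) :=
          setLIntegral_mono' measurableSet_Icc fun y hy =>
            ENNReal.ofReal_le_ofReal (hδh y (hsub (hβ1 hy)))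
  calc ENNReal.ofReal (δ * (ε / 4) * (ε / 4) ^ r)
      = ENNReal.ofReal ((ε / 4) ^ r) * (ENNReal.ofReal δ * ENNReal.ofReal (ε / 4)) := by
        rw [ENNReal.ofReal_mul (by positivity), ENNReal.ofReal_mul hδ.le]
        ring
    _ ≤ ENNReal.ofReal ((ε / 4) ^ r) * μ (Set.Icc β (β + ε / 4)) := mul_le_mul_right hμS _
    _ = ∫⁻ _ in Set.Icc β (β + ε / 4), ENNReal.ofReal ((ε / 4) ^ r) ∂μ :=
        (setLIntegral_const _ _).symm
    _ ≤ ∫⁻ y in Set.Icc β (β + ε / 4), ENNReal.ofReal (|y - a| ^ r) ∂μ :=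
        setLIntegral_mono' measurableSet_Icc fun y hy =>
          ENNReal.ofReal_le_ofReal (Real.rpow_le_rpow (by positivity) (hβ2 y hy) hr)
    _ ≤ cellMoment μ r cell a := lintegral_mono_set (hβ1.trans hcell)

private lemma cell_bound (μ : Measure ℝ) (r : ℝ) (n : ℕ) (q : ℝ → ℝ)
    (hg : IsGersho μ r n q) {a : ℝ} (ha : a ∈ Set.range q) :
    (n : ℝ≥0∞) * cellMoment μ r (q ⁻¹' {a}) a ≤ ∫⁻ x, ENNReal.ofReal (|x| ^ r) ∂μ := by
  obtain ⟨⟨hmeas, -⟩, hcard, -, hopt, heq⟩ := hg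
  have hfin : (Set.range q).Finite := Set.finite_of_encard_eq_coe hcard
  have hscard : hfin.toFinset.card = n := by
    have : ((hfin.toFinset.card : ℕ) : ℕ∞) = (n : ℕ∞) := by
      rw [← Set.encard_coe_eq_coe_finsetCard, hfin.coe_toFinset, hcard]
    exact_mod_cast this
  have hdisj : (↑hfin.toFinset : Set ℝ).PairwiseDisjoint (fun b => q ⁻¹' {b}) :=
    fun b _ c _ hbc => Disjoint.preimage q (Set.disjoint_singleton.2 hbc)
  have hcover : (⋃ b ∈ hfin.toFinset, q ⁻¹' {b}) = Set.univ := by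
    ext x
    simp only [Set.mem_iUnion, Set.mem_univ, iff_true, Set.mem_preimage,
      Set.mem_singleton_iff]
    exact ⟨q x, hfin.mem_toFinset.2 ⟨x, rfl⟩, rfl⟩
  calc (n : ℝ≥0∞) * cellMoment μ r (q ⁻¹' {a}) a
      = ∑ b ∈ hfin.toFinset, cellMoment μ r (q ⁻¹' {b}) b := by
        rw [Finset.sum_congr rfl fun b hb => heq b (hfin.mem_toFinset.1 hb),
          Finset.sum_const, hscard, heq a ha, nsmul_eq_mul]
    _ ≤ ∑ b ∈ hfin.toFinset, cellMoment μ r (q ⁻¹' {b}) 0 :=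
        Finset.sum_le_sum fun b hb => hopt b (hfin.mem_toFinset.1 hb) 0
    _ = ∫⁻ x in ⋃ b ∈ hfin.toFinset, q ⁻¹' {b}, ENNReal.ofReal (|x - 0| ^ r) ∂μ :=
        (lintegral_biUnion_finset hdisj
          (fun b _ => hmeas (measurableSet_singleton b)) _).symm
    _ = ∫⁻ x, ENNReal.ofReal (|x| ^ r) ∂μ := by
        rw [hcover, setLIntegral_univ]
        simp [sub_zero]

theorem gersho_stmt_10 (μ : Measure ℝ) [IsProbabilityMeasure μ]
    (r : ℝ) (hr : 1 < r) (hmom : Integrable (fun x => |x| ^ r) μ)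
    (h : ℝ → ℝ) (hh0 : ∀ x, 0 ≤ h x)
    (hμ : μ = volume.withDensity (fun x => ENNReal.ofReal (h x)))
    (hwu : WeaklyUnimodal h)
    (q : ℕ → ℝ → ℝ) (hq : ∀ n : ℕ, 0 < n → IsGersho μ r n (q n))
    (u v : ℝ) (huv : u < v) (hI : Set.Icc u v ⊆ interior (msupp μ))
    (m : ℕ) (hm : ∀ n ≥ m, (Jcells q (Set.Icc u v) n).Nonempty) :
    Tendsto
      (fun n : ℕ =>
        Metric.diam (closure (⋃ a ∈ Jcells q (Set.Icc u v) n, (q n) ⁻¹' {a})))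
      atTop (nhds (Metric.diam (Set.Icc u v))) := by
  obtain ⟨δ, hδ, hδh⟩ := exists_delta μ h hh0 hμ hwu huv hI
  set M := ∫⁻ x, ENNReal.ofReal (|x| ^ r) ∂μ with hMdef
  have hMlt : M < ⊤ := hmom.lintegral_lt_top
  rw [Real.diam_Icc huv.le, Metric.tendsto_atTop]
  intro ε hε
  set ε' := min (ε / 3) ((v - u) / 3) with hε'def
  have hε'pos : 0 < ε' := lt_min (by linarith) (by linarith)
  have hε'1 : ε' ≤ ε / 3 := min_le_left _ _
  have hε'2 : ε' ≤ (v - u) / 3 := min_le_right _ _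
  set c := ENNReal.ofReal (δ * (ε' / 4) * (ε' / 4) ^ r) with hcdef
  have hcpos : c ≠ 0 := by
    rw [hcdef, Ne, ENNReal.ofReal_eq_zero, not_le]
    positivity
  obtain ⟨N, hN⟩ := ENNReal.exists_nat_gt (ENNReal.div_lt_top hMlt.ne hcpos).ne
  have hNc : M < (N : ℝ≥0∞) * c :=
    (ENNReal.div_lt_iff (Or.inl hcpos) (Or.inl (by rw [hcdef]; exact ENNReal.ofReal_ne_top))).1 hN
  refine ⟨max N 1, fun n hn => ?_⟩
  have hn1 : 0 < n := lt_of_lt_of_le (lt_of_lt_of_le Nat.zero_lt_one (le_max_right N 1)) hn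
  have hnN : N ≤ n := le_trans (le_max_left N 1) hn
  have hg := hq n hn1
  set T := ⋃ a ∈ Jcells q (Set.Icc u v) n, (q n) ⁻¹' {a} with hTdef
  have hTsub : T ⊆ Set.Icc u v := Set.iUnion₂_subset fun a ha => ha.2
  have hkey : Set.Icc (u + ε') (v - ε') ⊆ T := by
    intro x hx
    refine (fun hss : (q n) ⁻¹' {q n x} ⊆ Set.Icc u v =>
      Set.mem_biUnion (t := fun a => (q n) ⁻¹' {a})
        (show q n x ∈ Jcells q (Set.Icc u v) n from ⟨⟨x, rfl⟩, hss⟩)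
        (show x ∈ (q n) ⁻¹' {q n x} from rfl)) ?_
    by_contra hns
    obtain ⟨z, hz, hznot⟩ := Set.not_subset.1 hns
    have hOC := hg.2.2.1 (q n x) ⟨x, rfl⟩
    have hxcell : x ∈ (q n) ⁻¹' {q n x} := rfl
    have hx1 : u + ε' ≤ x := hx.1
    have hx2 : x ≤ v - ε' := hx.2
    have hbig : ∃ α, Set.Icc α (α + ε') ⊆ Set.Icc u v ∧
        Set.Icc α (α + ε') ⊆ (q n) ⁻¹' {q n x} := by
      rcases lt_or_ge z u with hzu | hzu
      · exact ⟨u, fun y hy => ⟨hy.1, by linarith [hy.2]⟩,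
          fun y hy => hOC.out hz hxcell ⟨by linarith [hy.1], by linarith [hy.2]⟩⟩
      · have hzv : v < z := not_le.1 fun hzv => hznot ⟨hzu, hzv⟩
        refine ⟨v - ε', fun y hy => ⟨by linarith [hy.1], by linarith [hy.2]⟩,
          fun y hy => hOC.out hxcell hz ⟨by linarith [hy.1], by linarith [hy.2]⟩⟩
    obtain ⟨α, hα1, hα2⟩ := hbig
    have hlb := moment_lb μ h hμ r (by linarith) hδ hδh (q n x) α ε' hε'pos hα1 hα2
    have hub := cell_bound μ r n (q n) hg (⟨x, rfl⟩ : q n x ∈ Set.range (q n))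
    have h1 : (n : ℝ≥0∞) * c ≤ M := le_trans (mul_le_mul_right hlb _) hub
    have h2 : (N : ℝ≥0∞) * c ≤ (n : ℝ≥0∞) * c :=
      mul_le_mul_left (by exact_mod_cast hnN) _
    exact absurd (lt_of_le_of_lt h1 hNc) (not_lt.2 h2)
  have hbdd : Bornology.IsBounded (Set.Icc u v) := Metric.isBounded_Icc u v
  have hclsub : closure T ⊆ Set.Icc u v := (isClosed_Icc.closure_subset_iff).2 hTsub
  have hub2 : Metric.diam (closure T) ≤ v - u := by
    calc Metric.diam (closure T) ≤ Metric.diam (Set.Icc u v) := Metric.diam_mono hclsub hbdd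
      _ = v - u := Real.diam_Icc huv.le
  have hlb2 : v - ε' - (u + ε') ≤ Metric.diam (closure T) := by
    calc v - ε' - (u + ε') = Metric.diam (Set.Icc (u + ε') (v - ε')) :=
          (Real.diam_Icc (by linarith)).symm
      _ ≤ Metric.diam (closure T) :=
          Metric.diam_mono (hkey.trans subset_closure) (hbdd.subset hclsub)
  rw [Real.dist_eq]
  have habs : |Metric.diam (closure T) - (v - u)| ≤ 2 * ε' := by
    rw [abs_le]
    constructor <;> linarith
  linarith
end

section
/- Under the same hypotheses (μ weakly unimodal, r > 1, (q_n) the Gersho quantizer sequence, I ⊆ interior of supp μ compact), there exist n₀ ∈ ℕ and constants A₀, B₀ ∈ (0, ∞) such that for every n ≥ n₀: max{diam(q_n⁻¹(a)) : a ∈ J_{n,I}} ≤ A₀ / n₁^I(n) and min{diam(q_n⁻¹(a)) : a ∈ J_{n,I}} ≥ B₀ / n₁^I(n). -/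
open MeasureTheory Set Filter Topology
open scoped ENNReal NNReal

private lemma rpow_mul_self_eq {t r : ℝ} (ht : 0 ≤ t) (hr : 0 < r) :
    t ^ r * t = t ^ (r + 1) := by
  rcases eq_or_lt_of_le ht with h0 | h0
  · rw [← h0, Real.zero_rpow hr.ne', Real.zero_rpow (by linarith : r + 1 ≠ 0), zero_mul]
  · rw [Real.rpow_add_one h0.ne' r]

private lemma cmp_aux {r m M x y : ℝ} (hr : 0 < r) (hm : 0 < m) (hM : 0 ≤ M)
    (hx : 0 ≤ x) (hy : 0 ≤ y)
    (hle : m * ((x / 4) ^ r * (x / 4)) ≤ M * (y ^ r * y)) :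
    x ≤ 4 * (M / m) ^ (r + 1)⁻¹ * y := by
  have hr1 : (0:ℝ) < r + 1 := by linarith
  have hx4 : (0:ℝ) ≤ x / 4 := by linarith
  have hMm : 0 ≤ M / m := div_nonneg hM hm.le
  rw [rpow_mul_self_eq hx4 hr, rpow_mul_self_eq hy hr] at hle
  have key : (x / 4) ^ (r + 1) ≤ ((M / m) ^ (r + 1)⁻¹ * y) ^ (r + 1) := by
    rw [Real.mul_rpow (Real.rpow_nonneg hMm _) hy,
        Real.rpow_inv_rpow hMm hr1.ne', div_mul_eq_mul_div, le_div_iff₀ hm]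
    nlinarith [Real.rpow_nonneg hy (r + 1)]
  have h2 := (Real.rpow_le_rpow_iff hx4
      (mul_nonneg (Real.rpow_nonneg hMm _) hy) hr1).mp key
  linarith

private lemma moment_lower {h : ℝ → ℝ} {r : ℝ} (hr : 0 < r) {m α β : ℝ} (a : ℝ)
    (hm : 0 ≤ m) (hαβ : α ≤ β) (hmh : ∀ x ∈ Set.Icc α β, m ≤ h x) :
    ENNReal.ofReal (m * (((β - α) / 4) ^ r * ((β - α) / 4))) ≤
      cellMoment (volume.withDensity fun x => ENNReal.ofReal (h x)) r (Set.Ioo α β) a := by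
  set μ' := volume.withDensity fun x => ENNReal.ofReal (h x) with hμ'
  set d := β - α with hd
  have hd0 : (0:ℝ) ≤ d := by simp only [hd]; linarith
  obtain ⟨s, t, hsub, hst, hfar⟩ :
      ∃ s t : ℝ, Set.Ioo s t ⊆ Set.Ioo α β ∧ t - s = d / 4 ∧
        ∀ x ∈ Set.Ioo s t, d / 4 ≤ |x - a| := by
    rcases le_or_gt a ((α + β) / 2) with ha | ha
    · refine ⟨β - d / 4, β, fun x hx => ⟨by simp only [hd] at *; cases hx; linarith, hx.2⟩,
        by ring, fun x hx => ?_⟩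
      have : d / 4 ≤ x - a := by simp only [hd] at *; cases hx; linarith
      exact this.trans (le_abs_self _)
    · refine ⟨α, α + d / 4, fun x hx => ⟨hx.1, by simp only [hd] at *; cases hx; linarith⟩,
        by ring, fun x hx => ?_⟩
      have : d / 4 ≤ a - x := by simp only [hd] at *; cases hx; linarith
      calc d / 4 ≤ a - x := this
        _ ≤ |x - a| := by rw [abs_sub_comm]; exact le_abs_self _
  have hμT : ENNReal.ofReal m * ENNReal.ofReal (d / 4) ≤ μ' (Set.Ioo s t) := by
    rw [hμ', withDensity_apply _ measurableSet_Ioo]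
    calc ENNReal.ofReal m * ENNReal.ofReal (d / 4)
        = ENNReal.ofReal m * volume (Set.Ioo s t) := by rw [Real.volume_Ioo, hst]
      _ = ∫⁻ _ in Set.Ioo s t, ENNReal.ofReal m ∂volume := (setLIntegral_const _ _).symm
      _ ≤ ∫⁻ x in Set.Ioo s t, ENNReal.ofReal (h x) ∂volume :=
          setLIntegral_mono' measurableSet_Ioo fun x hx =>
            ENNReal.ofReal_le_ofReal (hmh x ⟨(hsub hx).1.le, (hsub hx).2.le⟩)
  calc ENNReal.ofReal (m * ((d / 4) ^ r * (d / 4)))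
      = ENNReal.ofReal ((d / 4) ^ r) * (ENNReal.ofReal m * ENNReal.ofReal (d / 4)) := by
        rw [← ENNReal.ofReal_mul (by positivity), ← ENNReal.ofReal_mul (by positivity)]
        congr 1; ring
    _ ≤ ENNReal.ofReal ((d / 4) ^ r) * μ' (Set.Ioo s t) := mul_le_mul_right hμT _
    _ = ∫⁻ _ in Set.Ioo s t, ENNReal.ofReal ((d / 4) ^ r) ∂μ' := (setLIntegral_const _ _).symm
    _ ≤ ∫⁻ x in Set.Ioo s t, ENNReal.ofReal (|x - a| ^ r) ∂μ' :=
        setLIntegral_mono' measurableSet_Ioo fun x hx =>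
          ENNReal.ofReal_le_ofReal (Real.rpow_le_rpow (by positivity) (hfar x hx) hr.le)
    _ ≤ cellMoment μ' r (Set.Ioo α β) a := lintegral_mono_set hsub

private lemma moment_upper {h : ℝ → ℝ} {r : ℝ} (hr : 0 < r) {M α β : ℝ} {C : Set ℝ}
    (hM : 0 ≤ M) (hC : MeasurableSet C) (hCsub : C ⊆ Set.Icc α β) (hαβ : α ≤ β)
    (hMh : ∀ x ∈ Set.Icc α β, h x ≤ M) {b : ℝ} (hb : b ∈ C) :
    cellMoment (volume.withDensity fun x => ENNReal.ofReal (h x)) r C b ≤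
      ENNReal.ofReal (M * ((β - α) ^ r * (β - α))) := by
  set μ' := volume.withDensity fun x => ENNReal.ofReal (h x) with hμ'
  set d := β - α with hd
  have hd0 : (0:ℝ) ≤ d := by simp only [hd]; linarith
  have habs : ∀ x ∈ C, |x - b| ≤ d := by
    intro x hx
    have h1 := hCsub hx; have h2 := hCsub hb
    rw [abs_le]
    constructor <;> simp only [hd] <;> linarith [h1.1, h1.2, h2.1, h2.2]
  have hμC : μ' C ≤ ENNReal.ofReal M * ENNReal.ofReal d := by
    rw [hμ', withDensity_apply _ hC]
    calc ∫⁻ x in C, ENNReal.ofReal (h x) ∂volume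
        ≤ ∫⁻ _ in C, ENNReal.ofReal M ∂volume :=
          setLIntegral_mono' hC fun x hx => ENNReal.ofReal_le_ofReal (hMh x (hCsub hx))
      _ = ENNReal.ofReal M * volume C := setLIntegral_const _ _
      _ ≤ ENNReal.ofReal M * volume (Set.Icc α β) :=
          mul_le_mul_right (measure_mono hCsub) _
      _ = ENNReal.ofReal M * ENNReal.ofReal d := by rw [Real.volume_Icc]
  calc cellMoment μ' r C b
      ≤ ∫⁻ _ in C, ENNReal.ofReal (d ^ r) ∂μ' :=
        setLIntegral_mono' hC fun x hx =>
          ENNReal.ofReal_le_ofReal (Real.rpow_le_rpow (abs_nonneg _) (habs x hx) hr.le)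
    _ = ENNReal.ofReal (d ^ r) * μ' C := setLIntegral_const _ _
    _ ≤ ENNReal.ofReal (d ^ r) * (ENNReal.ofReal M * ENNReal.ofReal d) :=
        mul_le_mul_right hμC _
    _ = ENNReal.ofReal (M * (d ^ r * d)) := by
        rw [← ENNReal.ofReal_mul (by positivity), ← ENNReal.ofReal_mul (by positivity)]
        congr 1; ring

private lemma cell_struct {C : Set ℝ} (hne : C.Nonempty) (hord : C.OrdConnected) {u v : ℝ}
    (hsub : C ⊆ Set.Icc u v) :
    ∃ α β : ℝ, α ≤ β ∧ Set.Ioo α β ⊆ C ∧ C ⊆ Set.Icc α β ∧ Set.Icc α β ⊆ Set.Icc u v ∧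
      Metric.diam C = β - α ∧ volume C = ENNReal.ofReal (β - α) := by
  have hbb : BddBelow C := bddBelow_Icc.mono hsub
  have hba : BddAbove C := bddAbove_Icc.mono hsub
  set α := sInf C with hα
  set β := sSup C with hβ
  have hαβ : α ≤ β := csInf_le_csSup hne hbb hba
  have hIoo : Set.Ioo α β ⊆ C := by
    intro x hx
    obtain ⟨c, hc, hcx⟩ := exists_lt_of_csInf_lt hne hx.1
    obtain ⟨c', hc', hxc'⟩ := exists_lt_of_lt_csSup hne hx.2
    exact hord.out hc hc' ⟨hcx.le, hxc'.le⟩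
  have hCIcc : C ⊆ Set.Icc α β := fun c hc => ⟨csInf_le hbb hc, le_csSup hba hc⟩
  have hIccuv : Set.Icc α β ⊆ Set.Icc u v :=
    Set.Icc_subset_Icc (le_csInf hne fun c hc => (hsub hc).1)
      (csSup_le hne fun c hc => (hsub hc).2)
  refine ⟨α, β, hαβ, hIoo, hCIcc, hIccuv, le_antisymm ?_ ?_, le_antisymm ?_ ?_⟩
  · exact (Metric.diam_mono hCIcc (Metric.isBounded_Icc α β)).trans_eq (Real.diam_Icc hαβ)
  · rw [← Real.diam_Ioo hαβ]
    exact Metric.diam_mono hIoo ((Metric.isBounded_Icc α β).subset hCIcc)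
  · rw [← Real.volume_Icc]; exact measure_mono hCIcc
  · rw [← Real.volume_Ioo]; exact measure_mono hIoo

private lemma exists_pos_of_meas {h : ℝ → ℝ} (hh0 : ∀ x, 0 ≤ h x)
    {U : Set ℝ} (hU : MeasurableSet U)
    (hpos : 0 < (volume.withDensity fun x => ENNReal.ofReal (h x)) U) :
    ∃ w ∈ U, 0 < h w := by
  by_contra hcon
  push_neg at hcon
  have hz : (volume.withDensity fun x => ENNReal.ofReal (h x)) U = 0 := by
    rw [withDensity_apply _ hU]
    refine le_antisymm ?_ zero_le
    calc ∫⁻ x in U, ENNReal.ofReal (h x) ∂volume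
        ≤ ∫⁻ _ in U, (0 : ℝ≥0∞) ∂volume :=
          setLIntegral_mono' hU fun x hx =>
            le_of_eq (ENNReal.ofReal_eq_zero.mpr (hcon x hx))
      _ = 0 := by simp
  exact absurd hz hpos.ne'

private lemma density_bounds {h : ℝ → ℝ} (hh0 : ∀ x, 0 ≤ h x)
    (hcont : ContinuousOn h (tsupport h))
    (hlev : ∃ l₀ : ℝ, 0 < l₀ ∧ ∀ l : ℝ, 0 < l → l < l₀ →
      IsCompact {x | l ≤ h x} ∧ ({x | l ≤ h x}).OrdConnected)
    {u v : ℝ} (huv : u < v)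
    (hI : Set.Icc u v ⊆ interior (msupp (volume.withDensity fun x => ENNReal.ofReal (h x)))) :
    ∃ m M : ℝ, 0 < m ∧ m ≤ M ∧ (∀ x ∈ Set.Icc u v, m ≤ h x) ∧
      ∀ x ∈ Set.Icc u v, h x ≤ M := by
  set μ := volume.withDensity fun x => ENNReal.ofReal (h x) with hμdef
  have hside : ∀ p : ℝ, p ∈ interior (msupp μ) →
      ∀ (I' : Set ℝ), IsOpen I' → (∀ ε > 0, ∃ z ∈ Metric.ball p ε, z ∈ I') →
      True := fun _ _ _ _ _ => trivial
  -- point with positive density to the left of u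
  have hleft : ∃ w, w < u ∧ 0 < h w := by
    have hu : u ∈ interior (msupp μ) := hI ⟨le_refl u, huv.le⟩
    obtain ⟨ε, hε, hball⟩ := Metric.isOpen_iff.mp isOpen_interior u hu
    have hu' : u - ε / 2 ∈ msupp μ := by
      refine interior_subset (hball ?_)
      rw [Metric.mem_ball, Real.dist_eq]
      rw [abs_of_nonpos (by linarith)]; linarith
    have hμU : 0 < μ (Set.Ioo (u - ε) u) :=
      hu' _ (Ioo_mem_nhds (by linarith) (by linarith))
    obtain ⟨w, hwU, hw⟩ := exists_pos_of_meas hh0 measurableSet_Ioo hμU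
    exact ⟨w, hwU.2, hw⟩
  have hright : ∃ w, v < w ∧ 0 < h w := by
    have hv : v ∈ interior (msupp μ) := hI ⟨huv.le, le_refl v⟩
    obtain ⟨ε, hε, hball⟩ := Metric.isOpen_iff.mp isOpen_interior v hv
    have hv' : v + ε / 2 ∈ msupp μ := by
      refine interior_subset (hball ?_)
      rw [Metric.mem_ball, Real.dist_eq]
      rw [abs_of_nonneg (by linarith)]; linarith
    have hμU : 0 < μ (Set.Ioo v (v + ε)) :=
      hv' _ (Ioo_mem_nhds (by linarith) (by linarith))
    obtain ⟨w, hwU, hw⟩ := exists_pos_of_meas hh0 measurableSet_Ioo hμU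
    exact ⟨w, hwU.1, hw⟩
  obtain ⟨w, hwu, hw⟩ := hleft
  obtain ⟨w', hvw', hw'⟩ := hright
  obtain ⟨l₀, hl₀, hlev⟩ := hlev
  set l := min (min (h w) (h w')) (l₀ / 2) with hl_def
  have hl : 0 < l := lt_min (lt_min hw hw') (by linarith)
  have hll₀ : l < l₀ := (min_le_right _ _).trans_lt (by linarith)
  obtain ⟨-, hord⟩ := hlev l hl hll₀
  have hm : ∀ x ∈ Set.Icc u v, l ≤ h x := by
    intro x hx
    have h1 : w ∈ {x | l ≤ h x} := by
      show l ≤ h w; exact (min_le_left _ _).trans (min_le_left _ _)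
    have h2 : w' ∈ {x | l ≤ h x} := by
      show l ≤ h w'; exact (min_le_left _ _).trans (min_le_right _ _)
    exact hord.out h1 h2 ⟨by cases hx; linarith, by cases hx; linarith⟩
  have hsub2 : Set.Icc u v ⊆ tsupport h := fun x hx =>
    subset_tsupport h (by
      simp only [Function.mem_support]
      exact ne_of_gt (lt_of_lt_of_le hl (hm x hx)))
  obtain ⟨x₀, hx₀, hmax⟩ := isCompact_Icc.exists_isMaxOn ⟨u, Set.left_mem_Icc.mpr huv.le⟩
    (hcont.mono hsub2)
  exact ⟨l, h x₀, hl, hm x₀ hx₀, hm, fun x hx => hmax hx⟩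

theorem gersho_stmt_11 (μ : Measure ℝ) [IsProbabilityMeasure μ]
    (r : ℝ) (hr : 1 < r) (hmom : Integrable (fun x => |x| ^ r) μ)
    (h : ℝ → ℝ) (hh0 : ∀ x, 0 ≤ h x)
    (hμ : μ = volume.withDensity (fun x => ENNReal.ofReal (h x)))
    (hwu : WeaklyUnimodal h)
    (q : ℕ → ℝ → ℝ) (hq : ∀ n : ℕ, 0 < n → IsGersho μ r n (q n))
    (u v : ℝ) (huv : u < v) (hI : Set.Icc u v ⊆ interior (msupp μ)) :
    ∃ n₀ : ℕ, ∃ A₀ B₀ : ℝ, 0 < A₀ ∧ 0 < B₀ ∧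
      ∀ n ≥ n₀, ∀ a ∈ Jcells q (Set.Icc u v) n,
        Metric.diam ((q n) ⁻¹' {a}) ≤ A₀ / ((Jcells q (Set.Icc u v) n).ncard : ℝ) ∧
        B₀ / ((Jcells q (Set.Icc u v) n).ncard : ℝ) ≤ Metric.diam ((q n) ⁻¹' {a}) := by
  subst hμ
  set μ := volume.withDensity fun x => ENNReal.ofReal (h x) with hμdef
  have hr0 : 0 < r := by linarith
  obtain ⟨m, M, hm0, hmM, hml, hMu⟩ := density_bounds hh0 hwu.1 hwu.2 huv hI
  have hM0 : 0 < M := lt_of_lt_of_le hm0 hmM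
  set K : ℝ := 4 * (M / m) ^ (r + 1)⁻¹ with hKdef
  have hK0 : 0 < K := by
    have : 0 < (M / m) ^ (r + 1)⁻¹ := Real.rpow_pos_of_pos (div_pos hM0 hm0) _
    linarith
  refine ⟨1, K * (v - u), (v - u) / (3 * K), mul_pos hK0 (by linarith),
    div_pos (by linarith) (by linarith), ?_⟩
  intro n hn a ha
  obtain ⟨hq1, hq2, hq3, hq4, hq5⟩ := hq n hn
  have hmeas : ∀ c : ℝ, MeasurableSet (q n ⁻¹' {c}) :=
    fun c => hq1.1 (measurableSet_singleton c)
  set E := distortionE μ (q n) r / (n : ℝ≥0∞) with hEdef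
  set J := Jcells q (Set.Icc u v) n with hJdef
  have hJfin : J.Finite := (Set.finite_of_encard_eq_coe hq2).subset fun b hb => hb.1
  -- lower bound on E via interval pieces of cells
  have hElow : ∀ c ∈ Set.range (q n), ∀ S : Set ℝ, S.Nonempty → S.OrdConnected →
      S ⊆ q n ⁻¹' {c} → S ⊆ Set.Icc u v →
      ENNReal.ofReal (m * ((Metric.diam S / 4) ^ r * (Metric.diam S / 4))) ≤ E := by
    intro c hc S hSne hSord hScell hSuv
    obtain ⟨α, β, hαβ, hIoo, hSIcc, hIccuv, hdiam, -⟩ := cell_struct hSne hSord hSuv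
    rw [hdiam]
    calc ENNReal.ofReal (m * (((β - α) / 4) ^ r * ((β - α) / 4)))
        ≤ cellMoment μ r (Set.Ioo α β) c :=
          moment_lower hr0 c hm0.le hαβ (fun x hx => hml x (hIccuv hx))
      _ ≤ cellMoment μ r (q n ⁻¹' {c}) c :=
          lintegral_mono_set (hIoo.trans hScell)
      _ = E := hq5 c hc
  -- upper bound on E via full cells in J
  have hEup : ∀ b ∈ J, E ≤ ENNReal.ofReal (M * (Metric.diam (q n ⁻¹' {b}) ^ r *
      Metric.diam (q n ⁻¹' {b}))) := by
    intro b hb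
    obtain ⟨x, hx⟩ := hb.1
    have hxb : x ∈ q n ⁻¹' {b} := hx
    obtain ⟨α, β, hαβ, hIoo, hCIcc, hIccuv, hdiam, -⟩ :=
      cell_struct ⟨x, hxb⟩ (hq3 b hb.1) hb.2
    rw [hdiam]
    calc E = cellMoment μ r (q n ⁻¹' {b}) b := (hq5 b hb.1).symm
      _ ≤ cellMoment μ r (q n ⁻¹' {b}) x := hq4 b hb.1 x
      _ ≤ _ := moment_upper hr0 hM0.le (hmeas b) hCIcc hαβ
            (fun y hy => hMu y (hIccuv hy)) hxb
  -- comparison of any interval piece with any cell in J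
  have hcmp : ∀ c ∈ Set.range (q n), ∀ S : Set ℝ, S.Nonempty → S.OrdConnected →
      S ⊆ q n ⁻¹' {c} → S ⊆ Set.Icc u v → ∀ b ∈ J,
      Metric.diam S ≤ K * Metric.diam (q n ⁻¹' {b}) := by
    intro c hc S h1 h2 h3 h4 b hb
    have hh := (hElow c hc S h1 h2 h3 h4).trans (hEup b hb)
    have hd0 : (0:ℝ) ≤ Metric.diam (q n ⁻¹' {b}) := Metric.diam_nonneg
    rw [ENNReal.ofReal_le_ofReal_iff
      (mul_nonneg hM0.le (mul_nonneg (Real.rpow_nonneg hd0 _) hd0))] at hh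
    exact cmp_aux hr0 hm0 hM0.le Metric.diam_nonneg hd0 hh
  have hcell_cmp : ∀ b ∈ J, ∀ b' ∈ J,
      Metric.diam (q n ⁻¹' {b}) ≤ K * Metric.diam (q n ⁻¹' {b'}) := by
    intro b hb b' hb'
    obtain ⟨x, hx⟩ := hb.1
    exact hcmp b hb.1 _ ⟨x, show x ∈ q n ⁻¹' {b} from hx⟩ (hq3 b hb.1) subset_rfl hb.2 b' hb'
  -- boundary pieces
  have hbdry : ∀ p ∈ Set.Icc u v,
      Metric.diam (q n ⁻¹' {q n p} ∩ Set.Icc u v) ≤ K * Metric.diam (q n ⁻¹' {a}) ∧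
      volume (q n ⁻¹' {q n p} ∩ Set.Icc u v) =
        ENNReal.ofReal (Metric.diam (q n ⁻¹' {q n p} ∩ Set.Icc u v)) := by
    intro p hp
    have hne : (q n ⁻¹' {q n p} ∩ Set.Icc u v).Nonempty := ⟨p, rfl, hp⟩
    have hord : (q n ⁻¹' {q n p} ∩ Set.Icc u v).OrdConnected :=
      (hq3 _ ⟨p, rfl⟩).inter Set.ordConnected_Icc
    obtain ⟨α, β, hαβ, hIoo, hCIcc, hIccuv, hdiam, hvol⟩ :=
      cell_struct hne hord Set.inter_subset_right
    refine ⟨hcmp _ ⟨p, rfl⟩ _ hne hord Set.inter_subset_left Set.inter_subset_right a ha, ?_⟩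
    rw [hdiam]; exact hvol
  set Js := hJfin.toFinset with hJs
  have hmemJs : ∀ b, b ∈ Js ↔ b ∈ J := fun b => hJfin.mem_toFinset
  have hcard : Js.card = J.ncard := (Set.ncard_eq_toFinset_card J hJfin).symm
  set D : ℝ → ℝ := fun b => Metric.diam (q n ⁻¹' {b}) with hD
  have hD0 : ∀ b, 0 ≤ D b := fun b => Metric.diam_nonneg
  have hvolJ : ∀ b ∈ J, volume (q n ⁻¹' {b}) = ENNReal.ofReal (D b) := by
    intro b hb
    obtain ⟨x, hx⟩ := hb.1
    have hxb : x ∈ q n ⁻¹' {b} := hx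
    obtain ⟨α, β, hαβ, hIoo, hCIcc, hIccuv, hdiam, hvol⟩ :=
      cell_struct ⟨x, hxb⟩ (hq3 b hb.1) hb.2
    show volume (q n ⁻¹' {b}) = ENNReal.ofReal (Metric.diam (q n ⁻¹' {b}))
    rw [hdiam]; exact hvol
  have hdisj : Set.PairwiseDisjoint (↑Js : Set ℝ) (fun b => q n ⁻¹' {b}) := by
    intro b _ b' _ hne
    exact Set.disjoint_left.mpr fun x hx hx' =>
      hne ((Set.mem_singleton_iff.mp hx).symm.trans (Set.mem_singleton_iff.mp hx'))
  have hsum_vol : volume (⋃ b ∈ Js, q n ⁻¹' {b}) = ENNReal.ofReal (∑ b ∈ Js, D b) := by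
    rw [measure_biUnion_finset hdisj (fun b _ => hmeas b),
        ENNReal.ofReal_sum_of_nonneg (fun b _ => hD0 b)]
    exact Finset.sum_congr rfl fun b hb => hvolJ b ((hmemJs b).mp hb)
  have hsum_le : ∑ b ∈ Js, D b ≤ v - u := by
    rw [← ENNReal.ofReal_le_ofReal_iff (by linarith : (0:ℝ) ≤ v - u), ← hsum_vol,
      ← Real.volume_Icc]
    exact measure_mono (Set.iUnion₂_subset fun b hb => ((hmemJs b).mp hb).2)
  set du := Metric.diam (q n ⁻¹' {q n u} ∩ Set.Icc u v) with hdu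
  set dv := Metric.diam (q n ⁻¹' {q n v} ∩ Set.Icc u v) with hdv
  have hcover : Set.Icc u v ⊆ (⋃ b ∈ Js, q n ⁻¹' {b}) ∪
      ((q n ⁻¹' {q n u} ∩ Set.Icc u v) ∪ (q n ⁻¹' {q n v} ∩ Set.Icc u v)) := by
    intro x hx
    by_cases hcase : q n ⁻¹' {q n x} ⊆ Set.Icc u v
    · exact Or.inl (Set.mem_iUnion₂.mpr
        ⟨q n x, (hmemJs _).mpr ⟨⟨x, rfl⟩, hcase⟩, rfl⟩)
    · obtain ⟨y, hy, hynot⟩ := Set.not_subset.mp hcase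
      have hyuv : y < u ∨ v < y := by
        by_contra hcon
        push_neg at hcon
        exact hynot ⟨hcon.1, hcon.2⟩
      rcases hyuv with hyu | hyv
      · refine Or.inr (Or.inl ⟨?_, hx⟩)
        have hu_mem : u ∈ q n ⁻¹' {q n x} :=
          (hq3 _ ⟨x, rfl⟩).out hy (show x ∈ q n ⁻¹' {q n x} from rfl) ⟨hyu.le, hx.1⟩
        exact Set.mem_singleton_iff.mpr (Set.mem_singleton_iff.mp hu_mem).symm
      · refine Or.inr (Or.inr ⟨?_, hx⟩)
        have hv_mem : v ∈ q n ⁻¹' {q n x} :=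
          (hq3 _ ⟨x, rfl⟩).out (show x ∈ q n ⁻¹' {q n x} from rfl) hy ⟨hx.2, hyv.le⟩
        exact Set.mem_singleton_iff.mpr (Set.mem_singleton_iff.mp hv_mem).symm
  have hlen : v - u ≤ (∑ b ∈ Js, D b) + du + dv := by
    have hnn : (0:ℝ) ≤ (∑ b ∈ Js, D b) + du + dv :=
      add_nonneg (add_nonneg (Finset.sum_nonneg fun b _ => hD0 b) Metric.diam_nonneg)
        Metric.diam_nonneg
    have h1 : ENNReal.ofReal (v - u) ≤ ENNReal.ofReal ((∑ b ∈ Js, D b) + du + dv) := by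
      calc ENNReal.ofReal (v - u) = volume (Set.Icc u v) := (Real.volume_Icc).symm
        _ ≤ volume ((⋃ b ∈ Js, q n ⁻¹' {b}) ∪
            ((q n ⁻¹' {q n u} ∩ Set.Icc u v) ∪ (q n ⁻¹' {q n v} ∩ Set.Icc u v))) :=
            measure_mono hcover
        _ ≤ volume (⋃ b ∈ Js, q n ⁻¹' {b}) +
            volume ((q n ⁻¹' {q n u} ∩ Set.Icc u v) ∪ (q n ⁻¹' {q n v} ∩ Set.Icc u v)) :=
            measure_union_le _ _
        _ ≤ volume (⋃ b ∈ Js, q n ⁻¹' {b}) +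
            (volume (q n ⁻¹' {q n u} ∩ Set.Icc u v) +
             volume (q n ⁻¹' {q n v} ∩ Set.Icc u v)) :=
            add_le_add_right (measure_union_le _ _) _
        _ = ENNReal.ofReal ((∑ b ∈ Js, D b) + du + dv) := by
            rw [hsum_vol, (hbdry u ⟨le_refl u, huv.le⟩).2, (hbdry v ⟨huv.le, le_refl v⟩).2,
              ← ENNReal.ofReal_add Metric.diam_nonneg Metric.diam_nonneg,
              ← ENNReal.ofReal_add (Finset.sum_nonneg fun b _ => hD0 b)
                (add_nonneg Metric.diam_nonneg Metric.diam_nonneg), add_assoc]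
    rwa [ENNReal.ofReal_le_ofReal_iff hnn] at h1
  have hN1 : 1 ≤ J.ncard := (Set.ncard_pos hJfin).mpr ⟨a, ha⟩
  have hNpos : (0:ℝ) < (J.ncard : ℝ) := by exact_mod_cast hN1
  have hN1' : (1:ℝ) ≤ (J.ncard : ℝ) := by exact_mod_cast hN1
  have hda0 : (0:ℝ) ≤ D a := hD0 a
  constructor
  · -- upper bound
    have h2 : ∑ _b ∈ Js, D a ≤ ∑ b ∈ Js, K * D b :=
      Finset.sum_le_sum fun b hb => hcell_cmp a ha b ((hmemJs b).mp hb)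
    rw [Finset.sum_const, ← Finset.mul_sum, hcard, nsmul_eq_mul] at h2
    have h3 : (J.ncard : ℝ) * D a ≤ K * (v - u) :=
      h2.trans (by nlinarith [hsum_le])
    rw [le_div_iff₀ hNpos]
    show D a * (J.ncard : ℝ) ≤ K * (v - u)
    nlinarith [h3]
  · -- lower bound
    have hsum2 : ∑ b ∈ Js, D b ≤ (J.ncard : ℝ) * (K * D a) := by
      calc ∑ b ∈ Js, D b ≤ ∑ _b ∈ Js, K * D a :=
          Finset.sum_le_sum fun b hb => hcell_cmp b ((hmemJs b).mp hb) a ha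
        _ = (J.ncard : ℝ) * (K * D a) := by
            rw [Finset.sum_const, hcard, nsmul_eq_mul]
    have hdu_le : du ≤ K * D a := (hbdry u ⟨le_refl u, huv.le⟩).1
    have hdv_le : dv ≤ K * D a := (hbdry v ⟨huv.le, le_refl v⟩).1
    have hKda : K * D a ≤ (J.ncard : ℝ) * (K * D a) :=
      le_mul_of_one_le_left (by positivity) hN1'
    have h3 : v - u ≤ 3 * (J.ncard : ℝ) * K * D a := by nlinarith
    rw [div_div, div_le_iff₀ (by positivity)]
    show v - u ≤ D a * (3 * K * (J.ncard : ℝ))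
    nlinarith
end

section
/- Under the same hypotheses (μ weakly unimodal, r > 1, (q_n) the Gersho quantizer sequence, I ⊆ interior of supp μ compact), the number n₁^I(n) of codecells of q_n contained in I tends to infinity as n → ∞. -/
open MeasureTheory Set Filter Topology
open scoped ENNReal NNReal

lemma aux_abs_rpow_bound {r : ℝ} (hr : 0 < r) (u x : ℝ) :
    |x - u| ^ r ≤ 2 ^ r * |x| ^ r + 2 ^ r * |u| ^ r := by
  have h1 : |x - u| ≤ 2 * max |x| |u| := by
    calc |x - u| ≤ |x| + |u| := abs_sub x u
    _ ≤ 2 * max |x| |u| := by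
      rcases le_total |x| |u| with hc | hc
      · rw [max_eq_right hc]; linarith
      · rw [max_eq_left hc]; linarith
  have h2 : |x - u| ^ r ≤ (2 * max |x| |u|) ^ r :=
    Real.rpow_le_rpow (abs_nonneg _) h1 hr.le
  have h3 : (2 * max |x| |u|) ^ r = 2 ^ r * (max |x| |u|) ^ r :=
    Real.mul_rpow (by norm_num) (le_max_of_le_left (abs_nonneg _))
  have h4 : (max |x| |u|) ^ r ≤ |x| ^ r + |u| ^ r := by
    rcases le_total |x| |u| with hc | hc
    · rw [max_eq_right hc]
      nlinarith [Real.rpow_nonneg (abs_nonneg x) r]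
    · rw [max_eq_left hc]
      nlinarith [Real.rpow_nonneg (abs_nonneg u) r]
  have h5 : (0:ℝ) ≤ 2 ^ r := Real.rpow_nonneg (by norm_num) r
  calc |x - u| ^ r ≤ 2 ^ r * (max |x| |u|) ^ r := by rw [← h3]; exact h2
  _ ≤ 2 ^ r * (|x| ^ r + |u| ^ r) := by nlinarith
  _ = 2 ^ r * |x| ^ r + 2 ^ r * |u| ^ r := by ring

lemma aux_integrable {μ : Measure ℝ} [IsProbabilityMeasure μ] {r : ℝ} (hr : 0 < r)
    (hmom : Integrable (fun x => |x| ^ r) μ) (u : ℝ) :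
    Integrable (fun x => |x - u| ^ r) μ := by
  have hg : Integrable (fun x : ℝ => 2 ^ r * |x| ^ r + 2 ^ r * |u| ^ r) μ :=
    (hmom.const_mul _).add (integrable_const _)
  refine hg.mono ?_ ?_
  · apply Continuous.aestronglyMeasurable
    exact ((continuous_id.sub continuous_const).abs).rpow_const (fun x => Or.inr hr.le)
  · refine Filter.Eventually.of_forall (fun x => ?_)
    have h0 : (0:ℝ) ≤ |x - u| ^ r := Real.rpow_nonneg (abs_nonneg _) r
    have h1 : (0:ℝ) ≤ 2 ^ r * |x| ^ r + 2 ^ r * |u| ^ r := by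
      have := Real.rpow_nonneg (abs_nonneg x) r
      have := Real.rpow_nonneg (abs_nonneg u) r
      have h5 : (0:ℝ) ≤ 2 ^ r := Real.rpow_nonneg (by norm_num) r
      positivity
    rw [Real.norm_eq_abs, Real.norm_eq_abs, abs_of_nonneg h0, abs_of_nonneg h1]
    exact aux_abs_rpow_bound hr u x

theorem gersho_stmt_12 (μ : Measure ℝ) [IsProbabilityMeasure μ]
    (r : ℝ) (hr : 1 < r) (hmom : Integrable (fun x => |x| ^ r) μ)
    (h : ℝ → ℝ) (hh0 : ∀ x, 0 ≤ h x)
    (hμ : μ = volume.withDensity (fun x => ENNReal.ofReal (h x)))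
    (hwu : WeaklyUnimodal h)
    (q : ℕ → ℝ → ℝ) (hq : ∀ n : ℕ, 0 < n → IsGersho μ r n (q n))
    (u v : ℝ) (huv : u < v) (hI : Set.Icc u v ⊆ interior (msupp μ)) :
    Tendsto (fun n : ℕ => (Jcells q (Set.Icc u v) n).ncard) atTop atTop := by
  have hr0 : (0:ℝ) < r := lt_trans one_pos hr
  -- global density bound
  obtain ⟨M, hM0, hMh⟩ : ∃ M : ℝ, 0 < M ∧ ∀ x, h x ≤ M := by
    obtain ⟨hcont, l₀, hl₀, hKl⟩ := hwu
    obtain ⟨hKc, -⟩ := hKl (l₀/2) (by linarith) (by linarith)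
    by_cases hne : {x | l₀/2 ≤ h x}.Nonempty
    · have hsub : {x | l₀/2 ≤ h x} ⊆ tsupport h := by
        intro x hx
        apply subset_tsupport h
        simp only [Function.mem_support]
        intro h0
        simp only [mem_setOf_eq] at hx
        rw [h0] at hx; linarith
      obtain ⟨x₀, hx₀, hmax⟩ := hKc.exists_isMaxOn hne (hcont.mono hsub)
      refine ⟨max (h x₀) l₀, lt_max_of_lt_right hl₀, fun x => ?_⟩
      by_cases hx : l₀/2 ≤ h x
      · exact le_max_of_le_left (hmax hx)
      · exact le_max_of_le_right (by linarith [not_le.1 hx])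
    · refine ⟨l₀, hl₀, fun x => ?_⟩
      by_contra hc
      exact hne ⟨x, by push_neg at hc; simp only [mem_setOf_eq]; linarith⟩
  -- μ of measurable sets bounded by M * volume
  have hμle : ∀ s : Set ℝ, MeasurableSet s → μ s ≤ ENNReal.ofReal M * volume s := by
    intro s hs
    rw [hμ, withDensity_apply _ hs]
    calc ∫⁻ x in s, ENNReal.ofReal (h x) ≤ ∫⁻ _ in s, ENNReal.ofReal M :=
      setLIntegral_mono measurable_const (fun x _ => ENNReal.ofReal_le_ofReal (hMh x))
    _ = ENNReal.ofReal M * volume s := by rw [setLIntegral_const, mul_comm]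
  -- finite moment about u
  set A := ∫⁻ x, ENNReal.ofReal (|x - u| ^ r) ∂μ with hA_def
  have hA : A ≠ ∞ := (aux_integrable hr0 hmom u).lintegral_lt_top.ne
  -- positive mass of (u,v)
  set m := μ (Ioo u v) with hm_def
  have hm0 : m ≠ 0 := by
    have hw : (u+v)/2 ∈ msupp μ :=
      interior_subset (hI ⟨by linarith, by linarith⟩)
    have : Ioo u v ∈ nhds ((u+v)/2) := Ioo_mem_nhds (by linarith) (by linarith)
    exact (hw _ this).ne'
  have hm_top : m ≠ ∞ := measure_ne_top μ _
  rw [tendsto_atTop]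
  intro N
  -- set up constants
  set T : ℕ := N + 3 with hT_def
  set ε : ℝ≥0∞ := m / (2 * T) with hε_def
  have hT0 : ((T:ℝ≥0∞)) ≠ 0 := by simp [hT_def]
  have hTtop : ((T:ℝ≥0∞)) ≠ ∞ := ENNReal.natCast_ne_top T
  have hε0 : ε ≠ 0 := by
    simp only [hε_def, ne_eq, ENNReal.div_eq_zero_iff, not_or]
    exact ⟨hm0, by finiteness⟩
  have hεtop : ε ≠ ∞ := by
    refine (ENNReal.div_lt_top hm_top ?_).ne
    simp [hT_def]
  have hεR : 0 < ε.toReal := ENNReal.toReal_pos hε0 hεtop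
  set ρ : ℝ := min 1 (ε.toReal / (2 * M)) with hρ_def
  have hρ0 : 0 < ρ := lt_min one_pos (div_pos hεR (by positivity))
  have hball : ∀ a : ℝ, μ (Metric.ball a ρ) ≤ ε := by
    intro a
    calc μ (Metric.ball a ρ) ≤ ENNReal.ofReal M * volume (Metric.ball a ρ) :=
      hμle _ measurableSet_ball
    _ = ENNReal.ofReal M * ENNReal.ofReal (2 * ρ) := by rw [Real.volume_ball]
    _ = ENNReal.ofReal (M * (2 * ρ)) := (ENNReal.ofReal_mul hM0.le).symm
    _ ≤ ENNReal.ofReal ε.toReal := by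
      apply ENNReal.ofReal_le_ofReal
      have : ρ ≤ ε.toReal / (2 * M) := min_le_right _ _
      calc M * (2 * ρ) ≤ M * (2 * (ε.toReal / (2 * M))) := by nlinarith
      _ = ε.toReal := by field_simp
    _ = ε := ENNReal.ofReal_toReal hεtop
  set c : ℝ≥0∞ := ENNReal.ofReal (ρ ^ r) * ε with hc_def
  have hρr : (0:ℝ) < ρ ^ r := Real.rpow_pos_of_pos hρ0 r
  have hc0 : c ≠ 0 := by
    simp only [hc_def, ne_eq, mul_eq_zero, not_or]
    exact ⟨by simp [ENNReal.ofReal_eq_zero, not_le, hρr], hε0⟩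
  have hctop : c ≠ ∞ := ENNReal.mul_ne_top ENNReal.ofReal_ne_top hεtop
  obtain ⟨n₀, hn₀⟩ := exists_nat_gt ((A / c).toReal)
  refine eventually_atTop.2 ⟨max n₀ 1, fun n hn => ?_⟩
  have hn1 : 0 < n := le_trans (le_max_right n₀ 1) hn
  obtain ⟨⟨hqmeas, -⟩, hcard, hord, hopt, heqm⟩ := hq n hn1
  set δ : ℝ≥0∞ := distortionE μ (q n) r / (n : ℝ≥0∞) with hδ_def
  have hFin : (Set.range (q n)).Finite := Set.finite_of_encard_eq_coe hcard
  have hFcard : hFin.toFinset.card = n := by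
    have := hFin.encard_eq_coe_toFinset_card
    rw [hcard] at this
    exact_mod_cast this.symm
  -- cells are measurable and pairwise disjoint
  have hcellm : ∀ a : ℝ, MeasurableSet ((q n) ⁻¹' {a}) :=
    fun a => hqmeas (measurableSet_singleton a)
  have hdisj : Set.PairwiseDisjoint (↑hFin.toFinset) (fun a => (q n) ⁻¹' {a}) := by
    intro a _ b _ hab
    refine Set.disjoint_left.2 (fun x hxa hxb => hab ?_)
    simp only [mem_preimage, mem_singleton_iff] at hxa hxb
    rw [← hxa, ← hxb]
  -- key bound : n * δ ≤ A
  have hkey : (n : ℝ≥0∞) * δ ≤ A := by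
    have hsum1 : ∑ a ∈ hFin.toFinset, cellMoment μ r ((q n) ⁻¹' {a}) a = (n : ℝ≥0∞) * δ := by
      rw [Finset.sum_congr rfl (fun a ha => heqm a (hFin.mem_toFinset.1 ha))]
      rw [Finset.sum_const, hFcard, nsmul_eq_mul]
    have hsum2 : ∑ a ∈ hFin.toFinset, cellMoment μ r ((q n) ⁻¹' {a}) u ≤ A := by
      simp only [cellMoment]
      rw [← lintegral_biUnion_finset hdisj (fun a _ => hcellm a)
        (fun x => ENNReal.ofReal (|x - u| ^ r))]
      exact setLIntegral_le_lintegral _ _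
    calc (n : ℝ≥0∞) * δ = ∑ a ∈ hFin.toFinset, cellMoment μ r ((q n) ⁻¹' {a}) a := hsum1.symm
    _ ≤ ∑ a ∈ hFin.toFinset, cellMoment μ r ((q n) ⁻¹' {a}) u :=
      Finset.sum_le_sum (fun a ha => hopt a (hFin.mem_toFinset.1 ha) u)
    _ ≤ A := hsum2
  -- δ ≤ c
  have hδc : δ ≤ c := by
    have h1 : A / c < (n₀ : ℝ≥0∞) := by
      rw [← ENNReal.ofReal_toReal (ENNReal.div_lt_top hA hc0).ne, ← ENNReal.ofReal_natCast]
      exact ENNReal.ofReal_lt_ofReal_iff_of_nonneg ENNReal.toReal_nonneg |>.2 hn₀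
    have h2 : A < (n : ℝ≥0∞) * c := by
      have := (ENNReal.div_lt_iff (Or.inl hc0) (Or.inl hctop)).1 h1
      calc A < (n₀ : ℝ≥0∞) * c := this
      _ ≤ (n : ℝ≥0∞) * c := by
        gcongr
        exact_mod_cast le_trans (le_max_left n₀ 1) hn
    have h3 : (n : ℝ≥0∞) * δ < (n : ℝ≥0∞) * c := lt_of_le_of_lt hkey h2
    exact le_of_lt ((ENNReal.mul_lt_mul_iff_right (by exact_mod_cast hn1.ne') (ENNReal.natCast_ne_top n)).1 h3)
  -- per-cell mass bound
  have hcell_mass : ∀ a ∈ Set.range (q n), μ ((q n) ⁻¹' {a} ∩ Ioo u v) ≤ 2 * ε := by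
    intro a ha
    have hmoma : cellMoment μ r ((q n) ⁻¹' {a}) a = δ := heqm a ha
    have hcheb : ENNReal.ofReal (ρ ^ r) * μ ((q n) ⁻¹' {a} \ Metric.ball a ρ) ≤ δ := by
      rw [← hmoma]
      unfold cellMoment
      calc ENNReal.ofReal (ρ ^ r) * μ ((q n) ⁻¹' {a} \ Metric.ball a ρ)
          = ∫⁻ _ in (q n) ⁻¹' {a} \ Metric.ball a ρ, ENNReal.ofReal (ρ ^ r) ∂μ := by
            rw [setLIntegral_const, mul_comm]
      _ ≤ ∫⁻ x in (q n) ⁻¹' {a} \ Metric.ball a ρ, ENNReal.ofReal (|x - a| ^ r) ∂μ := by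
        apply setLIntegral_mono
        · exact (((measurable_id.sub_const a).abs.pow measurable_const)).ennreal_ofReal
        · intro x hx
          apply ENNReal.ofReal_le_ofReal
          apply Real.rpow_le_rpow hρ0.le _ hr0.le
          have : ¬ dist x a < ρ := fun hcon => hx.2 (Metric.mem_ball.2 hcon)
          rw [Real.dist_eq] at this
          linarith [not_lt.1 this]
      _ ≤ ∫⁻ x in (q n) ⁻¹' {a}, ENNReal.ofReal (|x - a| ^ r) ∂μ :=
        lintegral_mono_set diff_subset
    have hdiff : μ ((q n) ⁻¹' {a} \ Metric.ball a ρ) ≤ ε := by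
      have h4 : ENNReal.ofReal (ρ ^ r) * μ ((q n) ⁻¹' {a} \ Metric.ball a ρ)
          ≤ ENNReal.ofReal (ρ ^ r) * ε := le_trans hcheb (le_trans hδc (le_of_eq hc_def))
      exact (ENNReal.mul_le_mul_iff_right (by simp [ENNReal.ofReal_eq_zero, not_le, hρr])
        ENNReal.ofReal_ne_top).1 h4
    calc μ ((q n) ⁻¹' {a} ∩ Ioo u v)
        ≤ μ (Metric.ball a ρ ∪ ((q n) ⁻¹' {a} \ Metric.ball a ρ)) := by
          apply measure_mono
          intro x hx
          by_cases hxb : x ∈ Metric.ball a ρ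
          · exact Or.inl hxb
          · exact Or.inr ⟨hx.1, hxb⟩
    _ ≤ μ (Metric.ball a ρ) + μ ((q n) ⁻¹' {a} \ Metric.ball a ρ) := measure_union_le _ _
    _ ≤ ε + ε := add_le_add (hball a) hdiff
    _ = 2 * ε := (two_mul ε).symm
  -- the codepoints whose cell meets (u,v)
  have hKfin : ((q n) '' Ioo u v).Finite := hFin.subset (image_subset_range _ _)
  have hcover : m ≤ (hKfin.toFinset.card : ℝ≥0∞) * (2 * ε) := by
    have hsub : Ioo u v ⊆ ⋃ a ∈ hKfin.toFinset, ((q n) ⁻¹' {a} ∩ Ioo u v) := by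
      intro x hx
      refine mem_biUnion (hKfin.mem_toFinset.2 ⟨x, hx, rfl⟩) ⟨rfl, hx⟩
    calc m ≤ μ (⋃ a ∈ hKfin.toFinset, ((q n) ⁻¹' {a} ∩ Ioo u v)) := measure_mono hsub
    _ ≤ ∑ a ∈ hKfin.toFinset, μ ((q n) ⁻¹' {a} ∩ Ioo u v) := measure_biUnion_finset_le _ _
    _ ≤ ∑ _a ∈ hKfin.toFinset, 2 * ε := by
      apply Finset.sum_le_sum
      intro a ha
      exact hcell_mass a (image_subset_range _ _ (hKfin.mem_toFinset.1 ha))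
    _ = (hKfin.toFinset.card : ℝ≥0∞) * (2 * ε) := by rw [Finset.sum_const, nsmul_eq_mul]
  -- conclude T ≤ card
  have hTle : T ≤ hKfin.toFinset.card := by
    have h2ε : 2 * ε = m / T := by
      rw [hε_def, ← mul_div_assoc, ← ENNReal.mul_div_mul_left m (T : ℝ≥0∞) (two_ne_zero) ENNReal.ofNat_ne_top]
    have hcard' : m ≤ (hKfin.toFinset.card : ℝ≥0∞) * m / (T : ℝ≥0∞) := by
      rw [mul_div_assoc]
      calc m ≤ (hKfin.toFinset.card : ℝ≥0∞) * (2 * ε) := hcover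
      _ = (hKfin.toFinset.card : ℝ≥0∞) * (m / T) := by rw [h2ε]
    have h5 : m * (T : ℝ≥0∞) ≤ (hKfin.toFinset.card : ℝ≥0∞) * m :=
      (ENNReal.le_div_iff_mul_le (Or.inl hT0) (Or.inl hTtop)).1 hcard'
    have h6 : (T : ℝ≥0∞) ≤ (hKfin.toFinset.card : ℝ≥0∞) := by
      rw [mul_comm m _] at h5
      exact (ENNReal.mul_le_mul_iff_left hm0 hm_top).1 h5
    exact_mod_cast h6
  -- the cells inside [u,v]
  have hJfin : (Jcells q (Set.Icc u v) n).Finite := hFin.subset (sep_subset _ _)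
  have hJsub : ((q n) '' Ioo u v) \ {q n u, q n v} ⊆ Jcells q (Set.Icc u v) n := by
    rintro a ⟨⟨z, hz, rfl⟩, hnot⟩
    simp only [mem_insert_iff, mem_singleton_iff, not_or] at hnot
    refine ⟨⟨z, rfl⟩, ?_⟩
    intro y hy
    simp only [mem_preimage, mem_singleton_iff] at hy
    have hzcell : z ∈ (q n) ⁻¹' {q n z} := by simp
    have hycell : y ∈ (q n) ⁻¹' {q n z} := by simp [hy]
    have hoc := hord (q n z) ⟨z, rfl⟩
    constructor
    · by_contra hyu
      push_neg at hyu
      have : u ∈ (q n) ⁻¹' {q n z} := hoc.out hycell hzcell ⟨hyu.le, hz.1.le⟩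
      simp only [mem_preimage, mem_singleton_iff] at this
      exact hnot.1 this.symm
    · by_contra hyv
      push_neg at hyv
      have : v ∈ (q n) ⁻¹' {q n z} := hoc.out hzcell hycell ⟨hz.2.le, hyv.le⟩
      simp only [mem_preimage, mem_singleton_iff] at this
      exact hnot.2 this.symm
  -- count
  have hcount : hKfin.toFinset.card ≤ (Jcells q (Set.Icc u v) n).ncard + 2 := by
    have h1 : ((q n) '' Ioo u v).ncard ≤
        (((q n) '' Ioo u v) \ {q n u, q n v}).ncard + 2 := by
      have hsplit : (q n) '' Ioo u v ⊆
          (((q n) '' Ioo u v) \ {q n u, q n v}) ∪ ({q n u, q n v} : Set ℝ) := by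
        intro a ha
        by_cases hm : a ∈ ({q n u, q n v} : Set ℝ)
        · exact Or.inr hm
        · exact Or.inl ⟨ha, hm⟩
      calc ((q n) '' Ioo u v).ncard
          ≤ ((((q n) '' Ioo u v) \ {q n u, q n v}) ∪ ({q n u, q n v} : Set ℝ)).ncard :=
            Set.ncard_le_ncard hsplit (hKfin.diff.union ((Set.finite_singleton _).insert _))
      _ ≤ (((q n) '' Ioo u v) \ {q n u, q n v}).ncard + ({q n u, q n v} : Set ℝ).ncard :=
            Set.ncard_union_le _ _
      _ ≤ (((q n) '' Ioo u v) \ {q n u, q n v}).ncard + 2 := by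
            have : ({q n u, q n v} : Set ℝ).ncard ≤ 2 := by
              apply le_trans (Set.ncard_insert_le _ _)
              simp [Set.ncard_singleton]
            omega
    have h2 : (((q n) '' Ioo u v) \ {q n u, q n v}).ncard ≤ (Jcells q (Set.Icc u v) n).ncard :=
      Set.ncard_le_ncard hJsub hJfin
    have h3 : ((q n) '' Ioo u v).ncard = hKfin.toFinset.card := Set.ncard_eq_toFinset_card _ hKfin
    omega
  omega
end
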